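/- arXiv:1002.0674 — 6 statements merged into one kernel-verified Lean document; each statement's English description precedes it below -/
import Mathlib

section
/- For dominant integral weights λ and μ of sl_{n+1}, S(λ+μ) = S(λ) + S(μ); i.e., every integral point of the polytope P(λ+μ) decomposes as a sum of an integral point of P(λ) and an integral point of P(μ). -/
open Finset

/-- `(p,q)` indexes the positive root `α_p + ⋯ + α_q` of type `A_n`. -/
abbrev IsRoot (n p q : ℕ) : Prop := 1 ≤ p ∧ p ≤ q ∧ q ≤ n

/-- One step in a Dyck path: `α_{p,q} → α_{p,q+1}` or `α_{p,q} → α_{p+1,q}`. -/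
abbrev RootStep (a b : ℕ × ℕ) : Prop := b = (a.1, a.2 + 1) ∨ b = (a.1 + 1, a.2)

/-- A Dyck path, recorded as the list of index pairs of its roots.  The first
and last entries are simple roots, and each step follows the recursion rule. -/
def IsDyckPath (n : ℕ) (L : List (ℕ × ℕ)) : Prop :=
  L ≠ [] ∧ (∀ a ∈ L, IsRoot n a.1 a.2) ∧
  (L.head!).1 = (L.head!).2 ∧ (L.getLast!).1 = (L.getLast!).2 ∧
  L.Chain' RootStep

/-- A multi-exponent: a tuple of nonnegative integers supported on the
positive roots of `A_n`. -/
def IsMultiExp (n : ℕ) (s : ℕ × ℕ → ℕ) : Prop := ∀ p q, ¬ IsRoot n p q → s (p, q) = 0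

/-- `s ∈ S(λ)` for `λ = Σ_{i=1}^n m i · ω_i` : for every Dyck path from
`α_i` to `α_j` the sum of the entries of `s` along the path is at most
`m_i + ⋯ + m_j`. -/
def InS (n : ℕ) (m : ℕ → ℕ) (s : ℕ × ℕ → ℕ) : Prop :=
  IsMultiExp n s ∧
  ∀ L : List (ℕ × ℕ), IsDyckPath n L →
    (L.map s).sum ≤ ∑ t ∈ Finset.Icc (L.head!).1 (L.getLast!).1, m t

/-! ### helpers -/

def Nv (m : ℕ → ℕ) (i j : ℕ) : ℕ := ∑ t ∈ Finset.Icc i j, m t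

def Usum (u : ℕ × ℕ → ℕ) (L : List (ℕ × ℕ)) : ℕ := (L.map u).sum

def DPath (n i j : ℕ) (L : List (ℕ × ℕ)) : Prop :=
  L ≠ [] ∧ (∀ a ∈ L, IsRoot n a.1 a.2) ∧ L.head? = some (i,i) ∧
    L.getLast? = some (j,j) ∧ L.Chain' RootStep

def PreP (n i : ℕ) (a : ℕ × ℕ) (L : List (ℕ × ℕ)) : Prop :=
  L ≠ [] ∧ (∀ x ∈ L, IsRoot n x.1 x.2) ∧ L.head? = some (i,i) ∧
    L.getLast? = some a ∧ L.Chain' RootStep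

def SufP (n : ℕ) (a : ℕ × ℕ) (j : ℕ) (L : List (ℕ × ℕ)) : Prop :=
  L ≠ [] ∧ (∀ x ∈ L, IsRoot n x.1 x.2) ∧ L.head? = some a ∧
    L.getLast? = some (j,j) ∧ L.Chain' RootStep

lemma head?_eq_head! {l : List (ℕ × ℕ)} (h : l ≠ []) : l.head? = some l.head! := by
  cases l with
  | nil => exact absurd rfl h
  | cons x xs => rfl

lemma getLast?_eq_getLast! {l : List (ℕ × ℕ)} (h : l ≠ []) :
    l.getLast? = some l.getLast! := by
  cases l with
  | nil => exact absurd rfl h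
  | cons x xs =>
    rw [List.getLast?_eq_getLast (l := x::xs) (by simp)]
    simp [List.getLast!]

lemma dp_of_dyck {n L} (h : IsDyckPath n L) :
    DPath n (L.head!).1 (L.getLast!).1 L := by
  obtain ⟨h1, h2, h3, h4, h5⟩ := h
  refine ⟨h1, h2, ?_, ?_, h5⟩
  · rw [head?_eq_head! h1]; congr 1; rw [show L.head! = (L.head!.1, L.head!.2) from rfl, ← h3]
  · rw [getLast?_eq_getLast! h1]; congr 1
    rw [show L.getLast! = (L.getLast!.1, L.getLast!.2) from rfl, ← h4]

lemma dyck_of_dp {n i j L} (h : DPath n i j L) :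
    IsDyckPath n L ∧ L.head! = (i,i) ∧ L.getLast! = (j,j) := by
  obtain ⟨h1, h2, h3, h4, h5⟩ := h
  have hh : L.head! = (i,i) := by rw [head?_eq_head! h1] at h3; exact Option.some_injective _ h3
  have hl : L.getLast! = (j,j) := by
    rw [getLast?_eq_getLast! h1] at h4; exact Option.some_injective _ h4
  exact ⟨⟨h1, h2, by rw [hh], by rw [hl], h5⟩, hh, hl⟩

lemma bound_of_dp {n m s i j L} (h : InS n m s) (hL : DPath n i j L) :
    Usum s L ≤ Nv m i j := by
  obtain ⟨hd, hh, hl⟩ := dyck_of_dp hL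
  have := h.2 L hd
  rwa [hh, hl] at this

/-- componentwise-≤ with strictly bigger coordinate sum -/
def LeP (a b : ℕ × ℕ) : Prop := a.1 ≤ b.1 ∧ a.2 ≤ b.2 ∧ a.1 + a.2 < b.1 + b.2

lemma pairwise_of_chain {L : List (ℕ × ℕ)} (h : L.Chain' RootStep) : L.Pairwise LeP := by
  haveI : IsTrans (ℕ × ℕ) LeP :=
    ⟨fun a b c hab hbc => ⟨le_trans hab.1 hbc.1, le_trans hab.2.1 hbc.2.1,
      lt_trans hab.2.2 hbc.2.2⟩⟩
  refine List.isChain_iff_pairwise.mp (h.imp ?_)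
  rintro a b (h | h) <;> subst h <;> exact ⟨by simp, by simp, by simp⟩

lemma mono_of_chain {L : List (ℕ × ℕ)} (h : L.Chain' RootStep) {r s : ℕ}
    (hrs : r ≤ s) (hs : s < L.length) :
    (L[r]'(lt_of_le_of_lt hrs hs)).1 ≤ L[s].1 ∧ (L[r]'(lt_of_le_of_lt hrs hs)).2 ≤ L[s].2 := by
  rcases eq_or_lt_of_le hrs with h' | h'
  · subst h'; exact ⟨le_rfl, le_rfl⟩
  · have := (List.pairwise_iff_getElem.mp (pairwise_of_chain h)) r s
      (lt_of_le_of_lt hrs hs) hs h'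
    exact ⟨this.1, this.2.1⟩

lemma Nv_split (m : ℕ → ℕ) {i b c : ℕ} (h1 : i ≤ b + 1) (h2 : b ≤ c) :
    Nv m i c = Nv m i b + Nv m (b+1) c := by
  unfold Nv
  rw [← Finset.sum_union]
  · congr 1
    ext x
    simp only [Finset.mem_union, Finset.mem_Icc]
    omega
  · rw [Finset.disjoint_left]
    intro x hx hx'
    simp only [Finset.mem_Icc] at hx hx'
    omega

lemma Usum_append (u : ℕ × ℕ → ℕ) (X Y : List (ℕ × ℕ)) :
    Usum u (X ++ Y) = Usum u X + Usum u Y := by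
  simp [Usum]

lemma Usum_take_succ (u : ℕ × ℕ → ℕ) (L : List (ℕ × ℕ)) (r : ℕ) (h : r < L.length) :
    Usum u (L.take (r+1)) = Usum u (L.take r) + u (L[r]) := by
  unfold Usum
  rw [List.map_take, List.map_take, List.sum_take_succ _ r (by simpa using h)]
  congr 1
  simp

lemma mem_le_Usum {u : ℕ × ℕ → ℕ} {L : List (ℕ × ℕ)} {a : ℕ × ℕ} (h : a ∈ L) :
    u a ≤ Usum u L :=
  List.single_le_sum (fun _ _ => Nat.zero_le _) _ (List.mem_map_of_mem (f := u) h)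

lemma pre_mem_bounds {n i a L} (h : PreP n i a L) : ∀ x ∈ L, i ≤ x.1 ∧ i ≤ x.2 := by
  intro x hx
  obtain ⟨r, hr, hxr⟩ := List.mem_iff_getElem.mp hx
  have hlen : 0 < L.length := List.length_pos_iff.mpr h.1
  have h0 : L[0]'hlen = (i,i) := by
    have h' := h.2.2.1
    rw [List.head?_eq_getElem?, List.getElem?_eq_getElem hlen] at h'
    exact Option.some_injective _ h'
  have := mono_of_chain h.2.2.2.2 (Nat.zero_le r) hr
  rw [h0, hxr] at this
  exact this

lemma pre_last_mem {n i a L} (h : PreP n i a L) : a ∈ L := by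
  have h4 : a ∈ L.getLast? := by rw [h.2.2.2.1]; rfl
  obtain ⟨hne, rfl⟩ := List.mem_getLast?_eq_getLast h4
  exact List.getLast_mem hne

lemma pre_last_root {n i a L} (h : PreP n i a L) : IsRoot n a.1 a.2 :=
  h.2.1 a (pre_last_mem h)

lemma pre_le (h : PreP n i a L) : i ≤ a.1 ∧ i ≤ a.2 :=
  pre_mem_bounds h a (pre_last_mem h)

lemma suf_first_mem {n a j L} (h : SufP n a j L) : a ∈ L := by
  have h3 := h.2.2.1
  cases L with
  | nil => exact absurd rfl h.1
  | cons x xs =>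
    simp only [List.head?_cons, Option.some.injEq] at h3
    rw [← h3]; exact List.mem_cons_self

lemma dp_of_pre_diag {n i c L} (h : PreP n i (c, c) L) : DPath n i c L := h

lemma dp_of_suf_diag {n c j L} (h : SufP n (c, c) j L) : DPath n c j L := h

/-- extend a prefix path ending at `a` to one ending at `b ≥ a`. -/
lemma extend_pre (n : ℕ) (u : ℕ × ℕ → ℕ) :
    ∀ (d : ℕ) (a b : ℕ × ℕ) (i : ℕ) (P : List (ℕ × ℕ)),
      b.1 + b.2 ≤ a.1 + a.2 + d → a.1 ≤ b.1 → a.2 ≤ b.2 → IsRoot n b.1 b.2 →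
      PreP n i a P →
      ∃ P', PreP n i b P' ∧ Usum u P + (if a = b then 0 else u b) ≤ Usum u P' := by
  intro d
  induction d with
  | zero =>
    intro a b i P hd h1 h2 hb hP
    have hab : a = b := Prod.ext_iff.mpr ⟨by omega, by omega⟩
    exact ⟨P, hab ▸ hP, by simp [hab]⟩
  | succ d ih =>
    intro a b i P hd h1 h2 hb hP
    by_cases hab : a = b
    · exact ⟨P, hab ▸ hP, by simp [hab]⟩
    · have hlt : a.1 + a.2 < b.1 + b.2 := by
        rcases Nat.lt_or_ge (a.1 + a.2) (b.1 + b.2) with h | h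
        · exact h
        · exact absurd (Prod.ext_iff.mpr ⟨by omega, by omega⟩) hab
      have ha : IsRoot n a.1 a.2 := pre_last_root hP
      set c : ℕ × ℕ := if a.2 < b.2 then (a.1, a.2 + 1) else (a.1 + 1, a.2) with hc
      have hstep : RootStep a c := by
        by_cases h' : a.2 < b.2 <;> simp [hc, h', RootStep]
      have hcle1 : c.1 ≤ b.1 := by
        by_cases h' : a.2 < b.2 <;> simp [hc, h'] <;> omega
      have hcle2 : c.2 ≤ b.2 := by
        by_cases h' : a.2 < b.2 <;> simp [hc, h'] <;> omega
      have hcsum : c.1 + c.2 = a.1 + a.2 + 1 := by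
        by_cases h' : a.2 < b.2 <;> simp [hc, h'] <;> omega
      have hcroot : IsRoot n c.1 c.2 := by
        by_cases h' : a.2 < b.2 <;> simp [hc, h']
        · exact ⟨ha.1, by omega, by omega⟩
        · exact ⟨by omega, by omega, by omega⟩
      have hP1 : PreP n i c (P ++ [c]) := by
        obtain ⟨p1, p2, p3, p4, p5⟩ := hP
        refine ⟨by simp, ?_, ?_, by simp, ?_⟩
        · intro x hx
          rcases List.mem_append.mp hx with h | h
          · exact p2 x h
          · simp at h; subst h; exact hcroot
        · rwa [List.head?_append_of_ne_nil _ p1]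
        · show List.IsChain RootStep _; rw [List.isChain_append]
          refine ⟨p5, List.isChain_singleton _, ?_⟩
          intro x hx y hy
          simp only [List.head?_cons, Option.mem_def, Option.some.injEq] at hy
          rw [p4] at hx
          simp only [Option.mem_def, Option.some.injEq] at hx
          subst hx; subst hy; exact hstep
      obtain ⟨P', hP', hle⟩ := ih c b i (P ++ [c]) (by omega) hcle1 hcle2 hb hP1
      refine ⟨P', hP', ?_⟩
      rw [Usum_append] at hle
      have husum : Usum u [c] = u c := by simp [Usum]
      rw [if_neg hab]
      by_cases hcb : c = b
      · rw [if_pos hcb] at hle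
        have hub : u c = u b := by rw [hcb]
        omega
      · rw [if_neg hcb] at hle; omega

/-- extend a suffix path starting at `b` to one starting at `a ≤ b`. -/
lemma extend_suf (n : ℕ) (u : ℕ × ℕ → ℕ) :
    ∀ (d : ℕ) (a b : ℕ × ℕ) (j : ℕ) (Q : List (ℕ × ℕ)),
      b.1 + b.2 ≤ a.1 + a.2 + d → a.1 ≤ b.1 → a.2 ≤ b.2 → IsRoot n a.1 a.2 →
      SufP n b j Q →
      ∃ Q', SufP n a j Q' ∧ Usum u Q + (if a = b then 0 else u a) ≤ Usum u Q' := by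
  intro d
  induction d with
  | zero =>
    intro a b j Q hd h1 h2 ha hQ
    have hab : a = b := Prod.ext_iff.mpr ⟨by omega, by omega⟩
    exact ⟨Q, hab ▸ hQ, by simp [hab]⟩
  | succ d ih =>
    intro a b j Q hd h1 h2 ha hQ
    by_cases hab : a = b
    · exact ⟨Q, hab ▸ hQ, by simp [hab]⟩
    · have hlt : a.1 + a.2 < b.1 + b.2 := by
        rcases Nat.lt_or_ge (a.1 + a.2) (b.1 + b.2) with h | h
        · exact h
        · exact absurd (Prod.ext_iff.mpr ⟨by omega, by omega⟩) hab
      have hbroot : IsRoot n b.1 b.2 := hQ.2.1 b (suf_first_mem hQ)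
      set c : ℕ × ℕ := if a.2 < b.2 then (a.1, a.2 + 1) else (a.1 + 1, a.2) with hc
      have hstep : RootStep a c := by
        by_cases h' : a.2 < b.2 <;> simp [hc, h', RootStep]
      have hcle1 : c.1 ≤ b.1 := by
        by_cases h' : a.2 < b.2 <;> simp [hc, h'] <;> omega
      have hcle2 : c.2 ≤ b.2 := by
        by_cases h' : a.2 < b.2 <;> simp [hc, h'] <;> omega
      have hcsum : c.1 + c.2 = a.1 + a.2 + 1 := by
        by_cases h' : a.2 < b.2 <;> simp [hc, h'] <;> omega
      have hcroot : IsRoot n c.1 c.2 := by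
        by_cases h' : a.2 < b.2 <;> simp [hc, h']
        · exact ⟨ha.1, by omega, by omega⟩
        · exact ⟨by omega, by omega, by omega⟩
      obtain ⟨Q', hQ', hle⟩ := ih c b j Q (by omega) hcle1 hcle2 hcroot hQ
      refine ⟨a :: Q', ?_, ?_⟩
      · obtain ⟨p1, p2, p3, p4, p5⟩ := hQ'
        refine ⟨by simp, ?_, by simp, ?_, ?_⟩
        · intro x hx
          rcases List.mem_cons.mp hx with h | h
          · subst h; exact ha
          · exact p2 x h
        · rw [List.getLast?_cons, p4]; rfl
        · show List.IsChain RootStep _; rw [List.isChain_cons]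
          refine ⟨?_, p5⟩
          intro y hy
          rw [p3] at hy
          simp only [Option.mem_def, Option.some.injEq] at hy
          subst hy; exact hstep
      · have hcons : Usum u (a :: Q') = u a + Usum u Q' := by simp [Usum]
        rw [if_neg hab]
        by_cases hcb : c = b
        · rw [if_pos hcb] at hle; omega
        · rw [if_neg hcb] at hle; omega

lemma glue {n i j : ℕ} {a : ℕ × ℕ} {P Q : List (ℕ × ℕ)} (u : ℕ × ℕ → ℕ)
    (hP : PreP n i a P) (hQ : SufP n a j Q) :
    DPath n i j (P ++ Q.tail) ∧ Usum u (P ++ Q.tail) + u a = Usum u P + Usum u Q := by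
  obtain ⟨p1, p2, p3, p4, p5⟩ := hP
  obtain ⟨q1, q2, q3, q4, q5⟩ := hQ
  cases Q with
  | nil => exact absurd rfl q1
  | cons x rest =>
    simp only [List.head?_cons, Option.some.injEq] at q3
    subst q3
    cases rest with
    | nil =>
      simp only [List.getLast?_singleton, Option.some.injEq] at q4
      constructor
      · simpa using ⟨p1, p2, p3, by rw [q4] at p4; exact p4, p5⟩
      · simp [Usum]
    | cons y rest' =>
      have hchain : List.Chain' RootStep (P ++ (y :: rest')) := by
        show List.IsChain RootStep _; rw [List.isChain_append]
        refine ⟨p5, (List.isChain_cons.mp q5).2, ?_⟩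
        intro w hw z hz
        rw [p4] at hw
        simp only [Option.mem_def, Option.some.injEq] at hw
        simp only [List.head?_cons, Option.mem_def, Option.some.injEq] at hz
        subst hw; subst hz
        exact List.isChain_cons_cons.mp q5 |>.1
      constructor
      · refine ⟨by simp, ?_, ?_, ?_, by simpa using hchain⟩
        · intro w hw
          rcases List.mem_append.mp hw with h | h
          · exact p2 w h
          · exact q2 w (List.mem_cons_of_mem _ h)
        · rwa [List.head?_append_of_ne_nil _ p1]
        · show (P ++ (y :: rest')).getLast? = some (j, j)
          rw [List.getLast?_append_of_ne_nil _ (List.cons_ne_nil _ _)]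
          simpa using q4
      · simp [Usum]; ring

lemma pre_take {n i j : ℕ} {L : List (ℕ × ℕ)} (hL : DPath n i j L) {r : ℕ}
    (hr : r < L.length) : PreP n i (L[r]) (L.take (r+1)) := by
  obtain ⟨p1, p2, p3, p4, p5⟩ := hL
  refine ⟨?_, ?_, ?_, ?_, p5.take _⟩
  · have : (L.take (r+1)).length = r+1 := by
      rw [List.length_take]; omega
    intro h; rw [h] at this; simp at this
  · intro x hx; exact p2 x (List.mem_of_mem_take hx)
  · rw [List.head?_eq_getElem?] at p3 ⊢
    rw [List.getElem?_take]
    simpa using p3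
  · rw [List.getLast?_eq_getElem?, List.length_take]
    have hlen : min (r+1) L.length = r + 1 := by omega
    rw [hlen]
    simp only [Nat.add_sub_cancel]
    rw [List.getElem?_take]
    rw [if_pos (by omega), List.getElem?_eq_getElem hr]

lemma suf_drop {n i j : ℕ} {L : List (ℕ × ℕ)} (hL : DPath n i j L) {r : ℕ}
    (hr : r < L.length) : SufP n (L[r]) j (L.drop r) := by
  obtain ⟨p1, p2, p3, p4, p5⟩ := hL
  refine ⟨?_, ?_, ?_, ?_, p5.drop _⟩
  · have : (L.drop r).length = L.length - r := by simp
    intro h; rw [h] at this; simp at this; omega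
  · intro x hx; exact p2 x (List.mem_of_mem_drop hx)
  · rw [List.head?_drop, List.getElem?_eq_getElem hr]
  · rw [← List.take_append_drop r L] at p4
    rcases List.exists_cons_of_ne_nil (show L.drop r ≠ [] from by
      have : (L.drop r).length = L.length - r := by simp
      intro h; rw [h] at this; simp at this; omega) with ⟨y, Y, hy⟩
    rw [hy] at p4 ⊢
    rwa [List.getLast?_append_of_ne_nil _ (List.cons_ne_nil _ _)] at p4

/-- the cut set: roots in the window `p ≤ k ≤ q` with positive `u`-value where the
normalized prefix excess first reaches `1`. -/
def Apred (n k : ℕ) (ν : ℕ → ℕ) (u : ℕ × ℕ → ℕ) (a : ℕ × ℕ) : Prop :=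
  IsRoot n a.1 a.2 ∧ a.1 ≤ k ∧ k ≤ a.2 ∧ 1 ≤ u a ∧
  (∃ i P, PreP n i a P ∧ Nv ν i a.2 + 1 ≤ Usum u P + Nv ν k a.2) ∧
  (∀ i P, PreP n i a P → Usum u P + Nv ν k a.2 ≤ Nv ν i a.2 + u a)

lemma apred_anti {n k : ℕ} {ν : ℕ → ℕ} {u : ℕ × ℕ → ℕ} {a b : ℕ × ℕ}
    (ha : Apred n k ν u a) (hb : Apred n k ν u b) (h1 : a.1 ≤ b.1) (h2 : a.2 ≤ b.2) :
    a = b := by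
  by_contra hne
  obtain ⟨_, hak, hka, hua, ⟨i, P, hP, hval⟩, _⟩ := ha
  obtain ⟨hbroot, hbk, hkb, hub, _, hall⟩ := hb
  obtain ⟨P', hP', hle⟩ :=
    extend_pre n u (b.1 + b.2 - (a.1 + a.2)) a b i P (by omega) h1 h2 hbroot hP
  rw [if_neg hne] at hle
  have hb2 := hall i P' hP'
  have hia : i ≤ a.1 ∧ i ≤ a.2 := pre_le hP
  have hs1 : Nv ν i b.2 = Nv ν i a.2 + Nv ν (a.2+1) b.2 := Nv_split ν (by omega) h2
  have hs2 : Nv ν k b.2 = Nv ν k a.2 + Nv ν (a.2+1) b.2 := Nv_split ν (by omega) h2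
  omega

lemma cover {n k : ℕ} (hk1 : 1 ≤ k) (hkn : k ≤ n) {ν : ℕ → ℕ} {u : ℕ × ℕ → ℕ}
    (H : ∀ i j (L : List (ℕ×ℕ)), DPath n i j L →
      Usum u L ≤ Nv ν i j + (if i ≤ k ∧ k ≤ j then 1 else 0))
    {i j : ℕ} {L : List (ℕ × ℕ)} (hL : DPath n i j L)
    (hcrit : Usum u L = Nv ν i j + 1) :
    ∃ a ∈ L, Apred n k ν u a := by
  classical
  have hne := hL.1
  have hm : 0 < L.length := List.length_pos_iff.mpr hne
  set m := L.length with hmdef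
  set idx : ℕ → ℕ × ℕ := fun r => L.getD r (0,0) with hidxdef
  have hidx : ∀ {r : ℕ} (h : r < m), idx r = L[r]'h := fun {r} h => List.getD_eq_getElem L (0,0) h
  have h0 : idx 0 = (i,i) := by
    rw [hidx hm]
    have h' := hL.2.2.1
    rw [List.head?_eq_getElem?, List.getElem?_eq_getElem hm] at h'
    exact Option.some_injective _ h'
  have hlast : idx (m-1) = (j,j) := by
    rw [hidx (by omega)]
    have h' := hL.2.2.2.1
    rw [List.getLast?_eq_getElem?, List.getElem?_eq_getElem (by omega)] at h'
    exact Option.some_injective _ h'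
  have hmem : ∀ {r : ℕ}, r < m → idx r ∈ L := fun {r} h => by
    rw [hidx h]; exact List.getElem_mem _
  have hroot : ∀ {r : ℕ}, r < m → IsRoot n (idx r).1 (idx r).2 :=
    fun {r} h => hL.2.1 _ (hmem h)
  have hmono : ∀ {r s : ℕ}, r ≤ s → s < m →
      (idx r).1 ≤ (idx s).1 ∧ (idx r).2 ≤ (idx s).2 := by
    intro r s hrs hs
    rw [hidx (lt_of_le_of_lt hrs hs), hidx hs]
    exact mono_of_chain hL.2.2.2.2 hrs hs
  have hstep : ∀ {r : ℕ}, r + 1 < m → RootStep (idx r) (idx (r+1)) := by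
    intro r h
    rw [hidx (by omega), hidx h]
    have := List.isChain_iff_getElem.mp hL.2.2.2.2 r (by omega)
    simpa using this
  set W : ℕ → ℕ := fun r => Usum u (L.take (r+1)) with hWdef
  have hW0 : W 0 = u (idx 0) := by
    show Usum u (L.take (0+1)) = u (idx 0)
    rw [Usum_take_succ u L 0 hm, hidx hm]
    simp [Usum]
  have hWs : ∀ {r : ℕ}, 0 < r → r < m → W r = W (r-1) + u (idx r) := by
    intro r h0r hrm
    rw [hidx hrm]
    show Usum u (L.take (r+1)) = Usum u (L.take (r-1+1)) + u L[r]
    rw [show r - 1 + 1 = r from by omega]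
    exact Usum_take_succ u L r hrm
  have hWlast : W (m-1) = Usum u L := by
    show Usum u (L.take (m-1+1)) = Usum u L
    rw [show m - 1 + 1 = m from by omega, hmdef, List.take_length]
  have hik : i ≤ k ∧ k ≤ j := by
    by_contra h
    have := H i j L hL
    rw [if_neg h] at this
    omega
  set f := Nat.findGreatest (fun r => (idx r).1 ≤ k) (m-1) with hfdef
  have hfle : f ≤ m - 1 := Nat.findGreatest_le _
  have hfm : f < m := by omega
  have hfp : (idx f).1 ≤ k := by
    rw [hfdef]
    exact Nat.findGreatest_spec (P := fun r => (idx r).1 ≤ k) (Nat.zero_le _)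
      (by show (idx 0).1 ≤ k; rw [h0]; exact hik.1)
  have hgt : ∀ r, f < r → r ≤ m-1 → ¬ ((idx r).1 ≤ k) := by
    intro r h1 h2
    rw [hfdef] at h1
    exact Nat.findGreatest_is_greatest (P := fun r => (idx r).1 ≤ k) h1 h2
  have hfq : k ≤ (idx f).2 := by
    rcases eq_or_lt_of_le hfle with h | h
    · rw [h, hlast]; exact hik.2
    · have hnot : ¬ ((idx (f+1)).1 ≤ k) := hgt (f+1) (by omega) (by omega)
      rcases hstep (show f + 1 < m from by omega) with h' | h'
      · rw [h'] at hnot; simp at hnot; omega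
      · rw [h'] at hnot; simp at hnot
        have := (hroot hfm).2.1
        omega
  have hiq : ∀ {r : ℕ}, r < m → i ≤ (idx r).2 := by
    intro r h
    have := (hmono (Nat.zero_le r) h).2
    rw [h0] at this; exact this
  have hqj : ∀ {r : ℕ}, r < m → (idx r).2 ≤ j := by
    intro r h
    have := (hmono (show r ≤ m-1 from by omega) (by omega)).2
    rw [hlast] at this; exact this
  set Good : ℕ → Prop := fun r => k ≤ (idx r).2 ∧ Nv ν i (idx r).2 + 1 ≤ W r + Nv ν k (idx r).2
    with hGdef
  have hGf : Good f := by
    refine ⟨hfq, ?_⟩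
    rcases eq_or_lt_of_le hfle with h | h
    · have hq : (idx f).2 = j := by rw [h, hlast]
      have hw : W f = Usum u L := by rw [h, hWlast]
      rw [hq, hw]
      omega
    · have hf1m : f + 1 < m := by omega
      have hnot : ¬ ((idx (f+1)).1 ≤ k) := hgt (f+1) (by omega) (by omega)
      have hpf : (idx (f+1)).1 = (idx f).1 + 1 ∧ (idx (f+1)).2 = (idx f).2 := by
        rcases hstep hf1m with h' | h'
        · exfalso; rw [h'] at hnot; simp at hnot; omega
        · rw [h']; exact ⟨rfl, rfl⟩
      have hpfk : (idx f).1 = k := by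
        have := hfp; omega
      have hQn : (idx f).2 ≤ n := (hroot hfm).2.2
      have hkQ1 : k + 1 ≤ (idx f).2 := by
        have := (hroot hf1m).2.1
        omega
      have hsuf : SufP n (idx (f+1)) j (L.drop (f+1)) := by
        have := suf_drop hL hf1m
        rwa [← hidx hf1m] at this
      have hidxf1 : idx (f+1) = (k+1, (idx f).2) := by
        have : idx (f+1) = ((idx (f+1)).1, (idx (f+1)).2) := rfl
        rw [this, hpf.1, hpf.2, hpfk]
      rw [hidxf1] at hsuf
      obtain ⟨Q', hQ', hle⟩ := extend_suf n u ((idx f).2 - (k+1)) (k+1, k+1) (k+1, (idx f).2)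
        j _ (by simp; omega) (by simp) (by simp; omega) ⟨by omega, by simp, by omega⟩ hsuf
      have hle' : Usum u (L.drop (f+1)) ≤ Usum u Q' := le_trans (Nat.le_add_right _ _) hle
      have hb := H (k+1) j Q' (dp_of_suf_diag hQ')
      rw [if_neg (by omega)] at hb
      have hsum : W f + Usum u (L.drop (f+1)) = Usum u L := by
        show Usum u (L.take (f+1)) + _ = _
        rw [← Usum_append, List.take_append_drop]
      have hs1 : Nv ν i j = Nv ν i (idx f).2 + Nv ν ((idx f).2+1) j :=
        Nv_split ν (by have := hiq hfm; omega) (hqj hfm)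
      have hs2 : Nv ν (k+1) j = Nv ν (k+1) (idx f).2 + Nv ν ((idx f).2+1) j :=
        Nv_split ν (by omega) (hqj hfm)
      have hs3 : Nv ν k (idx f).2 = ν k + Nv ν (k+1) (idx f).2 := by
        have h' := Nv_split ν (i := k) (b := k) (c := (idx f).2) (by omega) (by omega)
        rw [h']
        congr 1
        unfold Nv
        rw [Finset.Icc_self, Finset.sum_singleton]
      omega
  have hex : ∃ r, Good r := ⟨f, hGf⟩
  set r0 := Nat.find hex with hr0def
  have hGr : Good r0 := Nat.find_spec hex
  have hr0f : r0 ≤ f := Nat.find_min' hex hGf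
  have hr0m : r0 < m := by omega
  have hpk : (idx r0).1 ≤ k := le_trans (hmono hr0f hfm).1 hfp
  have hqk : k ≤ (idx r0).2 := hGr.1
  have hG1 : Nv ν i (idx r0).2 + 1 ≤ W r0 + Nv ν k (idx r0).2 := hGr.2
  have hGle : W r0 + Nv ν k (idx r0).2 ≤ Nv ν i (idx r0).2 + u (idx r0) := by
    rcases Nat.eq_zero_or_pos r0 with h' | h'
    · have hki : k = i := by
        have h2 := hqk
        rw [h', h0] at h2
        have := hik.1
        omega
      have hq0 : (idx r0).2 = i := by rw [h', h0]
      have hw : W r0 = u (idx r0) := by rw [h', hW0]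
      rw [hq0, hw, hki]
      omega
    · have hnG : ¬ Good (r0 - 1) := Nat.find_min hex (by omega)
      have hr1 : r0 - 1 + 1 = r0 := by omega
      have hst : RootStep (idx (r0-1)) (idx r0) := by
        have := hstep (show (r0-1) + 1 < m from by omega)
        rwa [hr1] at this
      have hws : W r0 = W (r0-1) + u (idx r0) := hWs h' hr0m
      by_cases hA : k ≤ (idx (r0-1)).2
      · -- G (r0-1) ≤ 0
        have hBad : W (r0-1) + Nv ν k ((idx (r0-1)).2) ≤ Nv ν i ((idx (r0-1)).2) := by
          simp only [hGdef, not_and, not_le] at hnG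
          have := hnG hA
          omega
        rcases hst with hq | hp
        · -- q-step
          have hq2 : (idx r0).2 = (idx (r0-1)).2 + 1 := by rw [hq]
          have hs1 : Nv ν k ((idx r0).2) = Nv ν k ((idx (r0-1)).2) + ν ((idx r0).2) := by
            rw [hq2]
            exact Finset.sum_Icc_succ_top (by omega) ν
          have hs2 : Nv ν i ((idx r0).2) = Nv ν i ((idx (r0-1)).2) + ν ((idx r0).2) := by
            rw [hq2]
            refine Finset.sum_Icc_succ_top ?_ ν
            have := hiq (show r0 - 1 < m from by omega)
            omega
          omega
        · -- p-step
          have hq2 : (idx r0).2 = (idx (r0-1)).2 := by rw [hp]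
          rw [hq2]
          omega
      · -- entering the window
        have hq1 : (idx (r0-1)).2 = k - 1 ∧ (idx r0).2 = k ∧ (idx r0).1 = (idx (r0-1)).1 := by
          rcases hst with hq | hp
          · rw [hq]; simp
            have := hqk; rw [hq] at this; simp at this
            omega
          · exfalso
            have := hqk; rw [hp] at this; simp at this
            omega
        have hroot1 : IsRoot n ((idx (r0-1)).1) ((idx (r0-1)).2) := hroot (by omega)
        have hP0 : PreP n i (idx (r0-1)) (L.take ((r0-1)+1)) := by
          have := pre_take hL (show r0 - 1 < m from by omega)
          rwa [← hidx (show r0 - 1 < m from by omega)] at this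
        obtain ⟨P', hP', hle⟩ := extend_pre n u ((k-1) - (idx (r0-1)).1) (idx (r0-1))
          (k-1, k-1) i _ (by simp; omega) (by simp; omega) (by simp; omega)
          ⟨by omega, by simp, by omega⟩ hP0
        have hle' : Usum u (L.take ((r0-1)+1)) ≤ Usum u P' := le_trans (Nat.le_add_right _ _) hle
        have hb := H i (k-1) P' (dp_of_pre_diag hP')
        rw [if_neg (by omega)] at hb
        have hwr1 : W (r0-1) ≤ Nv ν i (k-1) := le_trans hle' hb
        have hs1 : Nv ν i k = Nv ν i (k-1) + ν k := by
          have h2 := Nv_split ν (i := i) (b := k-1) (c := k) (by omega) (by omega)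
          rw [h2]
          congr 1
          rw [show k - 1 + 1 = k from by omega]
          unfold Nv
          rw [Finset.Icc_self, Finset.sum_singleton]
        have hNkk : Nv ν k k = ν k := by
          unfold Nv
          rw [Finset.Icc_self, Finset.sum_singleton]
        rw [hq1.2.1]
        omega
  refine ⟨idx r0, hmem hr0m, hroot hr0m, hpk, hqk, by omega, ?_, ?_⟩
  · refine ⟨i, L.take (r0+1), ?_, hG1⟩
    have := pre_take hL hr0m
    rwa [← hidx hr0m] at this
  · intro i3 P' hP'
    have hsuf := suf_drop hL hr0m
    rw [← hidx hr0m] at hsuf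
    obtain ⟨hdp, hsum⟩ := glue u hP' hsuf
    have hb := H i3 j _ hdp
    have hb' : Usum u (P' ++ (L.drop r0).tail) ≤ Nv ν i3 j + 1 := by
      refine le_trans hb ?_
      split <;> omega
    have hdrop : Usum u (L.drop r0) = u (idx r0) + Usum u (L.drop (r0+1)) := by
      rw [hidx hr0m]
      have hdc : L.drop r0 = L[r0] :: L.drop (r0+1) := List.drop_eq_getElem_cons hr0m
      rw [hdc]
      unfold Usum
      rw [List.map_cons, List.sum_cons]
    have htadr : W r0 + Usum u (L.drop (r0+1)) = Usum u L := by
      show Usum u (L.take (r0+1)) + _ = _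
      rw [← Usum_append, List.take_append_drop]
    have hpre_le : i3 ≤ (idx r0).1 := (pre_le hP').1
    have hs1 : Nv ν i3 j = Nv ν i3 ((idx r0).2) + Nv ν ((idx r0).2+1) j :=
      Nv_split ν (by have := (hroot hr0m).2.1; omega) (hqj hr0m)
    have hs2 : Nv ν i j = Nv ν i ((idx r0).2) + Nv ν ((idx r0).2+1) j :=
      Nv_split ν (by have := hiq hr0m; omega) (hqj hr0m)
    omega

lemma sum_map_indicator_le_one {t : ℕ × ℕ → ℕ} (ht : ∀ a, t a ≤ 1)
    (hanti : ∀ a b : ℕ × ℕ, 1 ≤ t a → 1 ≤ t b → a.1 ≤ b.1 → a.2 ≤ b.2 → a = b)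
    {L : List (ℕ × ℕ)} (hL : L.Chain' RootStep) : (L.map t).sum ≤ 1 := by
  have hp := pairwise_of_chain hL
  clear hL
  induction L with
  | nil => simp
  | cons a l ih =>
    rw [List.pairwise_cons] at hp
    rw [List.map_cons, List.sum_cons]
    by_cases h1 : 1 ≤ t a
    · have hz : ∀ b ∈ l, t b = 0 := by
        intro b hb
        by_contra hbz
        have hb1 : 1 ≤ t b := by omega
        have := hanti a b h1 hb1 (hp.1 b hb).1 (hp.1 b hb).2.1
        have hlt := (hp.1 b hb).2.2
        rw [this] at hlt
        omega
      have : (l.map t).sum = 0 := by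
        apply List.sum_eq_zero
        intro x hx
        obtain ⟨b, hb, rfl⟩ := List.mem_map.mp hx
        exact hz b hb
      have := ht a
      omega
    · have : t a = 0 := by omega
      rw [this]
      simpa using ih hp.2

lemma sum_map_sub_add {u t : ℕ × ℕ → ℕ} (h : ∀ a, t a ≤ u a) (L : List (ℕ × ℕ)) :
    (L.map fun a => u a - t a).sum + (L.map t).sum = (L.map u).sum := by
  induction L with
  | nil => simp
  | cons a l ih =>
    simp only [List.map_cons, List.sum_cons]
    have := h a
    omega

lemma sum_map_add (s t : ℕ × ℕ → ℕ) (L : List (ℕ × ℕ)) :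
    (L.map fun a => s a + t a).sum = (L.map s).sum + (L.map t).sum := by
  induction L with
  | nil => simp
  | cons a l ih =>
    simp only [List.map_cons, List.sum_cons]
    omega

lemma Icc_indicator_sum (i j k : ℕ) :
    (∑ t ∈ Finset.Icc i j, if t = k then 1 else 0) = if i ≤ k ∧ k ≤ j then 1 else 0 := by
  rw [Finset.sum_ite_eq' (Finset.Icc i j) k (fun _ => 1)]
  simp [Finset.mem_Icc]

lemma dp_mem_bounds {n i j : ℕ} {L : List (ℕ × ℕ)} (hL : DPath n i j L) :
    ∀ a ∈ L, i ≤ a.1 ∧ a.2 ≤ j := by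
  intro a ha
  obtain ⟨r, hr, rfl⟩ := List.mem_iff_getElem.mp ha
  have hm : 0 < L.length := List.length_pos_iff.mpr hL.1
  have h0 : L[0] = (i,i) := by
    have h' := hL.2.2.1
    rw [List.head?_eq_getElem?, List.getElem?_eq_getElem hm] at h'
    exact Option.some_injective _ h'
  have hlast : L[L.length - 1]'(by omega) = (j,j) := by
    have h' := hL.2.2.2.1
    rw [List.getLast?_eq_getElem?, List.getElem?_eq_getElem (by omega)] at h'
    exact Option.some_injective _ h'
  have h1 := mono_of_chain hL.2.2.2.2 (Nat.zero_le r) hr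
  have h2 := mono_of_chain hL.2.2.2.2 (show r ≤ L.length - 1 by omega)
    (show L.length - 1 < L.length by omega)
  rw [h0] at h1
  rw [hlast] at h2
  exact ⟨h1.1, h2.2⟩

/-- Key step: peel off one fundamental weight `ω_k`. -/
lemma key_peel {n k : ℕ} (hk1 : 1 ≤ k) (hkn : k ≤ n) (ν : ℕ → ℕ) (u : ℕ × ℕ → ℕ)
    (h : InS n (fun i => ν i + (if i = k then 1 else 0)) u) :
    ∃ t : ℕ × ℕ → ℕ, InS n (fun i => if i = k then 1 else 0) t ∧ (∀ a, t a ≤ u a) ∧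
      InS n ν (fun a => u a - t a) := by
  classical
  have H : ∀ i j (L : List (ℕ × ℕ)), DPath n i j L →
      Usum u L ≤ Nv ν i j + (if i ≤ k ∧ k ≤ j then 1 else 0) := by
    intro i j L hL
    have hb := bound_of_dp h hL
    unfold Nv at hb ⊢
    rw [Finset.sum_add_distrib, Icc_indicator_sum] at hb
    exact hb
  set t : ℕ × ℕ → ℕ := fun a => if Apred n k ν u a then 1 else 0 with htdef
  have ht1 : ∀ a, t a ≤ 1 := by
    intro a; simp only [htdef]; split <;> omega
  have htu : ∀ a, t a ≤ u a := by
    intro a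
    simp only [htdef]
    split
    · next hA => exact hA.2.2.2.1
    · omega
  have hanti : ∀ a b : ℕ × ℕ, 1 ≤ t a → 1 ≤ t b → a.1 ≤ b.1 → a.2 ≤ b.2 → a = b := by
    intro a b ha hb h1 h2
    simp only [htdef] at ha hb
    by_cases hA : Apred n k ν u a
    · by_cases hB : Apred n k ν u b
      · exact apred_anti hA hB h1 h2
      · rw [if_neg hB] at hb; omega
    · rw [if_neg hA] at ha; omega
  refine ⟨t, ⟨?_, ?_⟩, htu, ?_, ?_⟩
  · -- multi-exponent for t
    intro p q hpq
    simp only [htdef]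
    exact if_neg (fun hA => hpq hA.1)
  · -- path bound for t
    intro L hdyck
    have hdp := dp_of_dyck hdyck
    rw [Icc_indicator_sum]
    by_cases hex : ∃ a ∈ L, Apred n k ν u a
    · obtain ⟨a, haL, hA⟩ := hex
      have hb := dp_mem_bounds hdp a haL
      rw [if_pos ⟨le_trans hb.1 hA.2.1, le_trans hA.2.2.1 hb.2⟩]
      exact sum_map_indicator_le_one ht1 hanti hdyck.2.2.2.2
    · push_neg at hex
      have hz : (L.map t).sum = 0 := by
        apply List.sum_eq_zero
        intro x hx
        obtain ⟨b, hb, rfl⟩ := List.mem_map.mp hx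
        simp only [htdef]
        exact if_neg (hex b hb)
      omega
  · -- multi-exponent for u - t
    intro p q hpq
    have h1 := h.1 p q hpq
    have h2 := htu (p, q)
    show u (p, q) - t (p, q) = 0
    omega
  · -- path bound for u - t
    intro L hdyck
    have hdp := dp_of_dyck hdyck
    have hb := H _ _ L hdp
    have hsub := sum_map_sub_add htu L
    have hU : Usum u L = (L.map u).sum := rfl
    have hNv : Nv ν (L.head!).1 (L.getLast!).1 = ∑ t ∈ Finset.Icc (L.head!).1 (L.getLast!).1, ν t := rfl
    by_cases hle : Usum u L ≤ Nv ν (L.head!).1 (L.getLast!).1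
    · omega
    · have hij : (L.head!).1 ≤ k ∧ k ≤ (L.getLast!).1 := by
        by_contra hc
        rw [if_neg hc] at hb
        omega
      rw [if_pos hij] at hb
      have hcrit : Usum u L = Nv ν (L.head!).1 (L.getLast!).1 + 1 := by omega
      obtain ⟨a, haL, hA⟩ := cover hk1 hkn H hdp hcrit
      have hta : 1 ≤ t a := by
        simp only [htdef]
        rw [if_pos hA]
      have htsum : (1:ℕ) ≤ (L.map t).sum := le_trans hta (mem_le_Usum haL)
      omega

lemma dp_ends_bounds {n i j : ℕ} {L : List (ℕ × ℕ)} (h : DPath n i j L) :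
    1 ≤ i ∧ i ≤ j ∧ j ≤ n := by
  have hmem : (i,i) ∈ L := by
    cases L with
    | nil => exact absurd rfl h.1
    | cons x xs =>
      have h3 := h.2.2.1
      simp only [List.head?_cons, Option.some.injEq] at h3
      rw [← h3]; exact List.mem_cons_self
  have hmem2 : (j,j) ∈ L := by
    have h4 : (j,j) ∈ L.getLast? := by rw [h.2.2.2.1]; rfl
    obtain ⟨hne, heq⟩ := List.mem_getLast?_eq_getLast h4
    rw [heq]; exact List.getLast_mem hne
  have h1 := h.2.1 _ hmem
  have h2 := h.2.1 _ hmem2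
  have h3 := (dp_mem_bounds h _ hmem2).1
  exact ⟨h1.1, by simpa using h3, by simpa using h2.2.2⟩

lemma forward_aux (n : ℕ) : ∀ (N : ℕ) (mmu : ℕ → ℕ), (∑ i ∈ Finset.Icc 1 n, mmu i) = N →
    ∀ (mlam : ℕ → ℕ) (u : ℕ × ℕ → ℕ), InS n (fun i => mlam i + mmu i) u →
    ∃ s t : ℕ × ℕ → ℕ, InS n mlam s ∧ InS n mmu t ∧ ∀ a, u a = s a + t a := by
  intro N
  induction N using Nat.strong_induction_on with
  | _ N ih =>
    intro mmu hsum mlam u hu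
    rcases Nat.eq_zero_or_pos N with hN | hN
    · subst hN
      have hz : ∀ x ∈ Finset.Icc 1 n, mmu x = 0 := Finset.sum_eq_zero_iff.mp hsum
      refine ⟨u, fun _ => 0, ⟨hu.1, ?_⟩, ⟨fun _ _ _ => rfl, by intro L hL; simp⟩,
        fun a => by simp⟩
      intro L hL
      have hb := hu.2 L hL
      have hsub : ∀ x ∈ Finset.Icc (L.head!).1 (L.getLast!).1, x ∈ Finset.Icc 1 n := by
        intro x hx
        rw [Finset.mem_Icc] at hx ⊢
        have hends := dp_ends_bounds (dp_of_dyck hL)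
        omega
      have heq : ∑ x ∈ Finset.Icc (L.head!).1 (L.getLast!).1, (fun i => mlam i + mmu i) x
          = ∑ x ∈ Finset.Icc (L.head!).1 (L.getLast!).1, mlam x :=
        Finset.sum_congr rfl (fun x hx => by
          show mlam x + mmu x = mlam x
          rw [hz x (hsub x hx)]
          omega)
      omega
    · obtain ⟨k, hk, hkpos⟩ : ∃ k ∈ Finset.Icc 1 n, 0 < mmu k := by
        by_contra hc
        push_neg at hc
        have : ∑ i ∈ Finset.Icc 1 n, mmu i = 0 :=
          Finset.sum_eq_zero (fun x hx => by have := hc x hx; omega)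
        omega
      rw [Finset.mem_Icc] at hk
      set mmu' : ℕ → ℕ := fun i => if i = k then mmu k - 1 else mmu i with hmmu'
      have hptw : ∀ x, mmu x = mmu' x + (if x = k then 1 else 0) := by
        intro x
        simp only [hmmu']
        by_cases hx : x = k
        · subst hx; simp; omega
        · simp [hx]
      have hsum' : (∑ i ∈ Finset.Icc 1 n, mmu' i) = N - 1 := by
        have hd : ∑ i ∈ Finset.Icc 1 n, mmu i = (∑ i ∈ Finset.Icc 1 n, mmu' i)
            + (∑ i ∈ Finset.Icc 1 n, if i = k then 1 else 0) := by
          rw [← Finset.sum_add_distrib]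
          exact Finset.sum_congr rfl (fun x _ => hptw x)
        rw [Icc_indicator_sum, if_pos ⟨hk.1, hk.2⟩] at hd
        omega
      have hfn : (fun i => mlam i + mmu i)
          = (fun i => (mlam i + mmu' i) + (if i = k then 1 else 0)) := by
        funext x
        have := hptw x
        omega
      have hu' : InS n (fun i => (mlam i + mmu' i) + (if i = k then 1 else 0)) u := by
        rw [← hfn]; exact hu
      obtain ⟨t1, ht1S, ht1le, hrest⟩ := key_peel hk.1 hk.2 (fun i => mlam i + mmu' i) u hu'
      obtain ⟨s, t2, hsS, ht2S, heq⟩ := ih (N-1) (by omega) mmu' hsum' mlam _ hrest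
      refine ⟨s, fun a => t2 a + t1 a, hsS, ⟨?_, ?_⟩, ?_⟩
      · intro p q hpq
        have h1 := ht2S.1 p q hpq
        have h2 := ht1S.1 p q hpq
        show t2 (p,q) + t1 (p,q) = 0
        omega
      · intro L hL
        have hb2 := ht2S.2 L hL
        have hb1 := ht1S.2 L hL
        have hmsum : ∑ x ∈ Finset.Icc (L.head!).1 (L.getLast!).1, mmu x
            = (∑ x ∈ Finset.Icc (L.head!).1 (L.getLast!).1, mmu' x)
              + ∑ x ∈ Finset.Icc (L.head!).1 (L.getLast!).1, (if x = k then 1 else 0) := by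
          rw [← Finset.sum_add_distrib]
          exact Finset.sum_congr rfl (fun x _ => hptw x)
        have hb1' : (L.map t1).sum
            ≤ ∑ x ∈ Finset.Icc (L.head!).1 (L.getLast!).1, (if x = k then 1 else 0) := hb1
        rw [sum_map_add]
        omega
      · intro a
        have h1 : u a - t1 a = s a + t2 a := heq a
        have h2 := ht1le a
        show u a = s a + (t2 a + t1 a)
        omega

/-- `S(λ + μ) = S(λ) + S(μ)`: a multi-exponent lies in
`S(λ+μ)` if and only if it is the coordinatewise sum of an element of
`S(λ)` and an element of `S(μ)`. -/
theorem InS_add_eq (n : ℕ) (mlam mmu : ℕ → ℕ) (u : ℕ × ℕ → ℕ) :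
    InS n (fun i => mlam i + mmu i) u ↔
      ∃ s t : ℕ × ℕ → ℕ, InS n mlam s ∧ InS n mmu t ∧ ∀ a : ℕ × ℕ, u a = s a + t a := by
  constructor
  · intro h
    exact forward_aux n _ mmu rfl mlam u h
  · rintro ⟨s, t, hs, ht, heq⟩
    constructor
    · intro p q hpq
      rw [heq (p,q), hs.1 p q hpq, ht.1 p q hpq]
    · intro L hL
      have h1 := hs.2 L hL
      have h2 := ht.2 L hL
      have hmap : L.map u = L.map (fun a => s a + t a) :=
        List.map_congr_left (fun a _ => heq a)
      rw [hmap, sum_map_add, Finset.sum_add_distrib]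
      omega
end

section
/- For the fundamental weight ω_i of sl_{n+1}, the set S(ω_i) consists exactly of the 0-1 tuples supported on antichains in R_i: s ∈ S(ω_i) iff s_α ∈ {0,1} for all α, s_α = 0 for α ∉ R_i, and the support of s is an antichain with respect to the order (j,k) ≤ (j',k') iff j ≤ j' and k ≤ k'. Consequently #S(ω_i) = C(n+1, i) = dim V(ω_i). -/
open Finset

namespace FundamentalAux

/-! ### Walks -/

def walk (f : ℕ → ℕ × ℕ) : ℕ → ℕ → List (ℕ × ℕ)
  | a, 0 => [f a]
  | a, k+1 => f a :: walk f (a+1) (k)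

lemma walk_ne_nil (f : ℕ → ℕ × ℕ) (a k : ℕ) : walk f a k ≠ [] := by
  cases k <;> simp [walk]

lemma walk_head! (f : ℕ → ℕ × ℕ) (a k : ℕ) : (walk f a k).head! = f a := by
  cases k <;> rfl

lemma walk_getLast? (f : ℕ → ℕ × ℕ) (a k : ℕ) : (walk f a k).getLast? = some (f (a + k)) := by
  induction k generalizing a with
  | zero => rfl
  | succ k ih =>
    rw [walk]
    cases k with
    | zero => simp [walk]
    | succ m =>
      rw [walk, List.getLast?_cons_cons, ← walk, ih]
      congr 2
      omega

lemma mem_walk {f : ℕ → ℕ × ℕ} {a k t : ℕ} (h1 : a ≤ t) (h2 : t ≤ a + k) :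
    f t ∈ walk f a k := by
  induction k generalizing a with
  | zero => simp [walk]; congr 1; omega
  | succ k ih =>
    rw [walk]
    rcases Nat.eq_or_lt_of_le h1 with rfl | h
    · simp
    · exact List.mem_cons_of_mem _ (ih (by omega) (by omega))

lemma walk_mem {f : ℕ → ℕ × ℕ} {a k : ℕ} {x : ℕ × ℕ} (h : x ∈ walk f a k) :
    ∃ t, a ≤ t ∧ t ≤ a + k ∧ x = f t := by
  induction k generalizing a with
  | zero => simp [walk] at h; exact ⟨a, le_refl _, by omega, h⟩
  | succ k ih =>
    rw [walk] at h
    rcases List.mem_cons.mp h with rfl | h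
    · exact ⟨a, le_refl _, by omega, rfl⟩
    · obtain ⟨t, h1, h2, h3⟩ := ih h
      exact ⟨t, by omega, by omega, h3⟩

lemma walk_chain' {f : ℕ → ℕ × ℕ} {a k : ℕ}
    (h : ∀ t, a ≤ t → t < a + k → RootStep (f t) (f (t+1))) :
    (walk f a k).Chain' RootStep := by
  induction k generalizing a with
  | zero => simp [walk]; exact List.isChain_singleton _
  | succ k ih =>
    rw [walk]
    cases k with
    | zero =>
      refine List.isChain_cons_cons.mpr ⟨h a le_rfl (by omega), ?_⟩
      simp [walk]
    | succ m =>
      rw [walk]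
      refine List.isChain_cons_cons.mpr ⟨h a le_rfl (by omega), ?_⟩
      rw [← walk]
      exact ih (fun t ht1 ht2 => h t (by omega) (by omega))

lemma le_sum_of_mem {s : ℕ × ℕ → ℕ} {l : List (ℕ × ℕ)} {x : ℕ × ℕ} (h : x ∈ l) :
    s x ≤ (l.map s).sum := by
  induction l with
  | nil => simp at h
  | cons y t ih =>
    rcases List.mem_cons.mp h with rfl | h
    · simp
    · simp only [List.map_cons, List.sum_cons]
      exact le_add_of_nonneg_of_le (Nat.zero_le _) (ih h)

lemma two_le_sum_walk {s : ℕ × ℕ → ℕ} {f : ℕ → ℕ × ℕ} {a k t1 t2 : ℕ}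
    (h1 : a ≤ t1) (h12 : t1 < t2) (h2 : t2 ≤ a + k) :
    s (f t1) + s (f t2) ≤ ((walk f a k).map s).sum := by
  induction k generalizing a with
  | zero => omega
  | succ k ih =>
    rw [walk]
    simp only [List.map_cons, List.sum_cons]
    rcases Nat.eq_or_lt_of_le h1 with rfl | h
    · exact Nat.add_le_add le_rfl (le_sum_of_mem (mem_walk (by omega) (by omega)))
    · exact le_add_of_nonneg_of_le (Nat.zero_le _) (ih (by omega) (by omega))

/-! ### Explicit Dyck paths -/

def pf (p q p' q' : ℕ) (t : ℕ) : ℕ × ℕ :=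
  if t ≤ p + q then (p, t - p)
  else if t ≤ p' + q then (t - q, q)
  else if t ≤ p' + q' then (p', t - p')
  else (t - q', q')

def dpath (p q p' q' : ℕ) : List (ℕ × ℕ) := walk (pf p q p' q') (2*p) (2*q' - 2*p)

variable {n p q p' q' : ℕ}

lemma pf_first (h1 : 1 ≤ p) (h2 : p ≤ p') (h3 : p' ≤ q) (h4 : q ≤ q') :
    pf p q p' q' (2*p) = (p, p) := by
  simp only [pf]; split_ifs <;> simp only [Prod.mk.injEq, true_and, and_true] <;>
    first | trivial | omega

lemma pf_last (h1 : 1 ≤ p) (h2 : p ≤ p') (h3 : p' ≤ q) (h4 : q ≤ q') :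
    pf p q p' q' (2*q') = (q', q') := by
  simp only [pf]; split_ifs <;> simp only [Prod.mk.injEq, true_and, and_true] <;>
    first | trivial | omega

lemma pf_pq (h1 : 1 ≤ p) (h2 : p ≤ p') (h3 : p' ≤ q) (h4 : q ≤ q') :
    pf p q p' q' (p + q) = (p, q) := by
  simp only [pf]; split_ifs <;> simp only [Prod.mk.injEq, true_and, and_true] <;>
    first | trivial | omega

lemma pf_pq' (h1 : 1 ≤ p) (h2 : p ≤ p') (h3 : p' ≤ q) (h4 : q ≤ q') :
    pf p q p' q' (p' + q') = (p', q') := by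
  simp only [pf]; split_ifs <;> simp only [Prod.mk.injEq, true_and, and_true] <;>
    first | trivial | omega

lemma dpath_dyck (h1 : 1 ≤ p) (h2 : p ≤ p') (h3 : p' ≤ q) (h4 : q ≤ q') (h5 : q' ≤ n) :
    IsDyckPath n (dpath p q p' q') := by
  refine ⟨walk_ne_nil _ _ _, ?_, ?_, ?_, ?_⟩
  · intro x hx
    obtain ⟨t, ht1, ht2, rfl⟩ := walk_mem hx
    simp only [pf]; split_ifs <;> omega
  · rw [dpath, walk_head!, pf_first h1 h2 h3 h4]
  · rw [dpath, List.getLast!_of_getLast? (walk_getLast? _ _ _),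
      show 2*p + (2*q' - 2*p) = 2*q' by omega, pf_last h1 h2 h3 h4]
  · apply walk_chain'
    intro t ht1 ht2
    simp only [RootStep, pf]
    split_ifs <;>
      simp only [Prod.mk.injEq, true_and, and_true, or_true, true_or] <;>
      first | trivial | omega

lemma dpath_head1 (h1 : 1 ≤ p) (h2 : p ≤ p') (h3 : p' ≤ q) (h4 : q ≤ q') :
    (dpath p q p' q').head!.1 = p := by
  rw [dpath, walk_head!, pf_first h1 h2 h3 h4]

lemma dpath_last1 (h1 : 1 ≤ p) (h2 : p ≤ p') (h3 : p' ≤ q) (h4 : q ≤ q') :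
    (dpath p q p' q').getLast!.1 = q' := by
  rw [dpath, List.getLast!_of_getLast? (walk_getLast? _ _ _),
    show 2*p + (2*q' - 2*p) = 2*q' by omega, pf_last h1 h2 h3 h4]

lemma single_le_dpath_sum {s : ℕ × ℕ → ℕ} (h1 : 1 ≤ p) (h2 : p ≤ p') (h3 : p' ≤ q)
    (h4 : q ≤ q') : s (p, q) ≤ ((dpath p q p' q').map s).sum := by
  rw [← pf_pq h1 h2 h3 h4]
  exact le_sum_of_mem (mem_walk (by omega) (by omega))

lemma two_le_dpath_sum {s : ℕ × ℕ → ℕ} (h1 : 1 ≤ p) (h2 : p ≤ p') (h3 : p' ≤ q)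
    (h4 : q ≤ q') (hne : (p, q) ≠ (p', q')) :
    s (p, q) + s (p', q') ≤ ((dpath p q p' q').map s).sum := by
  have hlt : p + q < p' + q' := by
    rcases Nat.lt_or_ge (p+q) (p'+q') with h | h
    · exact h
    · exfalso; apply hne; have : p = p' ∧ q = q' := by omega
      simp [this.1, this.2]
  rw [← pf_pq h1 h2 h3 h4, ← pf_pq' h1 h2 h3 h4]
  exact two_le_sum_walk (by omega) hlt (by omega)

/-! ### Comparability along Dyck paths -/

def Rp (a b : ℕ × ℕ) : Prop := a.1 ≤ b.1 ∧ a.2 ≤ b.2 ∧ a.1 + a.2 < b.1 + b.2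

instance : IsTrans (ℕ × ℕ) Rp :=
  ⟨fun _ _ _ h1 h2 => ⟨le_trans h1.1 h2.1, le_trans h1.2.1 h2.2.1, lt_trans h1.2.2 h2.2.2⟩⟩

lemma rootStep_rp {a b : ℕ × ℕ} (h : RootStep a b) : Rp a b := by
  rcases h with h | h <;> subst h <;> exact ⟨by omega, by omega, by omega⟩

lemma getLast!_cons_of_ne_nil {α} [Inhabited α] {t : List α} (x : α) (h : t ≠ []) :
    (x :: t).getLast! = t.getLast! := by
  cases t with
  | nil => exact absurd rfl h
  | cons y l => rw [List.getLast!_cons_eq_getLastD, List.getLast!_cons_eq_getLastD, List.getLastD_cons]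

lemma rel_getLast! {L : List (ℕ × ℕ)} (hp : L.Pairwise Rp) {a : ℕ × ℕ} (ha : a ∈ L) :
    a = L.getLast! ∨ Rp a L.getLast! := by
  induction L with
  | nil => simp at ha
  | cons x t ih =>
    cases t with
    | nil =>
      left
      simp only [List.mem_singleton] at ha
      simp [ha, List.getLast!_cons_eq_getLastD]
    | cons y l =>
      rw [getLast!_cons_of_ne_nil x (by simp)]
      rcases List.mem_cons.mp ha with rfl | ha'
      · right
        have hx : ∀ b ∈ y :: l, Rp a b := (List.pairwise_cons.mp hp).1
        have hmem : (y :: l).getLast! ∈ y :: l := by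
          rw [List.getLast!_cons_eq_getLastD]
          exact List.getLastD_mem_cons
        exact hx _ hmem
      · exact ih (List.pairwise_cons.mp hp).2 ha'

lemma rel_head! {L : List (ℕ × ℕ)} (hp : L.Pairwise Rp) {a : ℕ × ℕ} (ha : a ∈ L) :
    a = L.head! ∨ Rp L.head! a := by
  cases L with
  | nil => simp at ha
  | cons x t =>
    rcases List.mem_cons.mp ha with rfl | h
    · left; rfl
    · right; exact (List.pairwise_cons.mp hp).1 a h

lemma sum_le_one {s : ℕ × ℕ → ℕ} (hle : ∀ x, s x ≤ 1)
    (hac : ∀ p q p' q' : ℕ, s (p, q) ≠ 0 → s (p', q') ≠ 0 → p ≤ p' → q ≤ q' →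
      (p, q) = (p', q'))
    {L : List (ℕ × ℕ)} (hp : L.Pairwise Rp) : (L.map s).sum ≤ 1 := by
  induction L with
  | nil => simp
  | cons x t ih =>
    obtain ⟨hx, hp'⟩ := List.pairwise_cons.mp hp
    simp only [List.map_cons, List.sum_cons]
    by_cases h : s x = 0
    · rw [h]; simpa using ih hp'
    · have ht : ∀ b ∈ t, s b = 0 := by
        intro b hb
        by_contra hb0
        have heq := hac x.1 x.2 b.1 b.2 (by simpa using h) (by simpa using hb0)
          (hx b hb).1 (hx b hb).2.1
        have h2 := (hx b hb).2.2
        rw [Prod.mk.injEq] at heq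
        omega
      have hzero : (t.map s).sum = 0 :=
        List.sum_eq_zero (by
          intro y hy
          obtain ⟨b, hb, rfl⟩ := List.mem_map.mp hy
          exact ht b hb)
      rw [hzero]
      simpa using hle x

/-! ### Part 1: the characterization -/

theorem part1 (n i : ℕ) (hi : 1 ≤ i) (hin : i ≤ n) (s : ℕ × ℕ → ℕ) :
    InS n (fun t => if t = i then 1 else 0) s ↔
      ((∀ p q : ℕ, ¬(IsRoot n p q ∧ p ≤ i ∧ i ≤ q) → s (p, q) = 0) ∧
       (∀ a : ℕ × ℕ, s a ≤ 1) ∧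
       (∀ p q p' q' : ℕ, s (p, q) ≠ 0 → s (p', q') ≠ 0 →
          p ≤ p' → q ≤ q' → (p, q) = (p', q'))) := by
  have hsum : ∀ a b : ℕ, (∑ t ∈ Finset.Icc a b, if t = i then 1 else 0)
      = if a ≤ i ∧ i ≤ b then 1 else 0 := by
    intro a b
    rw [Finset.sum_ite_eq' (Finset.Icc a b) i (fun _ => 1)]
    simp [Finset.mem_Icc]
  constructor
  · intro hs
    have hsupp : ∀ p q : ℕ, ¬(IsRoot n p q ∧ p ≤ i ∧ i ≤ q) → s (p, q) = 0 := by
      intro p q hnot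
      by_cases hroot : IsRoot n p q
      · obtain ⟨h1, h3, h5⟩ := hroot
        have hd := hs.2 _ (dpath_dyck h1 le_rfl h3 le_rfl h5)
        rw [dpath_head1 h1 le_rfl h3 le_rfl, dpath_last1 h1 le_rfl h3 le_rfl, hsum] at hd
        have hb := le_trans (single_le_dpath_sum h1 le_rfl h3 le_rfl) hd
        rw [if_neg (by tauto)] at hb
        omega
      · exact hs.1 p q hroot
    refine ⟨hsupp, ?_, ?_⟩
    · intro a
      by_cases h : s a = 0
      · omega
      · have hcond : IsRoot n a.1 a.2 ∧ a.1 ≤ i ∧ i ≤ a.2 := by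
          by_contra hc
          exact h (by rw [← Prod.mk.eta (p := a)] at *; exact hsupp a.1 a.2 hc)
        obtain ⟨⟨h1, h3, h5⟩, _, _⟩ := hcond
        have hd := hs.2 _ (dpath_dyck h1 le_rfl h3 le_rfl h5)
        rw [dpath_head1 h1 le_rfl h3 le_rfl, dpath_last1 h1 le_rfl h3 le_rfl, hsum] at hd
        have hb := le_trans (single_le_dpath_sum (s := s) h1 le_rfl h3 le_rfl) hd
        rw [Prod.mk.eta] at hb
        split_ifs at hb <;> omega
    · intro p q p' q' h1 h2 hp hq
      by_contra hne
      have hc1 : IsRoot n p q ∧ p ≤ i ∧ i ≤ q := by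
        by_contra hc; exact h1 (hsupp p q hc)
      have hc2 : IsRoot n p' q' ∧ p' ≤ i ∧ i ≤ q' := by
        by_contra hc; exact h2 (hsupp p' q' hc)
      have hd := hs.2 _ (dpath_dyck hc1.1.1 hp (le_trans hc2.2.1 hc1.2.2) hq hc2.1.2.2)
      rw [dpath_head1 hc1.1.1 hp (le_trans hc2.2.1 hc1.2.2) hq,
        dpath_last1 hc1.1.1 hp (le_trans hc2.2.1 hc1.2.2) hq, hsum] at hd
      have hb := le_trans
        (two_le_dpath_sum (s := s) hc1.1.1 hp (le_trans hc2.2.1 hc1.2.2) hq hne) hd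
      split_ifs at hb <;> omega
  · rintro ⟨hsupp, hle, hac⟩
    constructor
    · intro p q hnr
      exact hsupp p q (by tauto)
    · intro L hL
      obtain ⟨hne, hroots, hh, hl, hch⟩ := hL
      have hpw : L.Pairwise Rp :=
        List.isChain_iff_pairwise.mp (hch.imp fun _ _ h => rootStep_rp h)
      rw [hsum]
      by_cases hz : ∀ x ∈ L, s x = 0
      · have : (L.map s).sum = 0 :=
          List.sum_eq_zero (by
            intro y hy
            obtain ⟨b, hb, rfl⟩ := List.mem_map.mp hy
            exact hz b hb)
        rw [this]
        exact Nat.zero_le _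
      · push_neg at hz
        obtain ⟨a, haL, ha⟩ := hz
        have hcond : IsRoot n a.1 a.2 ∧ a.1 ≤ i ∧ i ≤ a.2 := by
          by_contra hc
          exact ha (by rw [← Prod.mk.eta (p := a)] at *; exact hsupp a.1 a.2 hc)
        have hhead : L.head!.1 ≤ a.1 := by
          rcases rel_head! hpw haL with h | h
          · rw [← h]
          · exact h.1
        have hlast : a.2 ≤ L.getLast!.2 := by
          rcases rel_getLast! hpw haL with h | h
          · rw [h]
          · exact h.2.1
        rw [if_pos ⟨le_trans hhead (le_trans (by omega) hcond.2.1),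
          le_trans hcond.2.2 (by omega)⟩]
        exact sum_le_one hle hac hpw

end FundamentalAux

namespace FundamentalAux

/-! ### Part 2: counting -/

section Count

variable {n i : ℕ} {s : ℕ × ℕ → ℕ}

/-- support of `s` inside the grid `[1,i] × [i,n]` -/
def supp (n i : ℕ) (s : ℕ × ℕ → ℕ) : Finset (ℕ × ℕ) :=
  ((Finset.Icc 1 i) ×ˢ (Finset.Icc i n)).filter (fun a => s a ≠ 0)

lemma mem_supp
    (hsupp : ∀ p q : ℕ, ¬(IsRoot n p q ∧ p ≤ i ∧ i ≤ q) → s (p, q) = 0)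
    {a : ℕ × ℕ} : a ∈ supp n i s ↔ s a ≠ 0 := by
  simp only [supp, Finset.mem_filter, Finset.mem_product, Finset.mem_Icc]
  constructor
  · tauto
  · intro h
    refine ⟨⟨⟨?_, ?_⟩, ?_, ?_⟩, h⟩ <;>
    · have hc : IsRoot n a.1 a.2 ∧ a.1 ≤ i ∧ i ≤ a.2 := by
        by_contra hc
        exact h (by rw [← Prod.mk.eta (p := a)] at *; exact hsupp a.1 a.2 hc)
      obtain ⟨⟨u1, u2, u3⟩, u4, u5⟩ := hc
      omega

lemma fst_injOn
    (hac : ∀ p q p' q' : ℕ, s (p, q) ≠ 0 → s (p', q') ≠ 0 → p ≤ p' → q ≤ q' →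
      (p, q) = (p', q'))
    : ∀ a ∈ supp n i s, ∀ b ∈ supp n i s, a.1 = b.1 → a = b := by
  intro a ha b hb hab
  have ha' : s (a.1, a.2) ≠ 0 := by
    rw [Prod.mk.eta]; exact (Finset.mem_filter.mp ha).2
  have hb' : s (b.1, b.2) ≠ 0 := by
    rw [Prod.mk.eta]; exact (Finset.mem_filter.mp hb).2
  rcases le_total a.2 b.2 with h | h
  · have := hac a.1 a.2 b.1 b.2 ha' hb' (le_of_eq hab) h
    rw [Prod.mk.injEq] at this
    exact Prod.ext this.1 this.2
  · have := hac b.1 b.2 a.1 a.2 hb' ha' (le_of_eq hab.symm) h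
    rw [Prod.mk.injEq] at this
    exact (Prod.ext this.1 this.2).symm

lemma snd_injOn
    (hac : ∀ p q p' q' : ℕ, s (p, q) ≠ 0 → s (p', q') ≠ 0 → p ≤ p' → q ≤ q' →
      (p, q) = (p', q'))
    : ∀ a ∈ supp n i s, ∀ b ∈ supp n i s, a.2 = b.2 → a = b := by
  intro a ha b hb hab
  have ha' : s (a.1, a.2) ≠ 0 := by
    rw [Prod.mk.eta]; exact (Finset.mem_filter.mp ha).2
  have hb' : s (b.1, b.2) ≠ 0 := by
    rw [Prod.mk.eta]; exact (Finset.mem_filter.mp hb).2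
  rcases le_total a.1 b.1 with h | h
  · have := hac a.1 a.2 b.1 b.2 ha' hb' h (le_of_eq hab)
    rw [Prod.mk.injEq] at this
    exact Prod.ext this.1 this.2
  · have := hac b.1 b.2 a.1 a.2 hb' ha' h (le_of_eq hab.symm)
    rw [Prod.mk.injEq] at this
    exact (Prod.ext this.1 this.2).symm

variable (hac : ∀ p q p' q' : ℕ, s (p, q) ≠ 0 → s (p', q') ≠ 0 → p ≤ p' → q ≤ q' →
      (p, q) = (p', q'))
include hac

/-- the two rank functions agree on elements of the support -/
lemma rank_eq (x : ℕ × ℕ) (hx : x ∈ supp n i s) :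
    (((supp n i s).image Prod.fst).filter (· ≤ x.1)).card
      = (((supp n i s).image Prod.snd).filter (x.2 ≤ ·)).card := by
  have hsx : s x ≠ 0 := (Finset.mem_filter.mp hx).2
  rw [Finset.filter_image, Finset.filter_image,
    Finset.card_image_of_injOn, Finset.card_image_of_injOn]
  · congr 1
    apply Finset.filter_congr
    intro y hy
    have hsy : s y ≠ 0 := (Finset.mem_filter.mp hy).2
    constructor
    · intro h1
      by_contra h2
      have := hac y.1 y.2 x.1 x.2 (by rw [Prod.mk.eta]; exact hsy)
        (by rw [Prod.mk.eta]; exact hsx) h1 (by omega)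
      rw [Prod.mk.injEq] at this
      omega
    · intro h1
      by_contra h2
      have := hac x.1 x.2 y.1 y.2 (by rw [Prod.mk.eta]; exact hsx)
        (by rw [Prod.mk.eta]; exact hsy) (by omega) h1
      rw [Prod.mk.injEq] at this
      omega
  · intro a ha b hb hab
    exact snd_injOn hac a (Finset.mem_of_mem_filter _ ha) b (Finset.mem_of_mem_filter _ hb) hab
  · intro a ha b hb hab
    exact fst_injOn hac a (Finset.mem_of_mem_filter _ ha) b (Finset.mem_of_mem_filter _ hb) hab

omit hac in
/-- second-coordinate rank is injective -/
lemma rankB_inj {B : Finset ℕ} {q q' : ℕ} (hq : q ∈ B) (hq' : q' ∈ B)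
    (h : (B.filter (q ≤ ·)).card = (B.filter (q' ≤ ·)).card) : q = q' := by
  by_contra hne
  rcases Nat.lt_or_ge q q' with hlt | hge
  · have hss : B.filter (q' ≤ ·) ⊂ B.filter (q ≤ ·) := by
      constructor
      · intro x hxmem
        simp only [Finset.mem_filter] at hxmem ⊢
        exact ⟨hxmem.1, by omega⟩
      · intro hsub
        have : q ∈ B.filter (q' ≤ ·) := hsub (by simp [Finset.mem_filter, hq])
        simp only [Finset.mem_filter] at this
        omega
    exact absurd h (Nat.ne_of_gt (Finset.card_lt_card hss))
  · have hlt : q' < q := by omega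
    have hss : B.filter (q ≤ ·) ⊂ B.filter (q' ≤ ·) := by
      constructor
      · intro x hxmem
        simp only [Finset.mem_filter] at hxmem ⊢
        exact ⟨hxmem.1, by omega⟩
      · intro hsub
        have : q' ∈ B.filter (q ≤ ·) := hsub (by simp [Finset.mem_filter, hq'])
        simp only [Finset.mem_filter] at this
        omega
    exact absurd h (Nat.ne_of_lt (Finset.card_lt_card hss))

/-- the support is determined by the two coordinate images -/
lemma supp_determined :
    supp n i s = ((((supp n i s).image Prod.fst) ×ˢ ((supp n i s).image Prod.snd)).filter
      (fun x => ((((supp n i s).image Prod.fst)).filter (· ≤ x.1)).card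
        = ((((supp n i s).image Prod.snd)).filter (x.2 ≤ ·)).card)) := by
  apply Finset.Subset.antisymm
  · intro x hx
    refine Finset.mem_filter.mpr ⟨Finset.mem_product.mpr
      ⟨Finset.mem_image_of_mem _ hx, Finset.mem_image_of_mem _ hx⟩, rank_eq hac x hx⟩
  · intro x hx
    obtain ⟨hxm, hrank⟩ := Finset.mem_filter.mp hx
    obtain ⟨h1, h2⟩ := Finset.mem_product.mp hxm
    obtain ⟨a, ha, ha1⟩ := Finset.mem_image.mp h1
    have hra := rank_eq hac a ha
    rw [ha1] at hra
    have hq : a.2 ∈ (supp n i s).image Prod.snd := Finset.mem_image_of_mem _ ha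
    obtain ⟨b, hb, hb2⟩ := Finset.mem_image.mp h2
    have hq' : x.2 ∈ (supp n i s).image Prod.snd := by
      rw [← hb2]; exact Finset.mem_image_of_mem _ hb
    have : a.2 = x.2 := rankB_inj hq hq' (by rw [hra] at hrank; exact hrank)
    have hxa : x = a := Prod.ext ha1.symm this.symm
    rw [hxa]; exact ha

end Count

section G
variable {n i : ℕ}

/-- the staircase antichain associated to a pair of equal-size finsets -/
def gset (A B : Finset ℕ) (h : B.card = A.card) : Finset (ℕ × ℕ) :=
  (Finset.univ : Finset (Fin A.card)).image
    (fun j => (A.orderEmbOfFin rfl j, B.orderEmbOfFin h j.rev))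

def gfun (A B : Finset ℕ) (h : B.card = A.card) : ℕ × ℕ → ℕ :=
  fun a => if a ∈ gset A B h then 1 else 0

variable {A B : Finset ℕ} (h : B.card = A.card)

lemma gset_fst_image : (gset A B h).image Prod.fst = A := by
  rw [gset, Finset.image_image]
  apply Finset.Subset.antisymm
  · intro a ha
    obtain ⟨j, _, rfl⟩ := Finset.mem_image.mp ha
    exact A.orderEmbOfFin_mem rfl j
  · intro a ha
    have : a ∈ Set.range (A.orderEmbOfFin rfl) := by
      rw [Finset.range_orderEmbOfFin]; exact ha
    obtain ⟨j, hj⟩ := this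
    exact Finset.mem_image.mpr ⟨j, Finset.mem_univ _, hj⟩

lemma gset_snd_image : (gset A B h).image Prod.snd = B := by
  rw [gset, Finset.image_image]
  apply Finset.Subset.antisymm
  · intro b hb
    obtain ⟨j, _, rfl⟩ := Finset.mem_image.mp hb
    exact B.orderEmbOfFin_mem h _
  · intro b hb
    have : b ∈ Set.range (B.orderEmbOfFin h) := by
      rw [Finset.range_orderEmbOfFin]; exact hb
    obtain ⟨j, hj⟩ := this
    refine Finset.mem_image.mpr ⟨j.rev, Finset.mem_univ _, ?_⟩
    simp only [Function.comp, Fin.rev_rev]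
    exact hj

lemma gfun_ne_zero_iff {a : ℕ × ℕ} : gfun A B h a ≠ 0 ↔ a ∈ gset A B h := by
  rw [gfun]
  split_ifs with hmem <;> simp [hmem]

lemma gfun_le_one (a : ℕ × ℕ) : gfun A B h a ≤ 1 := by
  rw [gfun]; split_ifs <;> omega

lemma gfun_antichain :
    ∀ p q p' q' : ℕ, gfun A B h (p, q) ≠ 0 → gfun A B h (p', q') ≠ 0 →
      p ≤ p' → q ≤ q' → (p, q) = (p', q') := by
  intro p q p' q' h1 h2 hp hq
  rw [gfun_ne_zero_iff] at h1 h2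
  obtain ⟨j1, _, hj1⟩ := Finset.mem_image.mp h1
  obtain ⟨j2, _, hj2⟩ := Finset.mem_image.mp h2
  rw [Prod.mk.injEq] at hj1 hj2
  have e1 : j1 ≤ j2 := by
    have := (A.orderEmbOfFin rfl).le_iff_le (a := j1) (b := j2)
    rw [hj1.1, hj2.1] at this
    exact this.mp hp
  have e2 : j2 ≤ j1 := by
    have := (B.orderEmbOfFin h).le_iff_le (a := j1.rev) (b := j2.rev)
    rw [hj1.2, hj2.2] at this
    have := this.mp hq
    rwa [Fin.rev_le_rev] at this
  have : j1 = j2 := le_antisymm e1 e2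
  rw [← hj1.1, ← hj1.2, ← hj2.1, ← hj2.2, this]

lemma gfun_supported (hi : 1 ≤ i) (hin : i ≤ n)
    (hA : A ⊆ Finset.Icc 1 i) (hB : B ⊆ Finset.Icc i n) :
    ∀ p q : ℕ, ¬(IsRoot n p q ∧ p ≤ i ∧ i ≤ q) → gfun A B h (p, q) = 0 := by
  intro p q hc
  by_contra h0
  rw [← Ne, gfun_ne_zero_iff] at h0
  obtain ⟨j, _, hj⟩ := Finset.mem_image.mp h0
  rw [Prod.mk.injEq] at hj
  have hpA : p ∈ A := by rw [← hj.1]; exact A.orderEmbOfFin_mem rfl j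
  have hqB : q ∈ B := by rw [← hj.2]; exact B.orderEmbOfFin_mem h _
  have h1 := Finset.mem_Icc.mp (hA hpA)
  have h2 := Finset.mem_Icc.mp (hB hqB)
  exact hc ⟨⟨by omega, by omega, by omega⟩, by omega, by omega⟩

lemma gset_subset (hA : A ⊆ Finset.Icc 1 i) (hB : B ⊆ Finset.Icc i n) :
    gset A B h ⊆ (Finset.Icc 1 i) ×ˢ (Finset.Icc i n) := by
  intro x hx
  obtain ⟨j, _, hj⟩ := Finset.mem_image.mp hx
  rw [Finset.mem_product]
  constructor
  · rw [← hj]; exact hA (A.orderEmbOfFin_mem rfl j)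
  · rw [← hj]; exact hB (B.orderEmbOfFin_mem h _)

end G

/-! ### Counting the pairs -/

lemma card_P (n i : ℕ) (hi : 1 ≤ i) (hin : i ≤ n) :
    ((((Finset.Icc 1 i).powerset ×ˢ (Finset.Icc i n).powerset)).filter
      (fun AB => AB.1.card = AB.2.card)).card = Nat.choose (n + 1) i := by
  have hX : (Finset.Icc 1 i).card = i := by rw [Nat.card_Icc]; omega
  have hY : (Finset.Icc i n).card = n + 1 - i := by rw [Nat.card_Icc]
  have hsplit : (((Finset.Icc 1 i).powerset ×ˢ (Finset.Icc i n).powerset)).filter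
      (fun AB => AB.1.card = AB.2.card)
      = (Finset.range (i+1)).biUnion (fun k =>
          (Finset.Icc 1 i).powersetCard k ×ˢ (Finset.Icc i n).powersetCard k) := by
    ext AB
    simp only [Finset.mem_filter, Finset.mem_product, Finset.mem_powerset,
      Finset.mem_biUnion, Finset.mem_range, Finset.mem_powersetCard]
    constructor
    · rintro ⟨⟨h1, h2⟩, h3⟩
      refine ⟨AB.1.card, ?_, ⟨h1, rfl⟩, ⟨h2, h3.symm⟩⟩
      have := Finset.card_le_card h1
      rw [hX] at this
      omega
    · rintro ⟨k, _, ⟨h1, hk1⟩, ⟨h2, hk2⟩⟩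
      exact ⟨⟨h1, h2⟩, by rw [hk1, hk2]⟩
  rw [hsplit, Finset.card_biUnion]
  · have hterm : ∀ k ∈ Finset.range (i+1),
        ((Finset.Icc 1 i).powersetCard k ×ˢ (Finset.Icc i n).powersetCard k).card
          = i.choose k * (n+1-i).choose k := by
      intro k _
      rw [Finset.card_product, Finset.card_powersetCard, Finset.card_powersetCard, hX, hY]
    rw [Finset.sum_congr rfl hterm]
    have hvd := Nat.add_choose_eq i (n+1-i) i
    rw [show i + (n+1-i) = n+1 by omega] at hvd
    rw [hvd, Finset.Nat.sum_antidiagonal_eq_sum_range_succ_mk]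
    have hre := Finset.sum_range_reflect
      (fun k => i.choose k * (n+1-i).choose (i - k)) (i+1)
    calc ∑ k ∈ Finset.range (i+1), i.choose k * (n+1-i).choose k
        = ∑ k ∈ Finset.range (i+1),
            (fun k => i.choose k * (n+1-i).choose (i - k)) (i + 1 - 1 - k) := by
          apply Finset.sum_congr rfl
          intro k hk
          rw [Finset.mem_range] at hk
          simp only
          rw [show i + 1 - 1 - k = i - k by omega, show i - (i - k) = k by omega,
            Nat.choose_symm (by omega : k ≤ i)]
      _ = ∑ k ∈ Finset.range (i+1), i.choose k * (n+1-i).choose (i - k) := hre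
      _ = ∑ k ∈ Finset.range (i+1), i.choose (k, i-k).1 * (n+1-i).choose (k, i-k).2 := rfl
  · intro k1 _ k2 _ hne
    simp only [Finset.disjoint_left]
    intro AB h1 h2
    rw [Finset.mem_product, Finset.mem_powersetCard] at h1 h2
    exact hne (by rw [← h1.1.2, h2.1.2])

end FundamentalAux

namespace FundamentalAux

lemma s_eq_indicator {n i : ℕ} {s : ℕ × ℕ → ℕ}
    (hsupp : ∀ p q : ℕ, ¬(IsRoot n p q ∧ p ≤ i ∧ i ≤ q) → s (p, q) = 0)
    (hle : ∀ a : ℕ × ℕ, s a ≤ 1) (a : ℕ × ℕ) :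
    s a = if a ∈ supp n i s then 1 else 0 := by
  split_ifs with hmem
  · have h1 := (mem_supp hsupp).mp hmem
    have h2 := hle a
    omega
  · by_contra h
    exact hmem ((mem_supp hsupp).mpr (by omega))

end FundamentalAux

open FundamentalAux

/-- `S(ω_i)` consists exactly of the 0-1 tuples supported on
antichains in `R_i = {α_{j,k} : j ≤ i ≤ k}` (antichain with respect to the
componentwise order), and `#S(ω_i) = C(n+1, i) = dim V(ω_i)`. -/
theorem InS_fundamental_characterization (n i : ℕ) (hi : 1 ≤ i) (hin : i ≤ n) :
    (∀ s : ℕ × ℕ → ℕ,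
      InS n (fun t => if t = i then 1 else 0) s ↔
        ((∀ p q : ℕ, ¬(IsRoot n p q ∧ p ≤ i ∧ i ≤ q) → s (p, q) = 0) ∧
         (∀ a : ℕ × ℕ, s a ≤ 1) ∧
         (∀ p q p' q' : ℕ, s (p, q) ≠ 0 → s (p', q') ≠ 0 →
            p ≤ p' → q ≤ q' → (p, q) = (p', q')))) ∧
    {s : ℕ × ℕ → ℕ | InS n (fun t => if t = i then 1 else 0) s}.ncard
      = Nat.choose (n + 1) i := by
  classical
  refine ⟨fun s => part1 n i hi hin s, ?_⟩
  set P : Finset (Finset ℕ × Finset ℕ) :=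
    (((Finset.Icc 1 i).powerset ×ˢ (Finset.Icc i n).powerset)).filter
      (fun AB => AB.1.card = AB.2.card) with hPdef
  set F : (ℕ × ℕ → ℕ) → Finset ℕ × Finset ℕ :=
    fun s => ((supp n i s).image Prod.fst, (supp n i s).image Prod.snd) with hFdef
  set S : Set (ℕ × ℕ → ℕ) := {s | InS n (fun t => if t = i then 1 else 0) s} with hSdef
  have hQ : ∀ s : ℕ × ℕ → ℕ, s ∈ S ↔
      ((∀ p q : ℕ, ¬(IsRoot n p q ∧ p ≤ i ∧ i ≤ q) → s (p, q) = 0) ∧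
       (∀ a : ℕ × ℕ, s a ≤ 1) ∧
       (∀ p q p' q' : ℕ, s (p, q) ≠ 0 → s (p', q') ≠ 0 →
          p ≤ p' → q ≤ q' → (p, q) = (p', q'))) :=
    fun s => part1 n i hi hin s
  have hmaps : Set.MapsTo F S ↑P := by
    intro s hs
    obtain ⟨h1, h2, h3⟩ := (hQ s).mp hs
    refine Finset.mem_coe.mpr ?_
    rw [hPdef, Finset.mem_filter, Finset.mem_product,
      Finset.mem_powerset, Finset.mem_powerset]
    refine ⟨⟨?_, ?_⟩, ?_⟩
    · intro a ha
      obtain ⟨x, hx, rfl⟩ := Finset.mem_image.mp ha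
      exact (Finset.mem_product.mp (Finset.mem_of_mem_filter _ hx)).1
    · intro a ha
      obtain ⟨x, hx, rfl⟩ := Finset.mem_image.mp ha
      exact (Finset.mem_product.mp (Finset.mem_of_mem_filter _ hx)).2
    · show ((supp n i s).image Prod.fst).card = ((supp n i s).image Prod.snd).card
      rw [Finset.card_image_of_injOn, Finset.card_image_of_injOn]
      · intro a ha b hb hab
        exact snd_injOn h3 a ha b hb hab
      · intro a ha b hb hab
        exact fst_injOn h3 a ha b hb hab
  have hinj : Set.InjOn F S := by
    intro s1 hs1 s2 hs2 hF
    obtain ⟨h1a, h1b, h1c⟩ := (hQ s1).mp hs1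
    obtain ⟨h2a, h2b, h2c⟩ := (hQ s2).mp hs2
    have himg1 : (supp n i s1).image Prod.fst = (supp n i s2).image Prod.fst :=
      congrArg Prod.fst hF
    have himg2 : (supp n i s1).image Prod.snd = (supp n i s2).image Prod.snd :=
      congrArg Prod.snd hF
    have hsupp_eq : supp n i s1 = supp n i s2 := by
      rw [supp_determined h1c, supp_determined h2c, himg1, himg2]
    funext a
    rw [s_eq_indicator h1a h1b a, s_eq_indicator h2a h2b a, hsupp_eq]
  have hsurj : Set.SurjOn F S ↑P := by
    intro AB hAB
    rw [Finset.mem_coe, hPdef, Finset.mem_filter, Finset.mem_product,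
      Finset.mem_powerset, Finset.mem_powerset] at hAB
    obtain ⟨⟨hA, hB⟩, hcard⟩ := hAB
    have hcard' : AB.2.card = AB.1.card := hcard.symm
    set s0 : ℕ × ℕ → ℕ := gfun AB.1 AB.2 hcard' with hs0def
    have hs0 : s0 ∈ S := (hQ s0).mpr
      ⟨gfun_supported hcard' hi hin hA hB, gfun_le_one hcard', gfun_antichain hcard'⟩
    refine ⟨s0, hs0, ?_⟩
    have hsup : supp n i s0 = gset AB.1 AB.2 hcard' := by
      ext x
      rw [supp, Finset.mem_filter]
      constructor
      · rintro ⟨_, hx2⟩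
        exact (gfun_ne_zero_iff hcard').mp hx2
      · intro hx
        exact ⟨gset_subset hcard' hA hB hx, (gfun_ne_zero_iff hcard').mpr hx⟩
    rw [hFdef]
    simp only
    rw [hsup, gset_fst_image, gset_snd_image]
  have hbij : Set.BijOn F S ↑P := ⟨hmaps, hinj, hsurj⟩
  calc S.ncard = (F '' S).ncard := (Set.ncard_image_of_injOn hinj).symm
    _ = (↑P : Set (Finset ℕ × Finset ℕ)).ncard := by rw [hbij.image_eq]
    _ = P.card := Set.ncard_coe_finset P
    _ = Nat.choose (n+1) i := card_P n i hi hin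
end

section
/- Splitting off the minimal set: let λ = Σ_j m_j ω_j with m_i > 0 and i minimal such that m_i ≠ 0. For s ∈ S(λ), let m_i^s be the 0-1 tuple supported on the minimal set M_i^s. Then m_i^s ∈ S(ω_i) and s - m_i^s ∈ S(λ - ω_i). -/
open Finset

/-- `R_i^s`: the indices `(j,k)` of roots in `R_i = {α_{j,k} : j ≤ i ≤ k}` with
`s_{j,k} ≠ 0`. -/
def RiSupp (n i : ℕ) (s : ℕ × ℕ → ℕ) : Set (ℕ × ℕ) :=
  {a | IsRoot n a.1 a.2 ∧ a.1 ≤ i ∧ i ≤ a.2 ∧ s a ≠ 0}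

/-- `M_i^s`: the set of minimal elements of `R_i^s` with respect to the
componentwise order `(j,k) ≤ (j',k') ↔ j ≤ j' ∧ k ≤ k'`. -/
def MinSet (n i : ℕ) (s : ℕ × ℕ → ℕ) : Set (ℕ × ℕ) :=
  {a ∈ RiSupp n i s | ∀ b ∈ RiSupp n i s, b.1 ≤ a.1 → b.2 ≤ a.2 → b = a}


namespace SplitOffAux


def R2 (x y : ℕ × ℕ) : Prop := (x.1 ≤ y.1 ∧ x.2 ≤ y.2) ∧ x.1 + x.2 < y.1 + y.2

instance : IsTrans (ℕ × ℕ) R2 :=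
  ⟨fun _ _ _ h g => ⟨⟨h.1.1.trans g.1.1, h.1.2.trans g.1.2⟩, h.2.trans g.2⟩⟩

lemma rootStep_r2 {x y : ℕ × ℕ} (h : RootStep x y) : R2 x y := by
  rcases h with h | h <;> subst h <;> exact ⟨⟨by simp, by simp⟩, by simp⟩

lemma chain_pairwise {L : List (ℕ × ℕ)} (h : L.Chain' RootStep) : L.Pairwise R2 :=
  List.isChain_iff_pairwise.mp (h.imp fun _ _ => rootStep_r2)

lemma nodup_of_pairwise {L : List (ℕ × ℕ)} (h : L.Pairwise R2) : L.Nodup :=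
  h.imp fun hab heq => by rw [heq] at hab; exact lt_irrefl _ hab.2

lemma pairwise_split {L A B : List (ℕ × ℕ)} {r x : ℕ × ℕ} (h : L.Pairwise R2)
    (hL : L = A ++ r :: B) (hx : x ∈ A) : R2 x r := by
  rw [List.pairwise_iff_forall_sublist] at h
  apply h; rw [hL]
  exact List.Sublist.append (List.singleton_sublist.mpr hx)
    ((List.nil_sublist B).cons₂ r)

lemma le_head {L : List (ℕ × ℕ)} (h : L.Pairwise R2) (hne : L ≠ []) {x} (hx : x ∈ L) :
    (L.head hne).1 ≤ x.1 ∧ (L.head hne).2 ≤ x.2 := by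
  rcases L with _ | ⟨c, T⟩
  · exact absurd rfl hne
  · simp only [List.head_cons]
    rcases List.mem_cons.mp hx with rfl | hx
    · exact ⟨le_refl _, le_refl _⟩
    · exact (List.rel_of_pairwise_cons h hx).1

lemma le_last {L : List (ℕ × ℕ)} (h : L.Pairwise R2) (hne : L ≠ []) {x} (hx : x ∈ L) :
    x.1 ≤ (L.getLast hne).1 ∧ x.2 ≤ (L.getLast hne).2 := by
  have hsplit := List.dropLast_append_getLast hne
  have hx' : x ∈ L.dropLast ++ [L.getLast hne] := by rw [hsplit]; exact hx
  rw [List.pairwise_iff_forall_sublist] at h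
  rcases List.mem_append.mp hx' with hx'' | hx''
  · have h2 : [x, L.getLast hne].Sublist (L.dropLast ++ [L.getLast hne]) :=
      List.Sublist.append (List.singleton_sublist.mpr hx'') (List.Sublist.refl _)
    have h3 : (L.dropLast ++ [L.getLast hne]).Sublist L := by rw [hsplit]
    exact (h (h2.trans h3)).1
  · rcases List.mem_singleton.mp hx'' with rfl
    exact ⟨le_refl _, le_refl _⟩

lemma le_sum_of_mem {f : ℕ × ℕ → ℕ} {l : List (ℕ × ℕ)} {x} (hx : x ∈ l) :
    f x ≤ (l.map f).sum :=
  List.single_le_sum (fun _ _ => Nat.zero_le _) _ (List.mem_map_of_mem (f := f) hx)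

lemma two_le_sum {f : ℕ × ℕ → ℕ} {l : List (ℕ × ℕ)} {x y} (hx : x ∈ l) (hy : y ∈ l)
    (hxy : x ≠ y) : f x + f y ≤ (l.map f).sum := by
  obtain ⟨u, v, rfl⟩ := List.append_of_mem hx
  simp only [List.map_append, List.sum_append, List.map_cons, List.sum_cons]
  rcases List.mem_append.mp hy with hyu | hyv
  · have := le_sum_of_mem (f := f) hyu
    omega
  · rcases List.mem_cons.mp hyv with rfl | hyv
    · exact absurd rfl hxy
    · have := le_sum_of_mem (f := f) hyv
      omega

lemma sum_le_one {f : ℕ × ℕ → ℕ} : ∀ (l : List (ℕ × ℕ)), l.Nodup →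
    (∀ a ∈ l, f a ≤ 1) → (∀ a ∈ l, ∀ b ∈ l, f a ≠ 0 → f b ≠ 0 → a = b) →
    (l.map f).sum ≤ 1
  | [], _, _, _ => by simp
  | x :: l, hnd, h1, h2 => by
    simp only [List.map_cons, List.sum_cons]
    by_cases hx : f x = 0
    · rw [hx, Nat.zero_add]
      exact sum_le_one l (List.nodup_cons.mp hnd).2
        (fun a ha => h1 a (List.mem_cons_of_mem _ ha))
        (fun a ha b hb => h2 a (List.mem_cons_of_mem _ ha) b (List.mem_cons_of_mem _ hb))
    · have hall : (l.map f).sum = 0 := by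
        apply List.sum_eq_zero
        intro v hv
        rcases List.mem_map.mp hv with ⟨a, ha, rfl⟩
        by_contra h0
        have := h2 x (List.mem_cons_self) a (List.mem_cons_of_mem _ ha) hx h0
        exact (List.nodup_cons.mp hnd).1 (this ▸ ha)
      rw [hall]
      simpa using h1 x (List.mem_cons_self)




lemma chain'_range' : ∀ (len a : ℕ), List.Chain' (fun x y : ℕ => y = x + 1) (List.range' a len)
  | 0, _ => List.isChain_nil
  | 1, _ => List.isChain_singleton _
  | (len+2), a => by
    rw [List.range'_succ, List.range'_succ]
    refine List.isChain_cons_cons.mpr ⟨rfl, ?_⟩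
    rw [← List.range'_succ]
    exact chain'_range' (len+1) (a+1)

lemma range'_getLast? : ∀ (len a : ℕ), len ≠ 0 → (List.range' a len).getLast? = some (a + len - 1)
  | 0, _, h => absurd rfl h
  | 1, a, _ => by simp
  | (len+2), a, _ => by
    rw [List.range'_succ, List.range'_succ, List.getLast?_cons_cons, ← List.range'_succ,
      range'_getLast? (len+1) (a+1) (by omega)]
    congr 1
    omega

def rowL (p a b : ℕ) : List (ℕ × ℕ) := (List.range' a (b + 1 - a)).map fun c => (p, c)
def colL (q a b : ℕ) : List (ℕ × ℕ) := (List.range' a (b + 1 - a)).map fun d => (d, q)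

lemma mem_rowL {p a b : ℕ} {x : ℕ × ℕ} : x ∈ rowL p a b ↔ x.1 = p ∧ a ≤ x.2 ∧ x.2 ≤ b := by
  simp only [rowL, List.mem_map, List.mem_range'_1]
  constructor
  · rintro ⟨c, hc, rfl⟩; exact ⟨rfl, hc.1, by omega⟩
  · rintro ⟨h1, h2, h3⟩
    exact ⟨x.2, ⟨h2, by omega⟩, by rw [← h1]⟩

lemma mem_colL {q a b : ℕ} {x : ℕ × ℕ} : x ∈ colL q a b ↔ x.2 = q ∧ a ≤ x.1 ∧ x.1 ≤ b := by
  simp only [colL, List.mem_map, List.mem_range'_1]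
  constructor
  · rintro ⟨c, hc, rfl⟩; exact ⟨rfl, hc.1, by omega⟩
  · rintro ⟨h1, h2, h3⟩
    exact ⟨x.1, ⟨h2, by omega⟩, by rw [← h1]⟩

lemma rowL_ne_nil {p a b : ℕ} (h : a ≤ b) : rowL p a b ≠ [] :=
  List.ne_nil_of_mem ((mem_rowL (x := (p, a))).mpr ⟨rfl, le_refl a, h⟩)

lemma colL_eq_nil {q a b : ℕ} (h : b < a) : colL q a b = [] := by
  have : b + 1 - a = 0 := by omega
  rw [colL, this]
  rfl

lemma head?_rowL {p a b : ℕ} (h : a ≤ b) : (rowL p a b).head? = some (p, a) := by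
  have h1 : b + 1 - a = (b - a) + 1 := by omega
  rw [rowL, h1, List.range'_succ]
  rfl

lemma head?_colL {q a b : ℕ} (h : a ≤ b) : (colL q a b).head? = some (a, q) := by
  have h1 : b + 1 - a = (b - a) + 1 := by omega
  rw [colL, h1, List.range'_succ]
  rfl

lemma getLast?_rowL {p a b : ℕ} (h : a ≤ b) : (rowL p a b).getLast? = some (p, b) := by
  rw [rowL, List.getLast?_map, range'_getLast? _ _ (by omega)]
  have : a + (b + 1 - a) - 1 = b := by omega
  rw [this]
  rfl

lemma getLast?_colL {q a b : ℕ} (h : a ≤ b) : (colL q a b).getLast? = some (b, q) := by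
  rw [colL, List.getLast?_map, range'_getLast? _ _ (by omega)]
  have : a + (b + 1 - a) - 1 = b := by omega
  rw [this]
  rfl

lemma chain'_rowL {p a b : ℕ} : List.Chain' RootStep (rowL p a b) := by
  rw [rowL]; simp only [List.Chain']; rw [List.isChain_map]
  exact (chain'_range' _ _).imp fun c d h => Or.inl (by rw [h])

lemma chain'_colL {q a b : ℕ} : List.Chain' RootStep (colL q a b) := by
  rw [colL]; simp only [List.Chain']; rw [List.isChain_map]
  exact (chain'_range' _ _).imp fun c d h => Or.inr (by rw [h])




lemma master0 {n : ℕ} {m : ℕ → ℕ} {s : ℕ × ℕ → ℕ} (hs : InS n m s)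
    {L : List (ℕ × ℕ)} (hne : L ≠ [])
    (hroot : ∀ x ∈ L, IsRoot n x.1 x.2) (hch : L.Chain' RootStep)
    (hhead : (L.head hne).1 = (L.head hne).2) :
    (L.map s).sum ≤ ∑ l ∈ Finset.Icc (L.head hne).1 (L.getLast hne).2, m l := by
  obtain ⟨hw1, hw2, hw3⟩ : IsRoot n (L.getLast hne).1 (L.getLast hne).2 :=
    hroot _ (List.getLast_mem hne)
  set w := L.getLast hne with hwdef
  set C := colL w.2 (w.1 + 1) w.2 with hC
  have hCroot : ∀ x ∈ C, IsRoot n x.1 x.2 := by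
    intro x hx
    rw [hC, mem_colL] at hx
    exact ⟨by omega, by omega, by omega⟩
  have hh : (L ++ C).head? = some (L.head hne) := by
    rw [List.head?_append, List.head?_eq_head hne]
    rfl
  have hG : (L ++ C).getLast? = some (w.2, w.2) := by
    rw [List.getLast?_append]
    by_cases hww : w.1 = w.2
    · rw [hC, colL_eq_nil (by omega)]
      simp only [List.getLast?_nil, Option.or_none ]
      rw [List.getLast?_eq_getLast hne, ← hwdef]
      exact congrArg some (Prod.ext hww rfl)
    · rw [hC, getLast?_colL (by omega)]
      rfl
  have hL' : IsDyckPath n (L ++ C) := by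
    refine ⟨by simp [hne], ?_, ?_, ?_, ?_⟩
    · intro x hx
      rcases List.mem_append.mp hx with h | h
      exacts [hroot x h, hCroot x h]
    · rw [List.head!_of_head? hh]; exact hhead
    · rw [List.getLast!_of_getLast? hG]
    · simp only [List.Chain']; rw [List.isChain_append]
      refine ⟨hch, chain'_colL, ?_⟩
      intro x hx y hy
      rw [List.getLast?_eq_getLast hne, ← hwdef] at hx
      simp only [Option.mem_def, Option.some.injEq] at hx
      subst hx
      by_cases hww : w.1 = w.2
      · rw [hC, colL_eq_nil (by omega)] at hy
        simp at hy
      · rw [hC, head?_colL (by omega)] at hy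
        simp only [Option.mem_def, Option.some.injEq] at hy
        subst hy
        exact Or.inr rfl
  have hb := hs.2 _ hL'
  rw [List.head!_of_head? hh, List.getLast!_of_getLast? hG] at hb
  have hsum : (L.map s).sum ≤ ((L ++ C).map s).sum := by
    rw [List.map_append, List.sum_append]
    exact Nat.le_add_right _ _
  exact le_trans hsum hb




lemma getLast?_cons_append {u : ℕ × ℕ} {B : List (ℕ × ℕ)} :
    (u :: B).getLast? = B.getLast?.or (some u) := by
  have : u :: B = [u] ++ B := rfl
  rw [this, List.getLast?_append]
  rfl

lemma master {n : ℕ} {m : ℕ → ℕ} {s : ℕ × ℕ → ℕ} (hs : InS n m s) {u : ℕ × ℕ}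
    {B : List (ℕ × ℕ)}
    (hroot : ∀ x ∈ u :: B, IsRoot n x.1 x.2) (hch : (u :: B).Chain' RootStep)
    {p' q' : ℕ} (hroot' : IsRoot n p' q') (h1 : p' ≤ u.1) (h2 : q' ≤ u.2) (h3 : u.1 ≤ q')
    (hnequ : (p', q') ≠ u) :
    s (p', q') + s u + (B.map s).sum ≤
      ∑ l ∈ Finset.Icc p' (((u :: B).getLast (List.cons_ne_nil u B)).2), m l := by
  obtain ⟨hu1, hu2, hu3⟩ : IsRoot n u.1 u.2 := hroot u (List.mem_cons_self)
  obtain ⟨hr1, hr2, hr3⟩ := hroot'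
  set X := rowL p' p' u.2 ++ colL u.2 (p' + 1) u.1 with hX
  have hrowne : rowL p' p' u.2 ≠ [] := rowL_ne_nil (by omega)
  have hXne : X ≠ [] := by
    rw [hX]
    intro hc
    rcases List.append_eq_nil_iff.mp hc with ⟨hc1, _⟩
    exact hrowne hc1
  have hXlast : X.getLast? = some u := by
    rw [hX, List.getLast?_append]
    by_cases hpu : p' = u.1
    · rw [colL_eq_nil (by omega), getLast?_rowL (by omega)]
      simp only [List.getLast?_nil, Option.or_none]
      exact congrArg some (Prod.ext hpu rfl)
    · rw [getLast?_colL (by omega)]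
      exact congrArg some (Prod.ext rfl rfl)
  have huX : u ∈ X := by
    rw [hX, List.mem_append]
    by_cases hpu : p' = u.1
    · exact Or.inl (mem_rowL.mpr ⟨hpu.symm, by omega, le_refl _⟩)
    · exact Or.inr (mem_colL.mpr ⟨rfl, by omega, le_refl _⟩)
  have hrX : (p', q') ∈ X := by
    rw [hX, List.mem_append]
    exact Or.inl (mem_rowL.mpr ⟨rfl, hr2, h2⟩)
  have hchB : (u :: B).Chain' RootStep := hch
  have hchcons := List.isChain_cons.mp hch
  have hLne : X ++ B ≠ [] := by
    intro hc
    rcases List.append_eq_nil_iff.mp hc with ⟨hc1, _⟩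
    exact hXne hc1
  have hhd : (X ++ B).head? = some (p', p') := by
    rw [List.head?_append, hX, List.head?_append, head?_rowL (by omega)]
    rfl
  have hlst : (X ++ B).getLast? = (u :: B).getLast? := by
    rw [List.getLast?_append, hXlast, getLast?_cons_append]
  -- chain of X ++ B
  have hchain : (X ++ B).Chain' RootStep := by
    simp only [List.Chain']; rw [List.isChain_append]
    refine ⟨?_, hchcons.2, ?_⟩
    · rw [hX, List.isChain_append]
      refine ⟨chain'_rowL, chain'_colL, ?_⟩
      intro x hx y hy
      rw [getLast?_rowL (by omega)] at hx
      simp only [Option.mem_def, Option.some.injEq] at hx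
      subst hx
      by_cases hpu : p' = u.1
      · rw [colL_eq_nil (by omega)] at hy
        simp at hy
      · rw [head?_colL (by omega)] at hy
        simp only [Option.mem_def, Option.some.injEq] at hy
        subst hy
        exact Or.inr rfl
    · intro x hx y hy
      rw [hXlast] at hx
      simp only [Option.mem_def, Option.some.injEq] at hx
      subst hx
      exact hchcons.1 y hy
  have hroots : ∀ x ∈ X ++ B, IsRoot n x.1 x.2 := by
    intro x hx
    rcases List.mem_append.mp hx with h | h
    · rw [hX, List.mem_append] at h
      rcases h with h | h
      · rw [mem_rowL] at h
        exact ⟨by omega, by omega, by omega⟩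
      · rw [mem_colL] at h
        exact ⟨by omega, by omega, by omega⟩
    · exact hroot x (List.mem_cons_of_mem _ h)
  have hdiag : ((X ++ B).head hLne).1 = ((X ++ B).head hLne).2 := by
    have := List.head?_eq_head hLne
    rw [this] at hhd
    simp only [Option.some.injEq] at hhd
    rw [hhd]
  have hbound := master0 hs hLne hroots hchain hdiag
  have hhead1 : ((X ++ B).head hLne).1 = p' := by
    have := List.head?_eq_head hLne
    rw [this] at hhd
    simp only [Option.some.injEq] at hhd
    rw [hhd]
  have hlast2 : ((X ++ B).getLast hLne).2 = ((u :: B).getLast (List.cons_ne_nil u B)).2 := by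
    have e1 := List.getLast?_eq_getLast hLne
    have e2 := List.getLast?_eq_getLast (List.cons_ne_nil u B)
    rw [e1, e2] at hlst
    simp only [Option.some.injEq] at hlst
    rw [hlst]
  rw [hhead1, hlast2] at hbound
  refine le_trans ?_ hbound
  rw [List.map_append, List.sum_append]
  exact Nat.add_le_add_right (two_le_sum hrX huX hnequ) _

lemma master' {n : ℕ} {m : ℕ → ℕ} {s : ℕ × ℕ → ℕ} (hs : InS n m s) {u : ℕ × ℕ}
    {B : List (ℕ × ℕ)}
    (hroot : ∀ x ∈ u :: B, IsRoot n x.1 x.2) (hch : (u :: B).Chain' RootStep) :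
    ((u :: B).map s).sum ≤
      ∑ l ∈ Finset.Icc u.1 (((u :: B).getLast (List.cons_ne_nil u B)).2), m l := by
  obtain ⟨hu1, hu2, hu3⟩ : IsRoot n u.1 u.2 := hroot u (List.mem_cons_self)
  by_cases hu : u.1 = u.2
  · have hdiag : ((u :: B).head (List.cons_ne_nil u B)).1 =
        ((u :: B).head (List.cons_ne_nil u B)).2 := by
      simpa using hu
    have := master0 hs (List.cons_ne_nil u B) hroot hch hdiag
    simpa using this
  · have hne : ((u.1 : ℕ), u.1) ≠ u := by
      intro hc
      rw [← hc] at hu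
      exact hu rfl
    have := master hs hroot hch (p' := u.1) (q' := u.1)
      ⟨hu1, le_refl _, by omega⟩ (le_refl _) hu2 (le_refl _) hne
    simp only [List.map_cons, List.sum_cons]
    omega

lemma hook_bound {n : ℕ} {m : ℕ → ℕ} {s : ℕ × ℕ → ℕ} (hs : InS n m s)
    {p q : ℕ} (h : IsRoot n p q) :
    s (p, q) ≤ ∑ l ∈ Finset.Icc p q, m l := by
  have := master' hs (u := (p, q)) (B := [])
    (by intro x hx; simp at hx; subst hx; exact h) (List.isChain_singleton _)
  simpa using this

lemma exists_min {n i : ℕ} {s : ℕ × ℕ → ℕ} : ∀ (N : ℕ) (x : ℕ × ℕ), x.1 + x.2 ≤ N →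
    x ∈ RiSupp n i s → ∃ y ∈ MinSet n i s, y.1 ≤ x.1 ∧ y.2 ≤ x.2
  | 0, x, hN, hx => by
    exact absurd hN (by have := hx.1.1; omega)
  | (N+1), x, hN, hx => by
    by_cases hmem : x ∈ MinSet n i s
    · exact ⟨x, hmem, le_refl _, le_refl _⟩
    · have hex : ∃ b ∈ RiSupp n i s, b.1 ≤ x.1 ∧ b.2 ≤ x.2 ∧ b ≠ x := by
        by_contra hc
        push_neg at hc
        exact hmem ⟨hx, hc⟩
      obtain ⟨b, hb, h1, h2, hbne⟩ := hex
      have hlt : b.1 + b.2 < x.1 + x.2 := by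
        rcases Nat.lt_or_ge (b.1 + b.2) (x.1 + x.2) with h | h
        · exact h
        · exact absurd (Prod.ext (by omega) (by omega)) hbne
      obtain ⟨y, hy, g1, g2⟩ := exists_min N b (by omega) hb
      exact ⟨y, hy, g1.trans h1, g2.trans h2⟩



end SplitOffAux

namespace SplitOffAux

lemma getLast?_append_cons (A B : List (ℕ × ℕ)) (r : ℕ × ℕ) :
    (A ++ r :: B).getLast? = (r :: B).getLast? := by
  rw [List.getLast?_append]
  obtain ⟨y, hy⟩ : ∃ y, (r :: B).getLast? = some y :=
    ⟨_, List.getLast?_eq_getLast (List.cons_ne_nil r B)⟩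
  rw [hy]
  rfl

end SplitOffAux

/-- Splitting off the minimal set: let `λ = Σ_j m_j ω_j`
with `i` minimal such that `m_i ≠ 0`.  For `s ∈ S(λ)`, the 0-1 tuple
`t = m_i^s` supported on the minimal set `M_i^s` satisfies `t ∈ S(ω_i)`
and `s - t ∈ S(λ - ω_i)`. -/
theorem split_off_minset (n i : ℕ) (m : ℕ → ℕ) (s t : ℕ × ℕ → ℕ)
    (hi : 1 ≤ i) (hin : i ≤ n) (hmi : m i ≠ 0) (hmin : ∀ l, l < i → m l = 0)
    (hs : InS n m s)
    (ht1 : ∀ a ∈ MinSet n i s, t a = 1) (ht0 : ∀ a ∉ MinSet n i s, t a = 0) :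
    InS n (fun l => if l = i then 1 else 0) t ∧
    InS n (fun l => m l - (if l = i then 1 else 0)) (fun a => s a - t a) := by
  classical
  have hlow : ∀ p q : ℕ, q < i → s (p, q) = 0 := by
    intro p q hq
    by_cases hr : IsRoot n p q
    · have h1 := SplitOffAux.hook_bound hs hr
      have h2 : ∑ l ∈ Finset.Icc p q, m l = 0 :=
        Finset.sum_eq_zero fun l hl => hmin l (by
          rcases Finset.mem_Icc.mp hl with ⟨_, h⟩; omega)
      omega
    · exact hs.1 p q hr
  have htle : ∀ a : ℕ × ℕ, t a ≤ 1 := by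
    intro a
    by_cases h : a ∈ MinSet n i s
    · rw [ht1 a h]
    · rw [ht0 a h]; omega
  have hmi1 : 1 ≤ m i := Nat.one_le_iff_ne_zero.mpr hmi
  constructor
  · -- t ∈ S(ω_i)
    refine ⟨fun p q hnr => ht0 _ (fun hc => hnr hc.1.1), ?_⟩
    intro L hL
    obtain ⟨hne, hroots, hh, hl, hch⟩ := hL
    have hpw := SplitOffAux.chain_pairwise hch
    have hnd := SplitOffAux.nodup_of_pairwise hpw
    have hh! : L.head! = L.head hne := List.head!_of_head? (List.head?_eq_head hne)
    have hl! : L.getLast! = L.getLast hne :=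
      List.getLast!_of_getLast? (List.getLast?_eq_getLast hne)
    rw [hh!] at hh
    rw [hl!] at hl
    obtain ⟨a, hha⟩ : ∃ a : ℕ, L.head hne = (a, a) := ⟨(L.head hne).1, Prod.ext rfl hh.symm⟩
    obtain ⟨b, hlb⟩ : ∃ b : ℕ, L.getLast hne = (b, b) := ⟨(L.getLast hne).1, Prod.ext rfl hl.symm⟩
    have hha1 : (L.head hne).1 = a := by rw [hha]
    have hlb1 : (L.getLast hne).1 = b := by rw [hlb]
    rw [hh!, hl!, hha1, hlb1]
    rw [Finset.sum_ite_eq' (Finset.Icc a b) i (fun _ => 1)]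
    by_cases hex : ∃ x ∈ L, x ∈ MinSet n i s
    · obtain ⟨x, hxL, hxM⟩ := hex
      have hbd1 := SplitOffAux.le_head hpw hne hxL
      have hbd2 := SplitOffAux.le_last hpw hne hxL
      have hax : a ≤ x.1 := hha1 ▸ hbd1.1
      have hxb : x.2 ≤ b := by
        have h2 : (L.getLast hne).2 = b := by rw [hlb]
        exact h2 ▸ hbd2.2
      have hx1 : x.1 ≤ i := hxM.1.2.1
      have hx2 : i ≤ x.2 := hxM.1.2.2.1
      rw [if_pos (Finset.mem_Icc.mpr ⟨by omega, by omega⟩)]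
      apply SplitOffAux.sum_le_one L hnd (fun y _ => htle y)
      intro u hu v hv hu0 hv0
      have huM : u ∈ MinSet n i s := by
        by_contra hc; exact hu0 (ht0 u hc)
      have hvM : v ∈ MinSet n i s := by
        by_contra hc; exact hv0 (ht0 v hc)
      by_contra hne'
      have hpw2 : L.Pairwise (fun x y => SplitOffAux.R2 x y ∨ SplitOffAux.R2 y x) :=
        hpw.imp fun h => Or.inl h
      have hcomp : SplitOffAux.R2 u v ∨ SplitOffAux.R2 v u := by
        haveI : Std.Symm (fun x y => SplitOffAux.R2 x y ∨ SplitOffAux.R2 y x) :=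
          ⟨fun _ _ h => h.symm⟩
        exact hpw2.forall hu hv hne'
      rcases hcomp with h | h
      · exact hne' (hvM.2 u huM.1 h.1.1 h.1.2)
      · exact hne' ((huM.2 v hvM.1 h.1.1 h.1.2).symm)
    · have hz : (L.map t).sum = 0 := List.sum_eq_zero (by
        intro v hv
        rcases List.mem_map.mp hv with ⟨x, hx, rfl⟩
        exact ht0 x fun hc => hex ⟨x, hx, hc⟩)
      rw [hz]
      exact Nat.zero_le _
  · -- s - t ∈ S(λ - ω_i)
    refine ⟨fun p q hnr => by simp [hs.1 p q hnr], ?_⟩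
    intro L hL
    have hLs := hs.2 L hL
    obtain ⟨hne, hroots, hh, hl, hch⟩ := hL
    have hpw := SplitOffAux.chain_pairwise hch
    have hh! : L.head! = L.head hne := List.head!_of_head? (List.head?_eq_head hne)
    have hl! : L.getLast! = L.getLast hne :=
      List.getLast!_of_getLast? (List.getLast?_eq_getLast hne)
    rw [hh!] at hh
    rw [hl!] at hl
    obtain ⟨a, hha⟩ : ∃ a : ℕ, L.head hne = (a, a) := ⟨(L.head hne).1, Prod.ext rfl hh.symm⟩
    obtain ⟨b, hlb⟩ : ∃ b : ℕ, L.getLast hne = (b, b) := ⟨(L.getLast hne).1, Prod.ext rfl hl.symm⟩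
    have hha1 : (L.head hne).1 = a := by rw [hha]
    have hlb1 : (L.getLast hne).1 = b := by rw [hlb]
    rw [hh!, hl!, hha1, hlb1]
    rw [hh!, hl!, hha1, hlb1] at hLs
    by_cases hiin : i ∈ Finset.Icc a b
    · -- i ∈ [a, b]
      obtain ⟨hai, hib⟩ := Finset.mem_Icc.mp hiin
      have hRHS : ∑ l ∈ Finset.Icc a b, (m l - if l = i then 1 else 0)
          = (∑ l ∈ Finset.Icc a b, m l) - 1 := by
        have e1 : ∑ l ∈ (Finset.Icc a b).erase i, (m l - if l = i then 1 else 0)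
            = ∑ l ∈ (Finset.Icc a b).erase i, m l :=
          Finset.sum_congr rfl fun l hl' => by
            rw [if_neg (Finset.ne_of_mem_erase hl'), Nat.sub_zero]
        have e2 := Finset.add_sum_erase (Finset.Icc a b)
          (fun l => m l - if l = i then 1 else 0) hiin
        have e3 := Finset.add_sum_erase (Finset.Icc a b) m hiin
        simp only [eq_self_iff_true, if_true] at e2
        rw [e1] at e2
        omega
      rw [hRHS]
      have hsumlow : ∀ c, c ≤ i → ∑ l ∈ Finset.Icc c b, m l = ∑ l ∈ Finset.Icc i b, m l :=
        fun c hc => (Finset.sum_subset (Finset.Icc_subset_Icc hc (le_refl b))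
          (fun x hx hnx => hmin x (by
            simp only [Finset.mem_Icc] at hx hnx; omega))).symm
      have hsum2 : ∑ l ∈ Finset.Icc i b, m l = m i + ∑ l ∈ Finset.Icc (i + 1) b, m l := by
        have e := Finset.add_sum_erase (Finset.Icc i b) m
          (Finset.mem_Icc.mpr ⟨le_refl i, hib⟩)
        rw [Finset.Icc_erase_left, ← Finset.Icc_add_one_left_eq_Ioc] at e
        exact e.symm
      by_cases hex : ∃ x ∈ L, x ∈ MinSet n i s
      · -- a minimal element lies on the path
        obtain ⟨x, hxL, hxM⟩ := hex
        obtain ⟨u, v, rfl⟩ := List.append_of_mem hxL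
        simp only [List.map_append, List.map_cons, List.sum_append, List.sum_cons] at hLs ⊢
        have h1 : (u.map fun a => s a - t a).sum ≤ (u.map s).sum :=
          List.sum_le_sum fun y _ => Nat.sub_le _ _
        have h2 : (v.map fun a => s a - t a).sum ≤ (v.map s).sum :=
          List.sum_le_sum fun y _ => Nat.sub_le _ _
        have hx1 : t x = 1 := ht1 x hxM
        have hxs : s x ≠ 0 := hxM.1.2.2.2
        omega
      · -- no minimal element on the path
        have hmapeq : (L.map fun a => s a - t a) = L.map s :=
          List.map_congr_left fun x hxL => by
            rw [ht0 x fun hc => hex ⟨x, hxL, hc⟩, Nat.sub_zero]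
        rw [hmapeq]
        by_cases hr : ∃ r ∈ L, r ∈ RiSupp n i s
        · -- Case B : path meets R_i^s
          set Q : ℕ × ℕ → Bool := fun x => !(decide (x.1 ≤ i ∧ i ≤ x.2 ∧ s x ≠ 0)) with hQ
          have hQtrue : ∀ x, Q x = true ↔ ¬(x.1 ≤ i ∧ i ≤ x.2 ∧ s x ≠ 0) := by
            intro x
            simp only [hQ, Bool.not_eq_true', decide_eq_false_iff_not]
          have hQfalse : ∀ x, Q x = false ↔ (x.1 ≤ i ∧ i ≤ x.2 ∧ s x ≠ 0) := by
            intro x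
            simp only [hQ, Bool.not_eq_false', decide_eq_true_eq]
          set A := L.takeWhile Q with hA
          set D := L.dropWhile Q with hD
          have htd : A ++ D = L := List.takeWhile_append_dropWhile
          obtain ⟨r, hrL, hrR⟩ := hr
          have hDne : D ≠ [] := by
            intro hc
            have hrA : r ∈ A := by
              rw [← htd, hc, List.append_nil] at hrL
              exact hrL
            have hQr := List.mem_takeWhile_imp (hA ▸ hrA)
            rw [hQtrue] at hQr
            exact hQr ⟨hrR.2.1, hrR.2.2.1, hrR.2.2.2⟩
          rcases hDsplit : D with _ | ⟨r₀, B⟩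
          · exact absurd hDsplit hDne
          rw [hDsplit] at htd
          have hr₀Q : Q r₀ = false := by
            have h0 := List.head?_dropWhile_not Q L
            have hh0 : (L.dropWhile Q).head? = some r₀ := by
              rw [← hD, hDsplit]; rfl
            rw [hh0] at h0
            exact h0
          rw [hQfalse] at hr₀Q
          have hr₀L : r₀ ∈ L := by
            rw [← htd]
            exact List.mem_append_right A (List.mem_cons_self)
          have hr₀Supp : r₀ ∈ RiSupp n i s :=
            ⟨hroots r₀ hr₀L, hr₀Q.1, hr₀Q.2.1, hr₀Q.2.2⟩
          have hr₀nM : r₀ ∉ MinSet n i s := fun hc => hex ⟨r₀, hr₀L, hc⟩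
          obtain ⟨r', hr'M, hle1, hle2⟩ :=
            SplitOffAux.exists_min (r₀.1 + r₀.2) r₀ (le_refl _) hr₀Supp
          have hner : r' ≠ r₀ := fun hc => hr₀nM (hc ▸ hr'M)
          have hchAB : (A ++ r₀ :: B).Chain' RootStep := by rw [htd]; exact hch
          have hchB : (r₀ :: B).Chain' RootStep := (List.isChain_append.mp hchAB).2.1
          have hrootB : ∀ x ∈ r₀ :: B, IsRoot n x.1 x.2 := fun x hx =>
            hroots x (by rw [← htd]; exact List.mem_append_right A hx)
          have hmaster := SplitOffAux.master hs hrootB hchB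
            (p' := r'.1) (q' := r'.2) hr'M.1.1 hle1 hle2
            (le_trans hr₀Supp.2.1 hr'M.1.2.2.1)
            (by rw [Prod.mk.eta]; exact hner)
          rw [Prod.mk.eta] at hmaster
          -- identify the last entry
          have hgl : ((r₀ :: B).getLast (List.cons_ne_nil r₀ B)).2 = b := by
            have e1 := List.getLast?_eq_getLast (List.cons_ne_nil r₀ B)
            have e2 := List.getLast?_eq_getLast hne
            have e3 : (A ++ r₀ :: B).getLast? = L.getLast? := by rw [htd]
            rw [SplitOffAux.getLast?_append_cons, e1, e2, hlb] at e3
            simp only [Option.some.injEq] at e3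
            rw [e3]
          rw [hgl] at hmaster
          have hsr' : 1 ≤ s r' := Nat.one_le_iff_ne_zero.mpr hr'M.1.2.2.2
          have hAzero : (A.map s).sum = 0 := by
            apply List.sum_eq_zero
            intro w hw
            obtain ⟨x, hxA, rfl⟩ := List.mem_map.mp hw
            have hxQ := List.mem_takeWhile_imp (hA ▸ hxA)
            rw [hQtrue] at hxQ
            have hxr₀ : SplitOffAux.R2 x r₀ := SplitOffAux.pairwise_split hpw htd.symm hxA
            by_cases hx2 : x.2 < i
            · have := hlow x.1 x.2 hx2
              rwa [Prod.mk.eta] at this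
            · by_contra hsx
              exact hxQ ⟨le_trans hxr₀.1.1 hr₀Supp.2.1, by omega, hsx⟩
          have hLsplit : (L.map s).sum = (A.map s).sum + (s r₀ + (B.map s).sum) := by
            rw [← htd, List.map_append, List.sum_append, List.map_cons, List.sum_cons]
          have hbig : ∑ l ∈ Finset.Icc r'.1 b, m l = ∑ l ∈ Finset.Icc i b, m l :=
            hsumlow r'.1 (le_trans hle1 hr₀Supp.2.1)
          have hsma : ∑ l ∈ Finset.Icc a b, m l = ∑ l ∈ Finset.Icc i b, m l :=
            hsumlow a hai
          omega
        · -- Case A : path misses R_i^s entirely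
          push_neg at hr
          set Q : ℕ × ℕ → Bool := fun x => decide (x.1 ≤ i) with hQ
          have hQtrue : ∀ x, Q x = true ↔ x.1 ≤ i := by intro x; simp [hQ]
          have hQfalse : ∀ x, Q x = false ↔ i < x.1 := by
            intro x; simp [hQ]
          set A := L.takeWhile Q with hA
          set D := L.dropWhile Q with hD
          have htd : A ++ D = L := List.takeWhile_append_dropWhile
          have hAzero : (A.map s).sum = 0 := by
            apply List.sum_eq_zero
            intro w hw
            obtain ⟨x, hxA, rfl⟩ := List.mem_map.mp hw
            have hxQ := List.mem_takeWhile_imp (hA ▸ hxA)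
            rw [hQtrue] at hxQ
            have hxL : x ∈ L := by
              rw [← htd]; exact List.mem_append_left D hxA
            by_cases hx2 : x.2 < i
            · have := hlow x.1 x.2 hx2
              rwa [Prod.mk.eta] at this
            · by_contra hsx
              exact hr x hxL ⟨hroots x hxL, hxQ, by omega, hsx⟩
          have hsma : ∑ l ∈ Finset.Icc a b, m l = ∑ l ∈ Finset.Icc i b, m l :=
            hsumlow a hai
          rcases hDsplit : D with _ | ⟨y, B⟩
          · have hLA : L = A := by rw [← htd, hDsplit, List.append_nil]
            have : (L.map s).sum = 0 := by rw [hLA]; exact hAzero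
            omega
          rw [hDsplit] at htd
          have hyQ : Q y = false := by
            have h0 := List.head?_dropWhile_not Q L
            have hh0 : (L.dropWhile Q).head? = some y := by
              rw [← hD, hDsplit]; rfl
            rw [hh0] at h0
            exact h0
          rw [hQfalse] at hyQ
          have hAne : A ≠ [] := by
            intro hc
            rw [hc, List.nil_append] at htd
            have h2 : L.head? = some y := by rw [← htd]; rfl
            have h3 := List.head?_eq_head hne
            rw [h3, hha] at h2
            simp only [Option.some.injEq] at h2
            have : y.1 = a := by rw [← h2]
            omega
          have hchAB : (A ++ y :: B).Chain' RootStep := by rw [htd]; exact hch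
          obtain ⟨hchA, hchB, hjunc⟩ := List.isChain_append.mp hchAB
          obtain ⟨z, hz⟩ : ∃ z, A.getLast hAne = z := ⟨_, rfl⟩
          have hzA : z ∈ A := by rw [← hz]; exact List.getLast_mem hAne
          have hzQ := List.mem_takeWhile_imp (hA ▸ hzA)
          rw [hQtrue] at hzQ
          have hstep : RootStep z y :=
            hjunc _ (by rw [List.getLast?_eq_getLast hAne, hz]; exact rfl) y rfl
          have hy1 : y.1 = i + 1 := by
            rcases hstep with h | h
            · have hy1' : y.1 = z.1 := by rw [h]
              omega
            · have hy1' : y.1 = z.1 + 1 := by rw [h]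
              omega
          have hrootB : ∀ x ∈ y :: B, IsRoot n x.1 x.2 := fun x hx =>
            hroots x (by rw [← htd]; exact List.mem_append_right A hx)
          have hmaster := SplitOffAux.master' hs hrootB hchB
          have hgl : ((y :: B).getLast (List.cons_ne_nil y B)).2 = b := by
            have e1 := List.getLast?_eq_getLast (List.cons_ne_nil y B)
            have e2 := List.getLast?_eq_getLast hne
            have e3 : (A ++ y :: B).getLast? = L.getLast? := by rw [htd]
            rw [SplitOffAux.getLast?_append_cons, e1, e2, hlb] at e3
            simp only [Option.some.injEq] at e3
            rw [e3]
          rw [hgl, hy1] at hmaster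
          have hLsplit : (L.map s).sum = (A.map s).sum + ((y :: B).map s).sum := by
            rw [← htd, List.map_append, List.sum_append]
          omega
    · -- i ∉ [a, b] : nothing changes
      have hRHS : ∑ l ∈ Finset.Icc a b, (m l - if l = i then 1 else 0)
          = ∑ l ∈ Finset.Icc a b, m l :=
        Finset.sum_congr rfl fun l hl' => by
          have hli : l ≠ i := by rintro rfl; exact hiin hl'
          rw [if_neg hli, Nat.sub_zero]
      rw [hRHS]
      exact le_trans (List.sum_le_sum fun y _ => Nat.sub_le _ _) hLs
end

section
/- Every element s of S(λ), for λ = Σ k_i ω_i, decomposes as a sum s = Σ_{i=1}^n Σ_{j=1}^{k_i} m_{i,j} with each m_{i,j} ∈ S(ω_i); i.e., the polytope family P(λ) has the integral Minkowski sum property with respect to fundamental weights. -/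
open Finset

/-! ### Auxiliary list lemmas -/

namespace FFLV

/-- the row list `[(p,a),(p,a+1),…,(p,b)]` -/
def rowL (p a b : ℕ) : List (ℕ × ℕ) := (List.range' a (b + 1 - a)).map fun y => (p, y)

/-- the column list `[(a,q),(a+1,q),…,(b,q)]` -/
def colL (q a b : ℕ) : List (ℕ × ℕ) := (List.range' a (b + 1 - a)).map fun x => (x, q)

lemma mem_rowL {p a b : ℕ} {r : ℕ × ℕ} :
    r ∈ rowL p a b ↔ r.1 = p ∧ a ≤ r.2 ∧ r.2 ≤ b := by
  unfold rowL
  simp only [List.mem_map, List.mem_range'_1]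
  constructor
  · rintro ⟨y, ⟨h1, h2⟩, rfl⟩; exact ⟨rfl, h1, by omega⟩
  · rintro ⟨h0, h1, h2⟩; exact ⟨r.2, ⟨h1, by omega⟩, by rw [← h0]⟩

lemma mem_colL {q a b : ℕ} {r : ℕ × ℕ} :
    r ∈ colL q a b ↔ r.2 = q ∧ a ≤ r.1 ∧ r.1 ≤ b := by
  unfold colL
  simp only [List.mem_map, List.mem_range'_1]
  constructor
  · rintro ⟨x, ⟨h1, h2⟩, rfl⟩; exact ⟨rfl, h1, by omega⟩
  · rintro ⟨h0, h1, h2⟩; exact ⟨r.1, ⟨h1, by omega⟩, by rw [← h0]⟩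

lemma chain'_map_range' (f : ℕ → ℕ × ℕ) (hf : ∀ k, RootStep (f k) (f (k+1))) :
    ∀ (a len : ℕ), List.Chain' RootStep ((List.range' a len).map f)
  | _, 0 => by simp [List.Chain']
  | a, 1 => by simp [List.Chain']
  | a, (len+2) => by
      rw [List.range'_succ]
      have ih := chain'_map_range' f hf (a+1) (len+1)
      rw [List.range'_succ] at ih ⊢
      simp only [List.map_cons] at ih ⊢
      exact List.IsChain.cons_cons (hf a) ih

lemma chain'_rowL (p a b : ℕ) : List.Chain' RootStep (rowL p a b) :=
  chain'_map_range' _ (fun k => Or.inl rfl) a (b + 1 - a)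

lemma chain'_colL (q a b : ℕ) : List.Chain' RootStep (colL q a b) :=
  chain'_map_range' _ (fun k => Or.inr rfl) a (b + 1 - a)

lemma rowL_ne_nil {p a b : ℕ} (h : a ≤ b) : rowL p a b ≠ [] := by
  unfold rowL
  simp only [ne_eq, List.map_eq_nil_iff, List.range'_eq_nil_iff]
  omega

lemma head?_rowL {p a b : ℕ} (h : a ≤ b) : (rowL p a b).head? = some (p, a) := by
  unfold rowL
  obtain ⟨k, hk⟩ : ∃ k, b + 1 - a = k + 1 := ⟨b - a, by omega⟩
  rw [hk, List.range'_succ]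
  simp

lemma getLast?_rowL {p a b : ℕ} (h : a ≤ b) : (rowL p a b).getLast? = some (p, b) := by
  unfold rowL
  obtain ⟨k, hk⟩ : ∃ k, b + 1 - a = k + 1 := ⟨b - a, by omega⟩
  have hb : b = a + k := by omega
  rw [hk, List.range'_concat, List.map_append]
  simp [hb]

lemma getLast?_colL {q a b : ℕ} (h : a ≤ b) : (colL q a b).getLast? = some (b, q) := by
  unfold colL
  obtain ⟨k, hk⟩ : ∃ k, b + 1 - a = k + 1 := ⟨b - a, by omega⟩
  have hb : b = a + k := by omega
  rw [hk, List.range'_concat, List.map_append]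
  simp [hb]

lemma colL_nil {q a b : ℕ} (h : b < a) : colL q a b = [] := by
  unfold colL
  have : b + 1 - a = 0 := by omega
  simp [this]

end FFLV
namespace FFLV

/-- strict increase relation implied by `RootStep` transitively -/
def RLT (r r' : ℕ × ℕ) : Prop := r.1 ≤ r'.1 ∧ r.2 ≤ r'.2 ∧ r.1 + r.2 < r'.1 + r'.2

lemma rlt_trans : Transitive RLT := by
  rintro a b c ⟨h1, h2, h3⟩ ⟨h4, h5, h6⟩; exact ⟨by omega, by omega, by omega⟩

lemma pairwise_rlt {L : List (ℕ × ℕ)} (h : L.Chain' RootStep) : L.Pairwise RLT := by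
  have h' : L.Chain' RLT := by
    refine List.IsChain.imp ?_ h
    rintro a b (rfl | rfl) <;> exact ⟨by omega, by omega, by omega⟩
  haveI : IsTrans (ℕ × ℕ) RLT := ⟨fun a b c hab hbc => rlt_trans hab hbc⟩
  exact List.isChain_iff_pairwise.mp h'

lemma head!_le_of_mem {L : List (ℕ × ℕ)} (h : L.Chain' RootStep) {x : ℕ × ℕ}
    (hx : x ∈ L) : L.head!.1 ≤ x.1 ∧ L.head!.2 ≤ x.2 := by
  have hp := pairwise_rlt h
  cases L with
  | nil => simp at hx
  | cons a l =>
    rcases List.mem_cons.mp hx with rfl | hx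
    · simp
    · have := (List.pairwise_cons.mp hp).1 x hx
      exact ⟨this.1, this.2.1⟩

lemma le_getLast!_of_mem {L : List (ℕ × ℕ)} (h : L.Chain' RootStep) {x : ℕ × ℕ}
    (hx : x ∈ L) : x.1 ≤ L.getLast!.1 ∧ x.2 ≤ L.getLast!.2 := by
  have hne : L ≠ [] := List.ne_nil_of_mem hx
  obtain ⟨l, y, rfl⟩ := List.eq_nil_or_concat L |>.resolve_left hne
  rw [List.concat_eq_append] at *
  have hp := pairwise_rlt h
  have hlast : (l ++ [y]).getLast! = y := by
    apply List.getLast!_of_getLast?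
    rw [List.getLast?_append]
    simp
  rw [hlast]
  rcases List.mem_append.mp hx with hx | hx
  · have hpl := (List.pairwise_append.mp hp).2.2
    have := hpl x hx y (by simp)
    exact ⟨this.1, this.2.1⟩
  · simp at hx; subst hx; exact ⟨le_refl _, le_refl _⟩

/-- distinct comparable: any two distinct members of a chain are RLT-comparable -/
lemma mem_comparable {L : List (ℕ × ℕ)} (h : L.Chain' RootStep) {x y : ℕ × ℕ}
    (hx : x ∈ L) (hy : y ∈ L) (hxy : x ≠ y) : RLT x y ∨ RLT y x := by
  have hp := pairwise_rlt h
  rw [List.pairwise_iff_forall_sublist] at hp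
  obtain ⟨ix, hix, hgx⟩ := List.mem_iff_getElem.mp hx
  obtain ⟨iy, hiy, hgy⟩ := List.mem_iff_getElem.mp hy
  rcases lt_trichotomy ix iy with hlt | heq | hlt
  · left
    rw [← hgx, ← hgy]
    exact List.pairwise_iff_getElem.mp (pairwise_rlt h) ix iy hix hiy hlt
  · subst heq; exact absurd (hgx.symm.trans hgy) hxy
  · right
    rw [← hgx, ← hgy]
    exact List.pairwise_iff_getElem.mp (pairwise_rlt h) iy ix hiy hix hlt

lemma single_le_mapsum {α : Type*} {l : List α} {f : α → ℕ} {x : α} (hx : x ∈ l) :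
    f x ≤ (l.map f).sum :=
  List.single_le_sum (by simp) _ (List.mem_map_of_mem (f := f) hx)

lemma mapsum_erase {α : Type*} [DecidableEq α] {l : List α} {f : α → ℕ} {x : α} (hx : x ∈ l) :
    (l.map f).sum = f x + ((l.erase x).map f).sum := by
  have hperm : l.Perm (x :: l.erase x) := List.perm_cons_erase hx
  have := (hperm.map f).sum_eq
  simpa using this

lemma two_mem_mapsum {α : Type*} [DecidableEq α] {l : List α} {f : α → ℕ} {x y : α} (hx : x ∈ l)
    (hy : y ∈ l) (hxy : x ≠ y) : f x + f y ≤ (l.map f).sum := by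
  rw [mapsum_erase hx]
  have hy' : y ∈ l.erase x := (List.mem_erase_of_ne (Ne.symm hxy)).mpr hy
  exact Nat.add_le_add_left (single_le_mapsum hy') _

lemma head_dropWhile_false {p : ℕ × ℕ → Bool} :
    ∀ {l : List (ℕ × ℕ)} {x : ℕ × ℕ} {xs : List (ℕ × ℕ)},
      l.dropWhile p = x :: xs → p x = false
  | [], x, xs => by simp [List.dropWhile]
  | (a :: l), x, xs => by
      intro h
      rw [List.dropWhile_cons] at h
      by_cases hpa : p a = true
      · rw [if_pos hpa] at h; exact head_dropWhile_false h
      · rw [if_neg hpa] at h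
        cases h; simpa using hpa

end FFLV
namespace FFLV

lemma head?_colL {q a b : ℕ} (h : a ≤ b) : (colL q a b).head? = some (a, q) := by
  unfold colL
  obtain ⟨k, hk⟩ : ∃ k, b + 1 - a = k + 1 := ⟨b - a, by omega⟩
  rw [hk, List.range'_succ]
  simp

lemma elbow_spec (n p1 p q : ℕ) (h1 : 1 ≤ p1) (h2 : p1 ≤ p) (h3 : p ≤ q) (h4 : q ≤ n)
    (S : List (ℕ × ℕ)) (hchain : List.Chain' RootStep (((p, q) : ℕ × ℕ) :: S))
    (hroots : ∀ r ∈ S, IsRoot n r.1 r.2)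
    (hlast : ((((p, q) : ℕ × ℕ) :: S).getLast!).1 = ((((p, q) : ℕ × ℕ) :: S).getLast!).2) :
    IsDyckPath n (rowL p1 p1 q ++ colL q (p1+1) p ++ S) ∧
    (rowL p1 p1 q ++ colL q (p1+1) p ++ S).head! = (p1, p1) ∧
    (rowL p1 p1 q ++ colL q (p1+1) p ++ S).getLast! = (((p, q) : ℕ × ℕ) :: S).getLast! := by
  have hp1q : p1 ≤ q := le_trans h2 h3
  have hrow_ne : rowL p1 p1 q ≠ [] := rowL_ne_nil hp1q
  have hEhead? : (rowL p1 p1 q ++ colL q (p1+1) p).head? = some (p1, p1) := by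
    rw [List.head?_append, head?_rowL hp1q]; rfl
  have hElast? : (rowL p1 p1 q ++ colL q (p1+1) p).getLast? = some (p, q) := by
    rcases eq_or_lt_of_le h2 with rfl | hlt
    · rw [colL_nil (by omega), List.append_nil, getLast?_rowL hp1q]
    · rw [List.getLast?_append, getLast?_colL (by omega)]; rfl
  have hE_ne : (rowL p1 p1 q ++ colL q (p1+1) p) ≠ [] := by
    simp [hrow_ne]
  have hEchain : List.Chain' RootStep (rowL p1 p1 q ++ colL q (p1+1) p) := by
    show List.IsChain _ _
    rw [List.isChain_append]
    refine ⟨chain'_rowL _ _ _, chain'_colL _ _ _, ?_⟩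
    intro x hx y hy
    rw [getLast?_rowL hp1q] at hx
    rcases eq_or_lt_of_le h2 with rfl | hlt
    · rw [colL_nil (by omega)] at hy; simp at hy
    · rw [head?_colL (by omega)] at hy
      simp only [Option.mem_def, Option.some.injEq] at hx hy
      subst hx; subst hy
      exact Or.inr rfl
  have hchain' : List.Chain' RootStep ((rowL p1 p1 q ++ colL q (p1+1) p) ++ S) := by
    show List.IsChain _ _
    rw [List.isChain_append]
    refine ⟨hEchain, (List.isChain_cons.mp hchain).2, ?_⟩
    intro x hx y hy
    rw [hElast?] at hx
    simp only [Option.mem_def, Option.some.injEq] at hx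
    subst hx
    exact (List.isChain_cons.mp hchain).1 y hy
  have hhead! : ((rowL p1 p1 q ++ colL q (p1+1) p) ++ S).head! = (p1, p1) := by
    apply List.head!_of_head?
    rw [List.head?_append, hEhead?]; rfl
  have hlast! : ((rowL p1 p1 q ++ colL q (p1+1) p) ++ S).getLast! =
      (((p, q) : ℕ × ℕ) :: S).getLast! := by
    by_cases hS : S = []
    · subst hS
      rw [List.append_nil]
      rw [List.getLast!_of_getLast? hElast?]
      rfl
    · have hSne : S ≠ [] := hS
      have h1' : ((rowL p1 p1 q ++ colL q (p1+1) p) ++ S).getLast? = S.getLast? := by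
        rw [List.getLast?_append, Option.or_of_isSome]
        rwa [List.getLast?_isSome]
      have h2' : (((p, q) : ℕ × ℕ) :: S).getLast? = S.getLast? := by
        show (([((p, q) : ℕ × ℕ)] ++ S)).getLast? = S.getLast?
        rw [List.getLast?_append, Option.or_of_isSome]
        rwa [List.getLast?_isSome]
      obtain ⟨z, hz⟩ := List.getLast?_isSome.mpr hSne |> Option.isSome_iff_exists.mp
      rw [List.getLast!_of_getLast? (h1'.trans hz), List.getLast!_of_getLast? (h2'.trans hz)]
  refine ⟨⟨by simp [hrow_ne], ?_, ?_, ?_, hchain'⟩, hhead!, hlast!⟩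
  · intro r hr
    rcases List.mem_append.mp hr with hr | hr
    · rcases List.mem_append.mp hr with hr | hr
      · obtain ⟨hr1, hr2, hr3⟩ := mem_rowL.mp hr
        exact ⟨by omega, by omega, by omega⟩
      · obtain ⟨hr1, hr2, hr3⟩ := mem_colL.mp hr
        exact ⟨by omega, by omega, by omega⟩
    · exact hroots r hr
  · rw [hhead!]
  · rw [hlast!]; exact hlast

/-- membership of the corner `(p,q)` and of a smaller point `(p1,q1)` in the elbow -/
lemma corner_mem_elbow {p1 p q : ℕ} (h2 : p1 ≤ p) (h3 : p ≤ q) :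
    ((p, q) : ℕ × ℕ) ∈ rowL p1 p1 q ++ colL q (p1+1) p := by
  rcases eq_or_lt_of_le h2 with rfl | hlt
  · exact List.mem_append.mpr (Or.inl (mem_rowL.mpr ⟨rfl, h3, le_refl _⟩))
  · exact List.mem_append.mpr (Or.inr (mem_colL.mpr ⟨rfl, by omega, le_refl _⟩))

lemma small_mem_elbow {p1 q1 p q : ℕ} (hq1 : p1 ≤ q1) (hq : q1 ≤ q) :
    ((p1, q1) : ℕ × ℕ) ∈ rowL p1 p1 q ++ colL q (p1+1) p :=
  List.mem_append.mpr (Or.inl (mem_rowL.mpr ⟨rfl, hq1, hq⟩))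

end FFLV
namespace FFLV

lemma getLast!_append_right {P T : List (ℕ × ℕ)} (hT : T ≠ []) :
    (P ++ T).getLast! = T.getLast! := by
  obtain ⟨z, hz⟩ := Option.isSome_iff_exists.mp (List.getLast?_isSome.mpr hT)
  rw [List.getLast!_of_getLast? hz, List.getLast!_of_getLast? (by rw [List.getLast?_append, hz]; rfl)]

lemma root_bound {n : ℕ} {m : ℕ → ℕ} {s : ℕ × ℕ → ℕ} (hs : InS n m s) {p q : ℕ}
    (hr : IsRoot n p q) : s (p, q) ≤ ∑ t ∈ Finset.Icc p q, m t := by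
  obtain ⟨h1, h2, h3⟩ := hr
  have hsp := elbow_spec n p q q h1 h2 (le_refl q) h3 [] (List.isChain_singleton _)
    (by simp) (by rfl)
  have hsum := hs.2 _ hsp.1
  rw [hsp.2.1, hsp.2.2] at hsum
  simp only [List.append_nil] at hsum ⊢
  refine le_trans ?_ (le_trans (single_le_mapsum (f := s)
      (x := ((p, q) : ℕ × ℕ)) ?_) hsum)
  · exact le_refl _
  · exact small_mem_elbow h2 (le_refl q)

lemma zero_below {n : ℕ} {m : ℕ → ℕ} {s : ℕ × ℕ → ℕ} (hs : InS n m s) {i : ℕ}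
    (hmin : ∀ t, 1 ≤ t → t < i → m t = 0) {p q : ℕ} (hr : IsRoot n p q) (hq : q < i) :
    s (p, q) = 0 := by
  have := root_bound hs hr
  have hz : ∑ t ∈ Finset.Icc p q, m t = 0 := by
    apply Finset.sum_eq_zero
    intro t ht
    rw [Finset.mem_Icc] at ht
    exact hmin t (le_trans hr.1 ht.1) (by omega)
  omega

/-- the set `B` of positive-mass roots whose interval contains `i` -/
abbrev Bpred (s : ℕ × ℕ → ℕ) (i : ℕ) (r : ℕ × ℕ) : Prop :=
  r.1 ≤ i ∧ i ≤ r.2 ∧ 1 ≤ s r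

/-- minimal elements of `B` -/
def MinB (s : ℕ × ℕ → ℕ) (i : ℕ) (r : ℕ × ℕ) : Prop :=
  Bpred s i r ∧ ∀ r', Bpred s i r' → r'.1 ≤ r.1 → r'.2 ≤ r.2 → r' = r

lemma sum_Icc_cut {m : ℕ → ℕ} {i c b : ℕ} (hmin : ∀ t, 1 ≤ t → t < i → m t = 0)
    (hc1 : 1 ≤ c) (hci : c ≤ i) :
    ∑ t ∈ Finset.Icc c b, m t = ∑ t ∈ Finset.Icc i b, m t := by
  symm
  apply Finset.sum_subset
  · intro t ht; rw [Finset.mem_Icc] at *; omega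
  · intro t ht hnt
    rw [Finset.mem_Icc] at ht
    rw [Finset.mem_Icc] at hnt
    exact hmin t (by omega) (by omega)

end FFLV
namespace FFLV

lemma key {n : ℕ} {m : ℕ → ℕ} {s : ℕ × ℕ → ℕ} (hs : InS n m s) {i : ℕ}
    (hi1 : 1 ≤ i) (hin : i ≤ n) (him : 1 ≤ m i)
    (hmin : ∀ t, 1 ≤ t → t < i → m t = 0)
    {L : List (ℕ × ℕ)} (hL : IsDyckPath n L)
    (hai : L.head!.1 ≤ i) (hib : i ≤ L.getLast!.1)
    (hmiss : ∀ r ∈ L, ¬ MinB s i r) :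
    (L.map s).sum + 1 ≤ ∑ t ∈ Finset.Icc L.head!.1 L.getLast!.1, m t := by
  classical
  obtain ⟨hne, hroots, hhd, hld, hch⟩ := hL
  have hiab : i ∈ Finset.Icc L.head!.1 L.getLast!.1 := Finset.mem_Icc.mpr ⟨hai, hib⟩
  have hMib : 1 ≤ ∑ t ∈ Finset.Icc L.head!.1 L.getLast!.1, m t :=
    le_trans him (Finset.single_le_sum (f := m) (fun t _ => Nat.zero_le _) hiab)
  by_cases hB : ∃ r ∈ L, Bpred s i r
  · -- there is a B-element on L; split at the first one
    have hsplit : L.takeWhile (fun r => !(decide (Bpred s i r))) ++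
        L.dropWhile (fun r => !(decide (Bpred s i r))) = L :=
      List.takeWhile_append_dropWhile
    have hDne : L.dropWhile (fun r => !(decide (Bpred s i r))) ≠ [] := by
      intro hDnil
      obtain ⟨r0, hr0L, hr0B⟩ := hB
      have hr0P : r0 ∈ L.takeWhile (fun r => !(decide (Bpred s i r))) := by
        rw [hDnil, List.append_nil] at hsplit; rw [hsplit]; exact hr0L
      have := List.mem_takeWhile_imp hr0P
      simp only [Bool.not_eq_true', decide_eq_false_iff_not] at this
      exact this hr0B
    obtain ⟨x, S, hDx⟩ := List.exists_cons_of_ne_nil hDne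
    have hxB : Bpred s i x := by
      have := head_dropWhile_false (p := fun r => !(decide (Bpred s i r))) (l := L) hDx
      simpa using this
    have hxL : x ∈ L := by
      rw [← hsplit, hDx]; exact List.mem_append_right _ (List.mem_cons_self)
    have hxroot := hroots x hxL
    obtain ⟨hx1, hx2, hx3⟩ := hxroot
    obtain ⟨hxp, hxq, hxs⟩ := hxB
    -- x is not a minimal element of B
    obtain ⟨b1, hb1B, hb1p, hb1q, hb1ne⟩ :
        ∃ r', Bpred s i r' ∧ r'.1 ≤ x.1 ∧ r'.2 ≤ x.2 ∧ r' ≠ x := by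
      have hmx := hmiss x hxL
      rw [MinB] at hmx
      push_neg at hmx
      obtain ⟨r', h1', h2', h3', h4'⟩ := hmx ⟨hxp, hxq, hxs⟩
      exact ⟨r', h1', h2', h3', h4'⟩
    have hb1root : IsRoot n b1.1 b1.2 := by
      by_contra hc
      have h0 := hs.1 b1.1 b1.2 hc
      rw [Prod.mk.eta] at h0
      have := hb1B.2.2
      omega
    have hchPD : List.Chain' RootStep
        (L.takeWhile (fun r => !(decide (Bpred s i r))) ++
         L.dropWhile (fun r => !(decide (Bpred s i r)))) := by rw [hsplit]; exact hch
    have hchD := (List.isChain_append.mp hchPD).2.1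
    have hxeta : ((x.1, x.2) : ℕ × ℕ) = x := Prod.mk.eta
    have hb1eta : ((b1.1, b1.2) : ℕ × ℕ) = b1 := Prod.mk.eta
    have hchxS : List.Chain' RootStep (((x.1, x.2) : ℕ × ℕ) :: S) := by
      rw [hxeta, ← hDx]; exact hchD
    have hlastD' : (((x.1, x.2) : ℕ × ℕ) :: S).getLast! = L.getLast! := by
      rw [hxeta, ← hDx]
      conv_rhs => rw [← hsplit]
      exact (getLast!_append_right hDne).symm
    have hsp := elbow_spec n b1.1 x.1 x.2 hb1root.1 hb1p hx2 hx3 S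
      hchxS (fun r hr => hroots r (by
        rw [← hsplit, hDx]
        exact List.mem_append_right _ (List.mem_cons_of_mem _ hr)))
      (by rw [hlastD']; exact hld)
    have hsum1 := hs.2 _ hsp.1
    rw [hsp.2.1, hsp.2.2, hlastD'] at hsum1
    replace hsum1 : ((rowL b1.1 b1.1 x.2 ++ colL x.2 (b1.1+1) x.1 ++ S).map s).sum
        ≤ ∑ t ∈ Finset.Icc b1.1 L.getLast!.1, m t := hsum1
    -- two members of the elbow
    have hxmem : x ∈ rowL b1.1 b1.1 x.2 ++ colL x.2 (b1.1+1) x.1 := by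
      rw [← hxeta]; exact corner_mem_elbow hb1p hx2
    have hb1mem : b1 ∈ rowL b1.1 b1.1 x.2 ++ colL x.2 (b1.1+1) x.1 := by
      rw [← hb1eta]; exact small_mem_elbow hb1root.2.1 hb1q
    have htwo : s b1 + s x ≤
        ((rowL b1.1 b1.1 x.2 ++ colL x.2 (b1.1+1) x.1).map s).sum :=
      two_mem_mapsum hb1mem hxmem hb1ne
    have hsumL1 : ((rowL b1.1 b1.1 x.2 ++ colL x.2 (b1.1+1) x.1).map s).sum + (S.map s).sum
        = ((rowL b1.1 b1.1 x.2 ++ colL x.2 (b1.1+1) x.1 ++ S).map s).sum := by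
      simp [List.map_append, List.sum_append, Nat.add_assoc]
    -- the prefix carries no mass
    have hPzero : ((L.takeWhile (fun r => !(decide (Bpred s i r)))).map s).sum = 0 := by
      apply List.sum_eq_zero
      intro v hv
      simp only [List.mem_map] at hv
      obtain ⟨r, hrP, rfl⟩ := hv
      have hrL : r ∈ L := by rw [← hsplit]; exact List.mem_append_left _ hrP
      have hrroot := hroots r hrL
      have hrPB : ¬ Bpred s i r := by
        have h := List.mem_takeWhile_imp hrP
        simp only [Bool.not_eq_true', decide_eq_false_iff_not] at h
        exact h
      have hrx : r.1 ≤ x.1 := by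
        have hpw := pairwise_rlt hchPD
        have hrel := (List.pairwise_append.mp hpw).2.2 r hrP x
          (by rw [hDx]; exact List.mem_cons_self)
        exact hrel.1
      by_cases hr2 : r.2 < i
      · have h0 := zero_below hs hmin (p := r.1) (q := r.2) hrroot hr2
        rw [Prod.mk.eta] at h0; exact h0
      · have : ¬ (1 ≤ s r) := fun hc => hrPB ⟨by omega, by omega, hc⟩
        omega
    have hsumL : (L.map s).sum = s x + (S.map s).sum := by
      conv_lhs => rw [← hsplit, hDx]
      rw [List.map_append, List.sum_append, hPzero, List.map_cons, List.sum_cons]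
      omega
    -- identify interval sums
    have hcut1 : ∑ t ∈ Finset.Icc b1.1 L.getLast!.1, m t
        = ∑ t ∈ Finset.Icc i L.getLast!.1, m t :=
      sum_Icc_cut hmin hb1root.1 (le_trans hb1p hxp)
    have ha1 : 1 ≤ L.head!.1 := by
      obtain ⟨hd, tl, rfl⟩ := List.exists_cons_of_ne_nil hne
      exact (hroots hd (List.mem_cons_self)).1
    have hcut2 : ∑ t ∈ Finset.Icc L.head!.1 L.getLast!.1, m t
        = ∑ t ∈ Finset.Icc i L.getLast!.1, m t :=
      sum_Icc_cut hmin ha1 hai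
    have hb1s : 1 ≤ s b1 := hb1B.2.2
    omega
  · -- no B-element on L
    push_neg at hB
    have hsplit : L.takeWhile (fun r => decide (r.1 ≤ i)) ++
        L.dropWhile (fun r => decide (r.1 ≤ i)) = L :=
      List.takeWhile_append_dropWhile
    have hPzero : ((L.takeWhile (fun r => decide (r.1 ≤ i))).map s).sum = 0 := by
      apply List.sum_eq_zero
      intro v hv
      simp only [List.mem_map] at hv
      obtain ⟨r, hrP, rfl⟩ := hv
      have hrL : r ∈ L := by rw [← hsplit]; exact List.mem_append_left _ hrP
      have hrroot := hroots r hrL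
      have hr1 : r.1 ≤ i := by simpa using List.mem_takeWhile_imp hrP
      by_cases hr2 : r.2 < i
      · have h0 := zero_below hs hmin (p := r.1) (q := r.2) hrroot hr2
        rw [Prod.mk.eta] at h0; exact h0
      · have : ¬ (1 ≤ s r) := fun hc => hB r hrL ⟨hr1, by omega, hc⟩
        omega
    by_cases hTnil : L.dropWhile (fun r => decide (r.1 ≤ i)) = []
    · have : (L.map s).sum = 0 := by
        conv_lhs => rw [← hsplit, hTnil]
        rw [List.append_nil, hPzero]
      omega
    obtain ⟨w, T', hTw⟩ := List.exists_cons_of_ne_nil hTnil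
    have hw1 : ¬ (w.1 ≤ i) := by
      have := head_dropWhile_false (p := fun r => decide (r.1 ≤ i)) (l := L) hTw
      simpa using this
    have hwL : w ∈ L := by
      rw [← hsplit, hTw]; exact List.mem_append_right _ (List.mem_cons_self)
    have hwroot := hroots w hwL
    -- the prefix is nonempty
    have hPne : L.takeWhile (fun r => decide (r.1 ≤ i)) ≠ [] := by
      intro hPnil
      rw [hPnil, List.nil_append] at hsplit
      have hhw : L.head! = w := by rw [← hsplit, hTw]; rfl
      rw [hhw] at hai
      exact hw1 hai
    have hchPT : List.Chain' RootStep
        (L.takeWhile (fun r => decide (r.1 ≤ i)) ++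
         L.dropWhile (fun r => decide (r.1 ≤ i))) := by rw [hsplit]; exact hch
    have hwi : w.1 = i + 1 := by
      obtain ⟨y, hy⟩ := Option.isSome_iff_exists.mp (List.getLast?_isSome.mpr hPne)
      have hlink := (List.isChain_append.mp hchPT).2.2 y (by rw [hy]; rfl) w
        (by rw [hTw]; rfl)
      have hyP : y ∈ L.takeWhile (fun r => decide (r.1 ≤ i)) :=
        List.mem_of_getLast? hy
      have hy1 : y.1 ≤ i := by simpa using List.mem_takeWhile_imp hyP
      rcases hlink with h | h
      · rw [h] at hw1; simp at hw1; omega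
      · rw [h] at hw1 ⊢; simp at hw1 ⊢; omega
    have hchT : List.Chain' RootStep (L.dropWhile (fun r => decide (r.1 ≤ i))) :=
      (List.isChain_append.mp hchPT).2.1
    have hweta : ((i+1, w.2) : ℕ × ℕ) = w := by rw [← hwi]
    have hchwT : List.Chain' RootStep (((i+1, w.2) : ℕ × ℕ) :: T') := by
      rw [hweta, ← hTw]; exact hchT
    have hlastT' : (((i+1, w.2) : ℕ × ℕ) :: T').getLast! = L.getLast! := by
      rw [hweta, ← hTw]
      conv_rhs => rw [← hsplit]
      exact (getLast!_append_right hTnil).symm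
    have hsp := elbow_spec n (i+1) (i+1) w.2 (by omega) (le_refl _)
      (by rw [← hwi]; exact hwroot.2.1) hwroot.2.2 T'
      hchwT (fun r hr => hroots r (by
        rw [← hsplit, hTw]
        exact List.mem_append_right _ (List.mem_cons_of_mem _ hr)))
      (by rw [hlastT']; exact hld)
    have hsum2 := hs.2 _ hsp.1
    rw [hsp.2.1, hsp.2.2, hlastT'] at hsum2
    replace hsum2 : ((rowL (i+1) (i+1) w.2 ++ colL w.2 (i+1+1) (i+1) ++ T').map s).sum
        ≤ ∑ t ∈ Finset.Icc (i+1) L.getLast!.1, m t := hsum2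
    have hwmem : w ∈ rowL (i+1) (i+1) w.2 ++ colL w.2 (i+1+1) (i+1) := by
      rw [← hweta]
      exact corner_mem_elbow (le_refl _) (by rw [← hwi]; exact hwroot.2.1)
    have hsumT : ((L.dropWhile (fun r => decide (r.1 ≤ i))).map s).sum ≤
        ((rowL (i+1) (i+1) w.2 ++ colL w.2 (i+1+1) (i+1) ++ T').map s).sum := by
      rw [hTw]
      have h1' : ((w :: T').map s).sum = s w + (T'.map s).sum := by simp
      have h2' : ((rowL (i+1) (i+1) w.2 ++ colL w.2 (i+1+1) (i+1) ++ T').map s).sum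
          = ((rowL (i+1) (i+1) w.2 ++ colL w.2 (i+1+1) (i+1)).map s).sum
            + (T'.map s).sum := by
        simp [List.map_append, List.sum_append, Nat.add_assoc]
      rw [h1', h2']
      have hsw := single_le_mapsum (f := s) hwmem
      omega
    have hsumL : (L.map s).sum = ((L.dropWhile (fun r => decide (r.1 ≤ i))).map s).sum := by
      conv_lhs => rw [← hsplit]
      rw [List.map_append, List.sum_append, hPzero, Nat.zero_add]
    have hsub : insert i (Finset.Icc (i+1) L.getLast!.1) ⊆
        Finset.Icc L.head!.1 L.getLast!.1 := by
      intro t ht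
      rcases Finset.mem_insert.mp ht with rfl | ht
      · exact hiab
      · rw [Finset.mem_Icc] at *; omega
    have hinot : i ∉ Finset.Icc (i+1) L.getLast!.1 := by rw [Finset.mem_Icc]; omega
    have hge : m i + ∑ t ∈ Finset.Icc (i+1) L.getLast!.1, m t
        ≤ ∑ t ∈ Finset.Icc L.head!.1 L.getLast!.1, m t := by
      have := Finset.sum_le_sum_of_subset (f := m) hsub
      rwa [Finset.sum_insert hinot] at this
    omega

end FFLV
namespace FFLV

open scoped Classical

/-- the indicator of the minimal elements of `B` -/
noncomputable def tf (s : ℕ × ℕ → ℕ) (i : ℕ) : ℕ × ℕ → ℕ :=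
  fun r => if MinB s i r then 1 else 0

lemma tf_le (s : ℕ × ℕ → ℕ) (i : ℕ) (r : ℕ × ℕ) : tf s i r ≤ s r := by
  unfold tf
  split_ifs with h
  · exact h.1.2.2
  · exact Nat.zero_le _

lemma sum_indicator_le_one {P : ℕ × ℕ → Prop} [DecidablePred P] :
    ∀ (L : List (ℕ × ℕ)), List.Pairwise (fun a b => ¬(P a ∧ P b)) L →
      (L.map fun r => if P r then 1 else 0).sum ≤ 1
  | [], _ => by simp
  | (a :: L), hpw => by
      obtain ⟨ha, hL⟩ := List.pairwise_cons.mp hpw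
      simp only [List.map_cons, List.sum_cons]
      by_cases hPa : P a
      · have hzero : (L.map fun r => if P r then 1 else 0).sum = 0 := by
          apply List.sum_eq_zero
          intro v hv
          simp only [List.mem_map] at hv
          obtain ⟨r, hr, rfl⟩ := hv
          have : ¬ P r := fun hc => ha r hr ⟨hPa, hc⟩
          simp [this]
        simp [hPa, hzero]
      · have := sum_indicator_le_one L hL
        simp only [hPa, if_false]
        omega

lemma mapsum_sub_ge_one {f g : ℕ × ℕ → ℕ} :
    ∀ (L : List (ℕ × ℕ)), (∀ r ∈ L, g r ≤ f r) → ∀ {y}, y ∈ L → g y + 1 ≤ f y →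
      (L.map g).sum + 1 ≤ (L.map f).sum
  | [], _, y, hy, _ => by simp at hy
  | (a :: L), hg, y, hy, h1 => by
      simp only [List.map_cons, List.sum_cons]
      rcases List.mem_cons.mp hy with rfl | hy
      · have : (L.map g).sum ≤ (L.map f).sum :=
          List.sum_le_sum (fun r hr => hg r (List.mem_cons_of_mem _ hr))
        omega
      · have := mapsum_sub_ge_one L (fun r hr => hg r (List.mem_cons_of_mem _ hr)) hy h1
        have hga := hg a (List.mem_cons_self)
        omega

lemma tf_InS {n : ℕ} {m : ℕ → ℕ} {s : ℕ × ℕ → ℕ} (hs : InS n m s) {i : ℕ} :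
    InS n (fun t => if t = i then 1 else 0) (tf s i) := by
  constructor
  · intro p q hpq
    unfold tf
    rw [if_neg]
    intro hmb
    exact (by simpa [hs.1 p q hpq] using hmb.1.2.2 : False)
  · intro L hL
    obtain ⟨hne, hroots, hhd, hld, hch⟩ := hL
    by_cases hy : ∃ y ∈ L, MinB s i y
    · obtain ⟨y, hyL, hyM⟩ := hy
      have hy1 : L.head!.1 ≤ y.1 := (head!_le_of_mem hch hyL).1
      have hy2 : y.2 ≤ L.getLast!.2 := (le_getLast!_of_mem hch hyL).2
      have hiI : i ∈ Finset.Icc L.head!.1 L.getLast!.1 := by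
        rw [Finset.mem_Icc, hld]
        exact ⟨le_trans hy1 hyM.1.1, le_trans hyM.1.2.1 hy2⟩
      have hRHS : ∑ t ∈ Finset.Icc L.head!.1 L.getLast!.1,
          (if t = i then 1 else 0) = 1 := by
        rw [Finset.sum_ite_eq' _ i (fun _ => 1), if_pos hiI]
      rw [hRHS]
      apply sum_indicator_le_one
      have hpw := pairwise_rlt hch
      refine hpw.imp ?_
      intro a b hab hc
      obtain ⟨h1, h2, h3⟩ := hab
      have heq := hc.2.2 a hc.1.1 h1 h2
      rw [heq] at h3
      omega
    · push_neg at hy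
      have : (L.map (tf s i)).sum = 0 := by
        apply List.sum_eq_zero
        intro v hv
        simp only [List.mem_map] at hv
        obtain ⟨r, hr, rfl⟩ := hv
        unfold tf
        rw [if_neg (hy r hr)]
      rw [this]
      exact Nat.zero_le _

lemma sub_InS {n : ℕ} {m : ℕ → ℕ} {s : ℕ × ℕ → ℕ} (hs : InS n m s) {i : ℕ}
    (hi1 : 1 ≤ i) (hin : i ≤ n) (him : 1 ≤ m i)
    (hmin : ∀ t, 1 ≤ t → t < i → m t = 0) :
    InS n (fun t => if t = i then m t - 1 else m t) (fun r => s r - tf s i r) := by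
  constructor
  · intro p q hpq
    simp [hs.1 p q hpq]
  · intro L hL
    show (L.map fun r => s r - tf s i r).sum ≤
      ∑ t ∈ Finset.Icc L.head!.1 L.getLast!.1, (if t = i then m t - 1 else m t)
    have hL' := hL
    obtain ⟨hne, hroots, hhd, hld, hch⟩ := hL'
    have hsum_s := hs.2 L hL
    have hle : (L.map fun r => s r - tf s i r).sum ≤ (L.map s).sum :=
      List.sum_le_sum (fun r _ => Nat.sub_le _ _)
    have hsum_m' : (∑ t ∈ Finset.Icc L.head!.1 L.getLast!.1,
          (if t = i then m t - 1 else m t))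
        + (if i ∈ Finset.Icc L.head!.1 L.getLast!.1 then 1 else 0)
        = ∑ t ∈ Finset.Icc L.head!.1 L.getLast!.1, m t := by
      rw [← Finset.sum_ite_eq' (Finset.Icc L.head!.1 L.getLast!.1) i (fun _ => 1),
        ← Finset.sum_add_distrib]
      apply Finset.sum_congr rfl
      intro t ht
      by_cases hti : t = i
      · subst hti; simp; omega
      · simp [hti]
    by_cases hiI : i ∈ Finset.Icc L.head!.1 L.getLast!.1
    · rw [if_pos hiI] at hsum_m'
      by_cases hy : ∃ y ∈ L, MinB s i y
      · obtain ⟨y, hyL, hyM⟩ := hy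
        have h4 : tf s i y = 1 := by unfold tf; rw [if_pos hyM]
        have h5 : 1 ≤ s y := hyM.1.2.2
        have hkey : (L.map fun r => s r - tf s i r).sum + 1 ≤ (L.map s).sum := by
          apply mapsum_sub_ge_one L (fun r _ => Nat.sub_le _ _) hyL
          rw [h4]; omega
        omega
      · push_neg at hy
        rw [Finset.mem_Icc] at hiI
        have := key hs hi1 hin him hmin hL hiI.1 hiI.2 hy
        omega
    · rw [if_neg hiI] at hsum_m'
      omega

end FFLV
namespace FFLV

theorem aux (n : ℕ) : ∀ (N : ℕ) (m : ℕ → ℕ) (s : ℕ × ℕ → ℕ),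
    (∑ t ∈ Finset.Icc 1 n, m t) = N → InS n m s →
    ∃ c : ℕ → ℕ → (ℕ × ℕ → ℕ),
      (∀ i j : ℕ, 1 ≤ i → i ≤ n → j < m i →
        InS n (fun t => if t = i then 1 else 0) (c i j)) ∧
      (∀ a : ℕ × ℕ, s a = ∑ i ∈ Finset.Icc 1 n, ∑ j ∈ Finset.range (m i), c i j a) := by
  intro N
  induction N using Nat.strong_induction_on with
  | _ N IH =>
    intro m s hN hs
    by_cases hN0 : N = 0
    · -- base case : s = 0
      subst hN0
      have hs0 : ∀ a : ℕ × ℕ, s a = 0 := by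
        intro a
        by_cases hr : IsRoot n a.1 a.2
        · have h1 := root_bound hs hr
          have h2 : ∑ t ∈ Finset.Icc a.1 a.2, m t ≤ ∑ t ∈ Finset.Icc 1 n, m t := by
            apply Finset.sum_le_sum_of_subset
            intro t ht
            rw [Finset.mem_Icc] at *
            obtain ⟨u1, u2, u3⟩ := hr
            omega
          rw [Prod.mk.eta] at h1
          omega
        · have := hs.1 a.1 a.2 hr
          rwa [Prod.mk.eta] at this
      refine ⟨fun _ _ => (fun _ => 0), ?_, ?_⟩
      · intro i j hi1 hin hj
        constructor
        · intro p q _; rfl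
        · intro L _
          have : (L.map fun _ => 0).sum = 0 := by
            simp
          rw [this]
          exact Nat.zero_le _
      · intro a
        rw [hs0 a]
        simp
    · -- inductive step
      have hNpos : 0 < ∑ t ∈ Finset.Icc 1 n, m t := by omega
      have hex : ∃ j, 1 ≤ j ∧ j ≤ n ∧ 1 ≤ m j := by
        obtain ⟨j, hjI, hj0⟩ := Finset.exists_ne_zero_of_sum_ne_zero (by omega :
          (∑ t ∈ Finset.Icc 1 n, m t) ≠ 0)
        rw [Finset.mem_Icc] at hjI
        exact ⟨j, hjI.1, hjI.2, by omega⟩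
      classical
      set i := Nat.find hex with hidef
      obtain ⟨hi1, hin, him⟩ := Nat.find_spec hex
      rw [← hidef] at hi1 hin him
      have hmin : ∀ t, 1 ≤ t → t < i → m t = 0 := by
        intro t ht1 hti
        have := Nat.find_min hex hti
        push_neg at this
        have h2 := this ht1 (by omega)
        omega
      have hiI : i ∈ Finset.Icc 1 n := Finset.mem_Icc.mpr ⟨hi1, hin⟩
      -- new weight and new point
      have hs' := sub_InS hs hi1 hin him hmin
      have hSig : (∑ t ∈ Finset.Icc 1 n, (if t = i then m t - 1 else m t)) = N - 1 := by
        have h1 : ∑ t ∈ Finset.Icc 1 n, (if t = i then (1:ℕ) else 0) = 1 := by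
          rw [Finset.sum_ite_eq' _ i (fun _ => 1), if_pos hiI]
        have h2 : (∑ t ∈ Finset.Icc 1 n, (if t = i then m t - 1 else m t))
            + (∑ t ∈ Finset.Icc 1 n, (if t = i then (1:ℕ) else 0))
            = ∑ t ∈ Finset.Icc 1 n, m t := by
          rw [← Finset.sum_add_distrib]
          apply Finset.sum_congr rfl
          intro t _
          by_cases hti : t = i
          · subst hti; rw [if_pos rfl, if_pos rfl]; omega
          · simp [hti]
        omega
      obtain ⟨c', hc'1, hc'2⟩ := IH (N - 1) (by omega) _ _ hSig hs'
      refine ⟨fun i' j => if i' = i ∧ j = m i - 1 then tf s i else c' i' j, ?_, ?_⟩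
      · intro i' j hi'1 hi'n hj
        show InS n (fun t => if t = i' then 1 else 0)
          (if i' = i ∧ j = m i - 1 then tf s i else c' i' j)
        by_cases hcase : i' = i ∧ j = m i - 1
        · rw [if_pos hcase, hcase.1]
          exact tf_InS hs
        · rw [if_neg hcase]
          by_cases hii : i' = i
          · have hmeq : m i' = m i := by rw [hii]
            have hjne : j ≠ m i - 1 := fun hc => hcase ⟨hii, hc⟩
            refine hc'1 i' j hi'1 hi'n ?_
            rw [if_pos hii]
            omega
          · refine hc'1 i' j hi'1 hi'n ?_
            rw [if_neg hii]
            exact hj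
      · intro a
        show s a = ∑ i' ∈ Finset.Icc 1 n, ∑ j ∈ Finset.range (m i'),
          (if i' = i ∧ j = m i - 1 then tf s i else c' i' j) a
        simp only [ite_apply]
        have hsplit_s : s a = tf s i a + (s a - tf s i a) := by
          have := tf_le s i a
          omega
        rw [hsplit_s, hc'2 a]
        rw [← Finset.sum_erase_add _ _ hiI, ← Finset.sum_erase_add _ _ hiI]
        have houter : ∑ i' ∈ (Finset.Icc 1 n).erase i,
              ∑ j ∈ Finset.range ((if i' = i then m i' - 1 else m i')),
                c' i' j a
            = ∑ i' ∈ (Finset.Icc 1 n).erase i,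
              ∑ j ∈ Finset.range (m i'),
                (if i' = i ∧ j = m i - 1 then tf s i a else c' i' j a) := by
          apply Finset.sum_congr rfl
          intro i' hi'
          have hii : i' ≠ i := (Finset.mem_erase.mp hi').1
          rw [if_neg hii]
          apply Finset.sum_congr rfl
          intro j _
          rw [if_neg (by tauto)]
        have hinner : (∑ j ∈ Finset.range ((if i = i then m i - 1 else m i)), c' i j a)
              + tf s i a
            = ∑ j ∈ Finset.range (m i),
                (if i = i ∧ j = m i - 1 then tf s i a else c' i j a) := by
          rw [if_pos rfl]
          set K := m i - 1 with hK
          rw [show m i = K + 1 from by omega, Finset.sum_range_succ, if_pos ⟨rfl, rfl⟩]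
          congr 1
          apply Finset.sum_congr rfl
          intro j hj
          rw [Finset.mem_range] at hj
          rw [if_neg (by rintro ⟨-, rfl⟩; omega)]
        omega
end FFLV


/-- Every element `s` of `S(λ)`, for `λ = Σ_i k_i ω_i`
(here `k_i = m i`), decomposes as a sum `s = Σ_{i=1}^n Σ_{j=1}^{k_i} m_{i,j}`
with each `m_{i,j} ∈ S(ω_i)`: the integral Minkowski sum property with
respect to fundamental weights. -/
theorem InS_minkowski_decomposition (n : ℕ) (m : ℕ → ℕ) (s : ℕ × ℕ → ℕ)
    (hs : InS n m s) :
    ∃ c : ℕ → ℕ → (ℕ × ℕ → ℕ),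
      (∀ i j : ℕ, 1 ≤ i → i ≤ n → j < m i →
        InS n (fun t => if t = i then 1 else 0) (c i j)) ∧
      (∀ a : ℕ × ℕ, s a = ∑ i ∈ Finset.Icc 1 n, ∑ j ∈ Finset.range (m i), c i j a) := FFLV.aux n (∑ t ∈ Finset.Icc 1 n, m t) m s rfl hs
end

section
/- For g = sl_3 and λ = m_1 ω_1 + m_2 ω_2, the number of integral points in the polytope P(λ) = {(r_1, r_2, r_{12}) ∈ ℝ³_{≥0} : r_1 ≤ m_1, r_2 ≤ m_2, r_1 + r_2 + r_{12} ≤ m_1 + m_2} equals (1/2)(m_1+1)(m_2+1)(m_1+m_2+2), the dimension of the irreducible sl_3-module V(λ). -/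
open Finset

lemma sl3_aux (a b : ℕ) :
    2 * ∑ i ∈ range (a + 1), ∑ j ∈ range (b + 1), (a + b + 1 - i - j)
      = (a + 1) * (b + 1) * (a + b + 2) := by
  have hA : 2 * ∑ i ∈ range (a + 1), i = a * (a + 1) := by
    have := Finset.sum_range_id_mul_two (a + 1)
    simp only [Nat.add_sub_cancel] at this
    linarith
  have hB : 2 * ∑ j ∈ range (b + 1), j = b * (b + 1) := by
    have := Finset.sum_range_id_mul_two (b + 1)
    simp only [Nat.add_sub_cancel] at this
    linarith
  have h1 : ∀ i ∈ range (a + 1),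
      (∑ j ∈ range (b + 1), (a + b + 1 - i - j))
        = (b + 1) * ((a - i) + 1) + ∑ j ∈ range (b + 1), j := by
    intro i hi
    rw [mem_range] at hi
    have : ∀ j ∈ range (b + 1), (a + b + 1 - i - j) = ((a - i) + 1) + (b - j) := by
      intro j hj; rw [mem_range] at hj; omega
    rw [Finset.sum_congr rfl this, Finset.sum_add_distrib, Finset.sum_const,
      Finset.card_range, smul_eq_mul]
    congr 1
    have := Finset.sum_range_reflect (fun j => j) (b + 1)
    simpa using this
  rw [Finset.sum_congr rfl h1, Finset.sum_add_distrib, Finset.sum_const,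
    Finset.card_range, smul_eq_mul, ← Finset.mul_sum, Finset.sum_add_distrib,
    Finset.sum_const, Finset.card_range, smul_eq_mul]
  have h2 : ∑ i ∈ range (a + 1), (a - i) = ∑ i ∈ range (a + 1), i := by
    have := Finset.sum_range_reflect (fun i => i) (a + 1)
    simpa using this
  rw [h2]
  nlinarith [hA, hB]

/-- For `sl_3` and `λ = m₁ω₁ + m₂ω₂`, the number of integral
points `(r₁, r₂, r₁₂)` of the polytope
`P(λ) = {(r₁,r₂,r₁₂) ∈ ℝ³_{≥0} : r₁ ≤ m₁, r₂ ≤ m₂, r₁ + r₂ + r₁₂ ≤ m₁ + m₂}`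
equals `(m₁+1)(m₂+1)(m₁+m₂+2)/2`, the dimension of the irreducible
`sl₃`-module `V(λ)`.  (Stated multiplied by 2 to avoid division.) -/
theorem sl3_polytope_count (m₁ m₂ : ℕ) :
    2 * {r : ℕ × ℕ × ℕ |
          r.1 ≤ m₁ ∧ r.2.1 ≤ m₂ ∧ r.1 + r.2.1 + r.2.2 ≤ m₁ + m₂}.ncard
      = (m₁ + 1) * (m₂ + 1) * (m₁ + m₂ + 2) := by
  have hset : {r : ℕ × ℕ × ℕ |
          r.1 ≤ m₁ ∧ r.2.1 ≤ m₂ ∧ r.1 + r.2.1 + r.2.2 ≤ m₁ + m₂}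
      = ↑((range (m₁ + 1) ×ˢ range (m₂ + 1) ×ˢ range (m₁ + m₂ + 1)).filter
          (fun r => r.1 + r.2.1 + r.2.2 ≤ m₁ + m₂)) := by
    ext ⟨r1, r2, r12⟩
    simp only [Set.mem_setOf_eq, coe_filter, mem_product, mem_range]
    omega
  rw [hset, Set.ncard_coe_finset]
  have hcard : ((range (m₁ + 1) ×ˢ range (m₂ + 1) ×ˢ range (m₁ + m₂ + 1)).filter
        (fun r => r.1 + r.2.1 + r.2.2 ≤ m₁ + m₂)).card
      = ∑ i ∈ range (m₁ + 1), ∑ j ∈ range (m₂ + 1), (m₁ + m₂ + 1 - i - j) := by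
    rw [Finset.card_filter, Finset.sum_product]
    apply Finset.sum_congr rfl
    intro i hi
    rw [Finset.sum_product]
    apply Finset.sum_congr rfl
    intro j hj
    rw [mem_range] at hi hj
    have : (range (m₁ + m₂ + 1)).filter (fun k => i + j + k ≤ m₁ + m₂)
        = range (m₁ + m₂ + 1 - i - j) := by
      ext k; simp only [mem_filter, mem_range]; omega
    calc (∑ k ∈ range (m₁ + m₂ + 1), if i + j + k ≤ m₁ + m₂ then 1 else 0)
        = ((range (m₁ + m₂ + 1)).filter (fun k => i + j + k ≤ m₁ + m₂)).card := by
          rw [Finset.card_filter]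
      _ = m₁ + m₂ + 1 - i - j := by rw [this, Finset.card_range]
  rw [hcard]
  exact sl3_aux m₁ m₂
end

section
/- Mutation monotonicity: fix i and s ∈ S(λ) with minimal set M_i^s and indicator tuple m_i^s. If t¹ is a mutation of m_i^s (i.e. t¹ ≠ m_i^s, t¹ is supported on R_i, has nonnegative entries, and Σ t¹_{j,k} α_{j,k} = Σ (m_i^s)_{j,k} α_{j,k}), and t = t² + t¹ ∈ S(λ) with t² having nonnegative entries, then m_i^s ≪ m_i^t in the lexicographic order induced by the total order (j₁,k₁) ≪ (j₂,k₂) iff k₁ < k₂ or (k₁ = k₂ and j₁ < j₂). -/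
open Finset

/-- The 0-1 indicator tuple `m_i^s` of the minimal set `M_i^s`. -/
noncomputable def minInd (n i : ℕ) (s : ℕ × ℕ → ℕ) : ℕ × ℕ → ℕ :=
  (MinSet n i s).indicator 1

/-- The total order `≪` on root indices:
`(j₁,k₁) ≪ (j₂,k₂) ↔ k₁ < k₂ ∨ (k₁ = k₂ ∧ j₁ < j₂)`. -/
def llt (a b : ℕ × ℕ) : Prop := a.2 < b.2 ∨ (a.2 = b.2 ∧ a.1 < b.1)

/-- The strict lexicographic order on tuples, reading the entries in
increasing `≪` order. -/
def lexLt (u v : ℕ × ℕ → ℕ) : Prop :=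
  ∃ a : ℕ × ℕ, (∀ b : ℕ × ℕ, llt b a → u b = v b) ∧ u a < v a

/-- The coefficient of the simple root `α_r` in `α_{j,k}`. -/
def rootCoeff (a : ℕ × ℕ) (r : ℕ) : ℕ := if a.1 ≤ r ∧ r ≤ a.2 then 1 else 0

private lemma mm_mem_RiSupp {n i : ℕ} {w : ℕ × ℕ → ℕ} {a : ℕ × ℕ} :
    a ∈ RiSupp n i w ↔ IsRoot n a.1 a.2 ∧ a.1 ≤ i ∧ i ≤ a.2 ∧ w a ≠ 0 := Iff.rfl

private lemma mm_mem_MinSet {n i : ℕ} {w : ℕ × ℕ → ℕ} {a : ℕ × ℕ} :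
    a ∈ MinSet n i w ↔ a ∈ RiSupp n i w ∧
      ∀ b ∈ RiSupp n i w, b.1 ≤ a.1 → b.2 ≤ a.2 → b = a := Iff.rfl

private lemma mm_minInd_ne_zero {n i : ℕ} {w : ℕ × ℕ → ℕ} {a : ℕ × ℕ} :
    minInd n i w a ≠ 0 ↔ a ∈ MinSet n i w := by
  classical
  unfold minInd
  by_cases h : a ∈ MinSet n i w
  · simp [Set.indicator_of_mem h, h]
  · simp [Set.indicator_of_notMem h, h]

private lemma mm_minInd_of_mem {n i : ℕ} {w : ℕ × ℕ → ℕ} {a : ℕ × ℕ}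
    (h : a ∈ MinSet n i w) : minInd n i w a = 1 := by
  unfold minInd
  rw [Set.indicator_of_mem h]
  rfl

private lemma mm_key_lt (n : ℕ) (b c : ℕ × ℕ) (hb : b.1 ≤ n + 1) (h : llt b c) :
    b.2 * (n+2) + b.1 < c.2 * (n+2) + c.1 := by
  rcases h with h | ⟨h1, h2⟩
  · have h3 : (b.2 + 1) * (n+2) ≤ c.2 * (n+2) := mul_le_mul_left h (n+2)
    have h4 : (b.2 + 1) * (n+2) = b.2 * (n+2) + (n+2) := by ring
    linarith
  · rw [h1]; linarith

private lemma mm_exists_min (n i : ℕ) (w : ℕ × ℕ → ℕ) :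
    ∀ N : ℕ, ∀ a : ℕ × ℕ, a.1 + a.2 ≤ N → a ∈ RiSupp n i w →
      ∃ b ∈ MinSet n i w, b.1 ≤ a.1 ∧ b.2 ≤ a.2 := by
  intro N
  induction N with
  | zero =>
      intro a hN ha
      exfalso
      have h1 := (mm_mem_RiSupp.mp ha).1.1
      omega
  | succ N ih =>
      intro a hN ha
      by_cases hmin : ∀ b ∈ RiSupp n i w, b.1 ≤ a.1 → b.2 ≤ a.2 → b = a
      · exact ⟨a, mm_mem_MinSet.mpr ⟨ha, hmin⟩, le_rfl, le_rfl⟩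
      · push_neg at hmin
        obtain ⟨b, hb, h1, h2, hne⟩ := hmin
        have hlt : b.1 < a.1 ∨ b.2 < a.2 := by
          by_contra hc
          push_neg at hc
          exact hne (Prod.ext (le_antisymm h1 hc.1) (le_antisymm h2 hc.2))
        obtain ⟨c, hc, hc1, hc2⟩ := ih b (by omega) hb
        exact ⟨c, hc, hc1.trans h1, hc2.trans h2⟩

/-- Mutation monotonicity: if `s ∈ S(λ)`, `t¹` is a
mutation of the indicator tuple `m_i^s` (i.e. `t¹ ≠ m_i^s`, `t¹` is
supported on `R_i` and `Σ t¹_{j,k} α_{j,k} = Σ (m_i^s)_{j,k} α_{j,k}`), and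
`t = t² + t¹ ∈ S(λ)` with `t²` nonnegative, then `m_i^s ≪ m_i^t` in the
induced lexicographic order. -/
theorem mutation_monotonicity (n i : ℕ) (m : ℕ → ℕ) (s t t1 : ℕ × ℕ → ℕ)
    (hs : InS n m s)
    (hne : t1 ≠ minInd n i s)
    (hsupp : ∀ p q : ℕ, ¬(IsRoot n p q ∧ p ≤ i ∧ i ≤ q) → t1 (p, q) = 0)
    (hwt : ∀ r : ℕ,
      ∑ a ∈ Finset.Icc 1 n ×ˢ Finset.Icc 1 n, t1 a * rootCoeff a r =
      ∑ a ∈ Finset.Icc 1 n ×ˢ Finset.Icc 1 n, minInd n i s a * rootCoeff a r)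
    (ht : InS n m t)
    (hle : ∀ a : ℕ × ℕ, t1 a ≤ t a) :
    lexLt (minInd n i s) (minInd n i t) := by
  classical
  set G : Finset (ℕ × ℕ) := Finset.Icc 1 n ×ˢ Finset.Icc 1 n with hGdef
  set u : ℕ × ℕ → ℕ := minInd n i s with hudef
  set v : ℕ × ℕ → ℕ := minInd n i t with hvdef
  -- support facts
  have ht1supp : ∀ a : ℕ × ℕ, t1 a ≠ 0 → IsRoot n a.1 a.2 ∧ a.1 ≤ i ∧ i ≤ a.2 := by
    intro a h
    by_contra hc
    have h0 := hsupp a.1 a.2 hc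
    rw [Prod.mk.eta] at h0
    exact h h0
  have husupp : ∀ a : ℕ × ℕ, u a ≠ 0 → a ∈ MinSet n i s := fun a h => mm_minInd_ne_zero.mp h
  have hGroot : ∀ a : ℕ × ℕ, IsRoot n a.1 a.2 → a ∈ G := by
    intro a ha
    rw [hGdef]
    rw [Finset.mem_product, Finset.mem_Icc, Finset.mem_Icc]
    obtain ⟨h1, h2, h3⟩ := ha
    omega
  have ht1G : ∀ a : ℕ × ℕ, t1 a ≠ 0 → a ∈ G := fun a h => hGroot a (ht1supp a h).1
  have huG : ∀ a : ℕ × ℕ, u a ≠ 0 → a ∈ G := fun a h =>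
    hGroot a (mm_mem_RiSupp.mp (mm_mem_MinSet.mp (husupp a h)).1).1
  have huRi : ∀ a : ℕ × ℕ, u a ≠ 0 → a.1 ≤ i ∧ i ≤ a.2 := by
    intro a h
    have := (mm_mem_RiSupp.mp (mm_mem_MinSet.mp (husupp a h)).1)
    exact ⟨this.2.1, this.2.2.1⟩
  -- existence of a level where t1 and u differ
  have hPex : ∃ k, ∃ j, t1 (j, k) ≠ u (j, k) := by
    by_contra hc
    push_neg at hc
    apply hne
    funext a
    have := hc a.2 a.1
    rwa [Prod.mk.eta] at this
  set kst := Nat.find hPex with hkstdef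
  obtain ⟨j0, hj0⟩ : ∃ j, t1 (j, kst) ≠ u (j, kst) := Nat.find_spec hPex
  have hkmin : ∀ a : ℕ × ℕ, a.2 < kst → t1 a = u a := by
    intro a hlt
    by_contra hc
    have hx : ∃ j, t1 (j, a.2) ≠ u (j, a.2) := ⟨a.1, by rwa [Prod.mk.eta]⟩
    exact Nat.find_min hPex hlt hx
  -- bounds from the difference point
  have hbnd : 1 ≤ j0 ∧ j0 ≤ i ∧ i ≤ kst ∧ kst ≤ n := by
    by_cases h : t1 (j0, kst) = 0
    · have hu : u (j0, kst) ≠ 0 := fun h' => hj0 (by rw [h, h'])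
      have hm := mm_mem_RiSupp.mp (mm_mem_MinSet.mp (husupp _ hu)).1
      obtain ⟨⟨b1, b2, b3⟩, c1, c2, -⟩ := hm
      exact ⟨b1, c1, c2, b3⟩
    · obtain ⟨⟨b1, b2, b3⟩, c1, c2⟩ := ht1supp _ h
      exact ⟨b1, c1, c2, b3⟩
  -- weight sums, right profile
  have hwtR : ∀ r : ℕ, i ≤ r →
      ∑ a ∈ G, t1 a * (if r ≤ a.2 then 1 else 0) =
      ∑ a ∈ G, u a * (if r ≤ a.2 then 1 else 0) := by
    intro r hr
    have key : ∀ (w : ℕ × ℕ → ℕ), (∀ a : ℕ × ℕ, w a ≠ 0 → a.1 ≤ i) →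
        ∑ a ∈ G, w a * rootCoeff a r = ∑ a ∈ G, w a * (if r ≤ a.2 then 1 else 0) := by
      intro w hw
      apply Finset.sum_congr rfl
      intro a _
      by_cases h : w a = 0
      · simp [h]
      · have h1 : a.1 ≤ i := hw a h
        have hiff : (a.1 ≤ r ∧ r ≤ a.2) ↔ (r ≤ a.2) :=
          ⟨fun hh => hh.2, fun hh => ⟨le_trans h1 hr, hh⟩⟩
        unfold rootCoeff
        simp only [hiff]
    have e1 := key t1 (fun a h => (ht1supp a h).2.1)
    have e2 := key u (fun a h => (huRi a h).1)
    rw [← e1, ← e2]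
    exact hwt r
  -- weight sums, left profile
  have hwtL : ∀ r : ℕ, r ≤ i →
      ∑ a ∈ G, t1 a * (if a.1 ≤ r then 1 else 0) =
      ∑ a ∈ G, u a * (if a.1 ≤ r then 1 else 0) := by
    intro r hr
    have key : ∀ (w : ℕ × ℕ → ℕ), (∀ a : ℕ × ℕ, w a ≠ 0 → i ≤ a.2) →
        ∑ a ∈ G, w a * rootCoeff a r = ∑ a ∈ G, w a * (if a.1 ≤ r then 1 else 0) := by
      intro w hw
      apply Finset.sum_congr rfl
      intro a _
      by_cases h : w a = 0
      · simp [h]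
      · have h1 : i ≤ a.2 := hw a h
        have hiff : (a.1 ≤ r ∧ r ≤ a.2) ↔ (a.1 ≤ r) :=
          ⟨fun hh => hh.1, fun hh => ⟨hh, le_trans hr h1⟩⟩
        unfold rootCoeff
        simp only [hiff]
    have e1 := key t1 (fun a h => (ht1supp a h).2.2)
    have e2 := key u (fun a h => (huRi a h).2)
    rw [← e1, ← e2]
    exact hwt r
  -- split by level
  have hsplit : ∀ (w : ℕ × ℕ → ℕ) (k : ℕ),
      ∑ a ∈ G, w a * (if k ≤ a.2 then 1 else 0) =
        (∑ a ∈ G.filter (fun a => a.2 = k), w a) +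
          ∑ a ∈ G, w a * (if k + 1 ≤ a.2 then 1 else 0) := by
    intro w k
    rw [Finset.sum_filter, ← Finset.sum_add_distrib]
    apply Finset.sum_congr rfl
    intro a _
    by_cases h1 : a.2 = k
    · have h2 : k ≤ a.2 := by omega
      have h3 : ¬ (k + 1 ≤ a.2) := by omega
      simp [h1, h2, h3]
    · by_cases h2 : k ≤ a.2
      · have h3 : k + 1 ≤ a.2 := by omega
        simp [h1, h2, h3]
      · have h3 : ¬ (k + 1 ≤ a.2) := by omega
        simp [h1, h2, h3]
  have hlevel : ∑ a ∈ G.filter (fun a => a.2 = kst), t1 a =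
      ∑ a ∈ G.filter (fun a => a.2 = kst), u a := by
    have e1 := hwtR kst (by omega)
    have e2 := hwtR (kst + 1) (by omega)
    have e3 := hsplit t1 kst
    have e4 := hsplit u kst
    rw [e3, e4, e2] at e1
    exact Nat.add_right_cancel e1
  -- the minimal-set element at level kst
  have haMex : ∃ aM, aM ∈ MinSet n i s ∧ aM.2 = kst := by
    by_contra hc
    push_neg at hc
    have huz : ∀ a : ℕ × ℕ, a.2 = kst → u a = 0 := by
      intro a hak
      by_contra hz
      exact hc a (husupp a hz) hak
    have hz2 : ∑ a ∈ G.filter (fun a => a.2 = kst), t1 a = 0 := by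
      rw [hlevel]
      apply Finset.sum_eq_zero
      intro a ha
      exact huz a (Finset.mem_filter.mp ha).2
    have ht1z : t1 (j0, kst) = 0 := by
      by_cases hG : (j0, kst) ∈ G
      · exact Finset.sum_eq_zero_iff.mp hz2 _ (Finset.mem_filter.mpr ⟨hG, rfl⟩)
      · by_contra hzz
        exact hG (ht1G _ hzz)
    exact hj0 (by rw [ht1z, huz (j0, kst) rfl])
  obtain ⟨aM, haM, haM2⟩ := haMex
  have haMR : aM ∈ RiSupp n i s := (mm_mem_MinSet.mp haM).1
  have haMmin := (mm_mem_MinSet.mp haM).2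
  have haMroot := mm_mem_RiSupp.mp haMR
  have hlevelUniq : ∀ b ∈ MinSet n i s, b.2 = kst → b = aM := by
    intro b hb hbk
    rcases le_total b.1 aM.1 with h | h
    · exact haMmin b (mm_mem_MinSet.mp hb).1 h (by omega)
    · exact ((mm_mem_MinSet.mp hb).2 aM haMR h (by omega)).symm
  have huaM : u aM = 1 := mm_minInd_of_mem haM
  have hLu : ∑ a ∈ G.filter (fun a => a.2 = kst), u a = 1 := by
    rw [Finset.sum_eq_single_of_mem aM
      (Finset.mem_filter.mpr ⟨hGroot aM haMroot.1, haM2⟩)]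
    · exact huaM
    · intro b hb hne'
      by_contra hz
      exact hne' (hlevelUniq b (husupp b hz) (Finset.mem_filter.mp hb).2)
  have hLt1 : ∑ a ∈ G.filter (fun a => a.2 = kst), t1 a = 1 := by rw [hlevel, hLu]
  -- extract the unique support point a0 of t1 at level kst
  obtain ⟨a0, ha0mem, ha0ne⟩ := Finset.exists_ne_zero_of_sum_ne_zero
    (by rw [hLt1]; exact one_ne_zero :
      ∑ a ∈ G.filter (fun a => a.2 = kst), t1 a ≠ 0)
  have ha0G : a0 ∈ G := (Finset.mem_filter.mp ha0mem).1
  have ha0k : a0.2 = kst := (Finset.mem_filter.mp ha0mem).2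
  have hsum_erase := Finset.add_sum_erase _ t1 ha0mem
  have ht1a0 : t1 a0 = 1 := by
    have h1 : 1 ≤ t1 a0 := Nat.one_le_iff_ne_zero.mpr ha0ne
    rw [hLt1] at hsum_erase
    omega
  have hrest0 : ∑ a ∈ (G.filter (fun a => a.2 = kst)).erase a0, t1 a = 0 := by
    rw [hLt1] at hsum_erase
    omega
  have ht1lvl : ∀ b : ℕ × ℕ, b.2 = kst → b ≠ a0 → t1 b = 0 := by
    intro b hbk hbne
    by_cases hG : b ∈ G
    · exact Finset.sum_eq_zero_iff.mp hrest0 b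
        (Finset.mem_erase.mpr ⟨hbne, Finset.mem_filter.mpr ⟨hG, hbk⟩⟩)
    · by_contra hzz
      exact hG (ht1G b hzz)
  -- a0 ≠ aM
  have ha0aM : a0 ≠ aM := by
    intro he
    apply hj0
    by_cases hc : (j0, kst) = a0
    · rw [hc, he, huaM, ← he, ht1a0]
    · rw [ht1lvl (j0, kst) rfl hc]
      by_contra hzz
      have hu0 : u (j0, kst) ≠ 0 := fun h => hzz h.symm
      have := hlevelUniq _ (husupp _ hu0) rfl
      rw [← he] at this
      exact hc this
  have hjne : a0.1 ≠ aM.1 := by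
    intro he
    exact ha0aM (Prod.ext he (by rw [ha0k, haM2]))
  -- Claim B : a0.1 < aM.1
  have hjlt : a0.1 < aM.1 := by
    rcases lt_or_gt_of_ne hjne with h | h
    · exact h
    · exfalso
      -- total sums are equal
      have etot : ∑ a ∈ G, t1 a = ∑ a ∈ G, u a := by
        have key : ∀ (w : ℕ × ℕ → ℕ), (∀ a : ℕ × ℕ, w a ≠ 0 → a.1 ≤ i ∧ i ≤ a.2) →
            ∑ a ∈ G, w a * rootCoeff a i = ∑ a ∈ G, w a := by
          intro w hw
          apply Finset.sum_congr rfl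
          intro a _
          by_cases hz : w a = 0
          · simp [hz]
          · have h1 := hw a hz
            have : rootCoeff a i = 1 := by
              unfold rootCoeff
              simp [h1.1, h1.2]
            rw [this, mul_one]
        have e1 := key t1 (fun a hz => (ht1supp a hz).2)
        have e2 := key u (fun a hz => huRi a hz)
        rw [← e1, ← e2]
        exact hwt i
      -- left profiles at aM.1 are equal
      have eleft := hwtL aM.1 haMroot.2.1
      have convL : ∀ w : ℕ × ℕ → ℕ,
          ∑ a ∈ G, w a * (if a.1 ≤ aM.1 then 1 else 0) =
          ∑ a ∈ G.filter (fun a => a.1 ≤ aM.1), w a := by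
        intro w
        rw [Finset.sum_filter]
        apply Finset.sum_congr rfl
        intro a _
        by_cases hp : a.1 ≤ aM.1 <;> simp [hp]
      rw [convL t1, convL u] at eleft
      have hsplitt1 := Finset.sum_filter_add_sum_filter_not G (fun a => a.1 ≤ aM.1) t1
      have hsplitu := Finset.sum_filter_add_sum_filter_not G (fun a => a.1 ≤ aM.1) u
      have eright : ∑ a ∈ G.filter (fun a => ¬ a.1 ≤ aM.1), t1 a =
          ∑ a ∈ G.filter (fun a => ¬ a.1 ≤ aM.1), u a := by
        rw [hsplitt1.symm, hsplitu.symm] at etot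
        omega
      -- u-count beyond aM.1 equals u-count below level kst
      have hBu : ∑ a ∈ G.filter (fun a => ¬ a.1 ≤ aM.1), u a =
          ∑ a ∈ G.filter (fun a => a.2 < kst), u a := by
        rw [Finset.sum_filter, Finset.sum_filter]
        apply Finset.sum_congr rfl
        intro a _
        by_cases hz : u a = 0
        · simp [hz]
        · have hm := husupp a hz
          have hR := (mm_mem_MinSet.mp hm).1
          have hiff : (¬ a.1 ≤ aM.1) ↔ a.2 < kst := by
            constructor
            · intro hgt
              by_contra hge
              push_neg at hge
              have he := (mm_mem_MinSet.mp hm).2 aM haMR (by omega) (by omega)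
              rw [← he] at hgt
              exact hgt le_rfl
            · intro hlt2 hle2
              have he := haMmin a hR hle2 (by omega)
              rw [he] at hlt2
              omega
          simp only [hiff]
      have hBt : ∑ a ∈ G.filter (fun a => a.2 < kst), u a =
          ∑ a ∈ G.filter (fun a => a.2 < kst), t1 a := by
        apply Finset.sum_congr rfl
        intro a ha
        exact (hkmin a (Finset.mem_filter.mp ha).2).symm
      -- the lower bound
      set S : Finset (ℕ × ℕ) :=
        insert a0 (G.filter (fun a => a.2 < kst ∧ t1 a ≠ 0)) with hSdef
      have ha0nf : a0 ∉ G.filter (fun a => a.2 < kst ∧ t1 a ≠ 0) := by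
        intro hmem
        have := (Finset.mem_filter.mp hmem).2.1
        omega
      have hSsub : S ⊆ G.filter (fun a => ¬ a.1 ≤ aM.1) := by
        intro b hb
        rcases Finset.mem_insert.mp hb with he | hb2
        · subst he
          exact Finset.mem_filter.mpr ⟨ha0G, by omega⟩
        · obtain ⟨hbG, hbk, hbz⟩ :=
            (by simpa using hb2 : b ∈ G ∧ b.2 < kst ∧ t1 b ≠ 0)
          have heq : t1 b = u b := hkmin b hbk
          have hm := husupp b (heq ▸ hbz)
          refine Finset.mem_filter.mpr ⟨hbG, ?_⟩
          intro hle2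
          have he := haMmin b (mm_mem_MinSet.mp hm).1 hle2 (by omega)
          rw [he] at hbk
          omega
      have hsum1 : ∑ a ∈ S, t1 a =
          t1 a0 + ∑ a ∈ G.filter (fun a => a.2 < kst ∧ t1 a ≠ 0), t1 a :=
        Finset.sum_insert ha0nf
      have hsum2 : ∑ a ∈ G.filter (fun a => a.2 < kst ∧ t1 a ≠ 0), t1 a =
          ∑ a ∈ G.filter (fun a => a.2 < kst), t1 a := by
        have h := Finset.sum_filter_ne_zero (G.filter (fun a => a.2 < kst)) (f := t1)
        rw [Finset.filter_filter] at h
        exact h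
      have hfinal : ∑ a ∈ S, t1 a ≤ ∑ a ∈ G.filter (fun a => ¬ a.1 ≤ aM.1), t1 a :=
        Finset.sum_le_sum_of_subset hSsub
      rw [hsum1, hsum2, ht1a0] at hfinal
      omega
  -- Lemma X : nothing in MinSet s lies (componentwise) below a0
  have hX : ∀ b ∈ MinSet n i s, ¬ (b.1 ≤ a0.1 ∧ b.2 ≤ kst) := by
    rintro b hb ⟨hb1, hb2⟩
    have hbR := (mm_mem_MinSet.mp hb).1
    have he := haMmin b hbR (by omega) (by omega)
    rw [he] at hb1
    omega
  -- a0 is in the support region of t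
  have ha0Rt : a0 ∈ RiSupp n i t := by
    have hr := ht1supp a0 ha0ne
    refine mm_mem_RiSupp.mpr ⟨hr.1, hr.2.1, hr.2.2, ?_⟩
    have := hle a0
    omega
  obtain ⟨c, hcM, hc1, hc2⟩ := mm_exists_min n i t (a0.1 + a0.2) a0 le_rfl ha0Rt
  have hc2' : c.2 ≤ kst := by omega
  -- the set of positions where u and v differ
  set D : Finset (ℕ × ℕ) := G.filter (fun a => u a ≠ v a) with hDdef
  have hvG : ∀ a : ℕ × ℕ, v a ≠ 0 → a ∈ G := fun a h =>
    hGroot a (mm_mem_RiSupp.mp (mm_mem_MinSet.mp (mm_minInd_ne_zero.mp h)).1).1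
  have hallG : ∀ a : ℕ × ℕ, a ∉ G → u a = v a := by
    intro a hG
    have h1 : u a = 0 := by
      by_contra h
      exact hG (huG a h)
    have h2 : v a = 0 := by
      by_contra h
      exact hG (hvG a h)
    rw [h1, h2]
  have hDne : D.Nonempty := by
    by_contra hemp
    rw [Finset.not_nonempty_iff_eq_empty] at hemp
    have hall : ∀ a : ℕ × ℕ, u a = v a := by
      intro a
      by_cases hG : a ∈ G
      · by_contra hne2
        have hmem : a ∈ D := Finset.mem_filter.mpr ⟨hG, hne2⟩
        rw [hemp] at hmem
        exact Finset.notMem_empty a hmem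
      · exact hallG a hG
    have hvc : v c ≠ 0 := mm_minInd_ne_zero.mpr hcM
    have huc : u c ≠ 0 := by rw [hall c]; exact hvc
    exact hX c (husupp c huc) ⟨hc1, hc2'⟩
  obtain ⟨a1, ha1D, ha1min⟩ := D.exists_min_image (fun a => a.2 * (n + 2) + a.1) hDne
  have ha1G : a1 ∈ G := (Finset.mem_filter.mp ha1D).1
  have ha1ne : u a1 ≠ v a1 := (Finset.mem_filter.mp ha1D).2
  have hagree : ∀ b : ℕ × ℕ, llt b a1 → u b = v b := by
    intro b hllt
    by_contra hbne
    have hbG : b ∈ G := by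
      by_contra hG
      exact hbne (hallG b hG)
    have hkey := ha1min b (Finset.mem_filter.mpr ⟨hbG, hbne⟩)
    have hb1n : b.1 ≤ n + 1 := by
      rw [hGdef, Finset.mem_product, Finset.mem_Icc, Finset.mem_Icc] at hbG
      omega
    exact not_le.mpr (mm_key_lt n b a1 hb1n hllt) hkey
  refine ⟨a1, hagree, ?_⟩
  by_cases hu0 : u a1 = 0
  · have hv1 : v a1 ≠ 0 := fun h => ha1ne (by rw [hu0, h])
    omega
  · exfalso
    have ha1M := husupp a1 hu0
    have ha1R := (mm_mem_MinSet.mp ha1M).1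
    by_cases hta1 : t a1 = 0
    · have ht1a1 : t1 a1 = 0 := by
        have := hle a1
        omega
      by_cases hlt : a1.2 < kst
      · have heq := hkmin a1 hlt
        rw [ht1a1] at heq
        exact hu0 heq.symm
      · have hllt : llt c a1 := by
          by_cases hcc : c.2 < a1.2
          · exact Or.inl hcc
          · have hek : a1.2 = kst := by omega
            have ha1aM := hlevelUniq a1 ha1M hek
            have h5 : a1.1 = aM.1 := by rw [ha1aM]
            right
            constructor
            · omega
            · omega
        have hcv : v c ≠ 0 := mm_minInd_ne_zero.mpr hcM
        have hcu : u c ≠ 0 := by rw [hagree c hllt]; exact hcv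
        exact hX c (husupp c hcu) ⟨hc1, hc2'⟩
    · have hva1 : a1 ∉ MinSet n i t := by
        intro hmem
        have h1 : v a1 = 1 := mm_minInd_of_mem hmem
        have h2 : u a1 = 1 := mm_minInd_of_mem ha1M
        exact ha1ne (by rw [h1, h2])
      have ha1Rt : a1 ∈ RiSupp n i t := by
        have hr := mm_mem_RiSupp.mp ha1R
        exact mm_mem_RiSupp.mpr ⟨hr.1, hr.2.1, hr.2.2.1, hta1⟩
      have hnm : ¬ ∀ b ∈ RiSupp n i t, b.1 ≤ a1.1 → b.2 ≤ a1.2 → b = a1 :=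
        fun h => hva1 (mm_mem_MinSet.mpr ⟨ha1Rt, h⟩)
      push_neg at hnm
      obtain ⟨b, hbR, hb1, hb2, hbne⟩ := hnm
      obtain ⟨c', hc'M, hc'1, hc'2⟩ := mm_exists_min n i t (b.1 + b.2) b le_rfl hbR
      have hc'ne : c' ≠ a1 := by
        intro he
        apply hbne
        rw [he] at hc'1 hc'2
        exact Prod.ext (by omega) (by omega)
      have hllt : llt c' a1 := by
        by_cases hcc : c'.2 < a1.2
        · exact Or.inl hcc
        · right
          have he2 : c'.2 = a1.2 := by omega
          refine ⟨he2, ?_⟩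
          have : c'.1 ≤ a1.1 := le_trans hc'1 hb1
          rcases lt_or_eq_of_le this with h | h
          · exact h
          · exact absurd (Prod.ext h he2) hc'ne
      have hc'u : u c' ≠ 0 := by
        rw [hagree c' hllt]
        exact mm_minInd_ne_zero.mpr hc'M
      have hc'Ms := husupp c' hc'u
      exact hc'ne ((mm_mem_MinSet.mp ha1M).2 c' (mm_mem_MinSet.mp hc'Ms).1
        (le_trans hc'1 hb1) (le_trans hc'2 hb2))
end
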